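/- arXiv:1408.2135 — 8 statements merged into one kernel-verified Lean document; each statement's English description precedes it below -/
import Mathlib

section
/- For any convex body K in ℝ^n (compact convex set with nonempty interior), the volume of the difference body K - K = {x - y : x, y ∈ K} is at most binomial(2n, n) times the volume of K. -/
open MeasureTheory intervalIntegral Filter
open scoped Topology

lemma prod_range_eq_ascFactorial (a k : ℕ) :
    ∏ j ∈ Finset.range k, (a + 1 + j) = (a + 1).ascFactorial k := by
  induction k with
  | zero => simp
  | succ k ih => rw [Finset.prod_range_succ, ih, Nat.ascFactorial_succ, mul_comm]

lemma beta_nat (a b : ℕ) :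
    ∫ x in (0:ℝ)..1, x ^ a * (1 - x) ^ b
      = (a.factorial * b.factorial : ℝ) / ((a + b + 1).factorial) := by
  have hu : 0 < (Complex.re ((a : ℂ) + 1)) := by
    simp [Complex.add_re]
    positivity
  have h := Complex.betaIntegral_eval_nat_add_one_right hu b
  rw [Complex.betaIntegral] at h
  have hint : (∫ x in (0:ℝ)..1, ((x:ℂ)) ^ ((a:ℂ) + 1 - 1) * (1 - (x:ℂ)) ^ ((b:ℂ) + 1 - 1))
      = ((∫ x in (0:ℝ)..1, x ^ a * (1 - x) ^ b : ℝ) : ℂ) := by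
    rw [← intervalIntegral.integral_ofReal]
    apply intervalIntegral.integral_congr
    intro x _
    push_cast
    rw [add_sub_cancel_right, add_sub_cancel_right, Complex.cpow_natCast, Complex.cpow_natCast]
  rw [hint] at h
  have hprod : (∏ j ∈ Finset.range (b + 1), ((a : ℂ) + 1 + (j : ℕ)))
      = ((((a + 1).ascFactorial (b + 1) : ℕ) : ℝ) : ℂ) := by
    rw [← prod_range_eq_ascFactorial]
    push_cast
    rfl
  rw [hprod] at h
  have h2 : (∫ x in (0:ℝ)..1, x ^ a * (1 - x) ^ b : ℝ)
      = (b.factorial : ℝ) / (((a + 1).ascFactorial (b + 1) : ℕ) : ℝ) := by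
    have := h
    exact_mod_cast this
  rw [h2]
  have hfact : (a.factorial * ((a + 1).ascFactorial (b + 1)) : ℕ) = (a + b + 1).factorial := by
    have := Nat.factorial_mul_ascFactorial a (b + 1)
    rw [show a + b + 1 = a + (b + 1) by omega]
    exact this
  have hA : ((a + 1).ascFactorial (b + 1) : ℝ) ≠ 0 := by
    have : 0 < (a + 1).ascFactorial (b + 1) := Nat.ascFactorial_pos a (b + 1)
    positivity
  have hAf : (a.factorial : ℝ) ≠ 0 := by positivity
  rw [← hfact]
  push_cast
  field_simp

open scoped ENNReal Pointwise

theorem rogers_shephard_difference_body (n : ℕ) (K : Set (EuclideanSpace ℝ (Fin n)))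
    (hK : Convex ℝ K) (hKc : IsCompact K) (hKi : (interior K).Nonempty) :
    volume (K - K) ≤ (Nat.choose (2 * n) n : ℝ≥0∞) * volume K := by
  rcases Nat.eq_zero_or_pos n with hn | hn
  · subst hn
    haveI : Subsingleton (EuclideanSpace ℝ (Fin 0)) :=
      ⟨fun a b => by ext i; exact i.elim0⟩
    have hne : K.Nonempty := hKi.mono interior_subset
    obtain ⟨k, hk⟩ := hne
    have hsub : K - K ⊆ K := by
      intro x _
      have : x = k := Subsingleton.elim x k
      rwa [this]
    calc volume (K - K) ≤ volume K := measure_mono hsub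
      _ = (Nat.choose (2 * 0) 0 : ℝ≥0∞) * volume K := by simp
  · have hKm : MeasurableSet K := hKc.measurableSet
    have hvolK_pos : 0 < volume K :=
      lt_of_lt_of_le (IsOpen.measure_pos volume isOpen_interior hKi)
        (measure_mono interior_subset)
    have hvolK_ne_top : volume K ≠ ⊤ := hKc.measure_lt_top.ne
    set D : Set (EuclideanSpace ℝ (Fin n)) := K - K with hD
    have hDconv : Convex ℝ D := hK.sub hK
    have hDclosed : IsClosed D := by
      rw [hD, sub_eq_add_neg]; exact (hKc.add hKc.neg).isClosed
    have hD0 : (0 : EuclideanSpace ℝ (Fin n)) ∈ interior D := by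
      obtain ⟨u, hu⟩ := hKi
      have hopen : IsOpen (interior K - K) := IsOpen.sub_right isOpen_interior
      have hsub : interior K - K ⊆ D := Set.sub_subset_sub interior_subset (subset_refl K)
      have h0mem : (0 : EuclideanSpace ℝ (Fin n)) ∈ interior K - K :=
        Set.mem_sub.mpr ⟨u, hu, u, interior_subset hu, sub_self u⟩
      exact interior_maximal hsub hopen h0mem
    have hDnhds : D ∈ nhds (0 : EuclideanSpace ℝ (Fin n)) := mem_interior_iff_mem_nhds.1 hD0
    -- the function f
    set f : EuclideanSpace ℝ (Fin n) → ℝ := fun x => max 0 (1 - gauge D x) with hf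
    have hf_cont : Continuous f := continuous_const.max
      (continuous_const.sub (continuous_gauge hDconv hDnhds))
    have hf_nn : ∀ x, 0 ≤ f x := fun x => le_max_left _ _
    have hf_le_one : ∀ x, f x ≤ 1 :=
      fun x => max_le zero_le_one (by have := gauge_nonneg (s := D) x; linarith)
    -- the section sets
    set S : EuclideanSpace ℝ (Fin n) → Set (EuclideanSpace ℝ (Fin n)) := fun x => {y | y ∈ K ∧ y - x ∈ K} with hS
    have hSm : ∀ x, MeasurableSet (S x) := by
      intro x
      exact hKm.inter ((measurable_id.sub_const x) hKm)
    -- core inclusion bound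
    have core : ∀ s : ℝ, 0 < s → s ≤ 1 → ∀ x ∈ s • D,
        ENNReal.ofReal ((1 - s) ^ n) * volume K ≤ volume (S x) := by
      intro s hs0 hs1 x hx
      obtain ⟨d, hd, rfl⟩ := hx
      rw [hD] at hd
      obtain ⟨a, ha, b, hb, hab⟩ := Set.mem_sub.mp hd
      have hAvol : volume ((s • a) +ᵥ ((1 - s) • K)) = ENNReal.ofReal ((1 - s) ^ n) * volume K := by
        rw [measure_vadd, Measure.addHaar_smul_of_nonneg volume (by linarith) K,
          finrank_euclideanSpace_fin]
      have hAsub : ((s • a) +ᵥ ((1 - s) • K)) ⊆ S (s • d) := by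
        rintro y ⟨z, ⟨k, hk, rfl⟩, rfl⟩
        rw [hS]
        constructor
        · exact hK ha hk (by linarith) (by linarith) (by ring)
        · have heq : (s • a +ᵥ (1 - s) • k) - s • d = s • b + (1 - s) • k := by
            rw [← hab]
            simp only [vadd_eq_add, smul_sub]
            abel
          rw [heq]
          exact hK hb hk (by linarith) (by linarith) (by ring)
      rw [← hAvol]
      exact measure_mono hAsub
    -- pointwise bound
    have pointwise : ∀ x, ENNReal.ofReal (f x ^ n) * volume K ≤ volume (S x) := by
      intro x
      by_cases hx1 : gauge D x < 1
      · have hfx : f x = 1 - gauge D x := by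
          rw [hf]; exact max_eq_right (by linarith)
        have htd : Tendsto (fun s : ℝ => ENNReal.ofReal ((1 - s) ^ n) * volume K)
            (𝓝[>] (gauge D x)) (𝓝 (ENNReal.ofReal ((1 - gauge D x) ^ n) * volume K)) := by
          refine (ENNReal.Tendsto.mul_const ?_ (Or.inr hvolK_ne_top)).mono_left nhdsWithin_le_nhds
          exact ENNReal.tendsto_ofReal (((continuous_const.sub continuous_id).pow n).tendsto _)
        rw [hfx]
        refine le_of_tendsto htd ?_
        filter_upwards [Ioo_mem_nhdsGT_of_mem ⟨le_refl _, hx1⟩] with s hs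
        have hs0 : 0 < s := lt_of_le_of_lt (gauge_nonneg x) hs.1
        apply core s hs0 hs.2.le
        have h2 : s⁻¹ * gauge D x ≤ 1 := by
          rw [← div_eq_inv_mul]
          exact div_le_one_of_le₀ hs.1.le hs0.le
        have h1 : gauge D (s⁻¹ • x) ≤ 1 := by
          rw [gauge_smul_of_nonneg (inv_nonneg.mpr hs0.le), smul_eq_mul]
          exact h2
        have h3 : s⁻¹ • x ∈ closure D := (gauge_le_one_iff_mem_closure hDconv hDnhds).mp h1
        rw [hDclosed.closure_eq] at h3
        exact (Set.mem_smul_set_iff_inv_smul_mem₀ (ne_of_gt hs0) D x).mpr h3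
      · have hfx : f x = 0 := by
          rw [hf]; exact max_eq_left (by push_neg at hx1; linarith)
        rw [hfx, zero_pow hn.ne', ENNReal.ofReal_zero, zero_mul]
        exact zero_le
    -- Fubini
    have fubini : ∫⁻ x, volume (S x) = volume K * volume K := by
      set F : EuclideanSpace ℝ (Fin n) → ℝ≥0∞ := K.indicator 1 with hF
      have hFm : Measurable F := measurable_one.indicator hKm
      have key : ∀ x, volume (S x) = ∫⁻ y, F y * F (y - x) := by
        intro x
        have hmS : MeasurableSet (S x) := by
          rw [hS]; exact hKm.inter ((measurable_id.sub_const x) hKm)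
        rw [← lintegral_indicator_one hmS]
        congr 1
        funext y
        by_cases h1 : y ∈ K <;> by_cases h2 : y - x ∈ K <;>
          simp [hS, hF, Set.indicator_apply, h1, h2]
      have hm2 : Measurable (fun p : EuclideanSpace ℝ (Fin n) × EuclideanSpace ℝ (Fin n) =>
          F p.2 * F (p.2 - p.1)) :=
        (hFm.comp measurable_snd).mul (hFm.comp (measurable_snd.sub measurable_fst))
      calc ∫⁻ x, volume (S x) = ∫⁻ x, ∫⁻ y, F y * F (y - x) := by
            simp only [key]
        _ = ∫⁻ y, ∫⁻ x, F y * F (y - x) := lintegral_lintegral_swap hm2.aemeasurable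
        _ = ∫⁻ y, F y * ∫⁻ x, F (y - x) := by
            congr 1; funext y
            exact lintegral_const_mul _ (hFm.comp (measurable_const.sub measurable_id))
        _ = ∫⁻ y, F y * volume K := by
            congr 1; funext y
            congr 1
            rw [(Measure.measurePreserving_sub_left volume y).lintegral_comp hFm]
            exact lintegral_indicator_one hKm
        _ = volume K * volume K := by
            rw [lintegral_mul_const _ hFm, lintegral_indicator_one hKm]
    -- layer cake
    have layercake : ∫⁻ x, ENNReal.ofReal (f x ^ n) =
        volume D * ENNReal.ofReal ((n.factorial * n.factorial : ℝ) / (2 * n).factorial) := by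
      -- volume of interior equals volume
      have hIntVol : volume (interior D) = volume D := by
        refine le_antisymm (measure_mono interior_subset) ?_
        calc volume D ≤ volume (interior D ∪ frontier D) := by
              apply measure_mono
              intro x hx
              rw [hDclosed.frontier_eq]
              by_cases h : x ∈ interior D
              · exact Or.inl h
              · exact Or.inr ⟨hx, h⟩
          _ ≤ volume (interior D) + volume (frontier D) := measure_union_le _ _
          _ = volume (interior D) := by rw [Convex.addHaar_frontier volume hDconv, add_zero]
      -- level sets
      have level : ∀ t ∈ Set.Ioo (0:ℝ) 1,
          volume {ω | t < f ω} = ENNReal.ofReal ((1 - t) ^ n) * volume D := by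
        intro t ht
        have hset : {ω | t < f ω} = (1 - t) • interior D := by
          ext x
          have hs0 : (0:ℝ) < 1 - t := by linarith [ht.2]
          rw [Set.mem_smul_set_iff_inv_smul_mem₀ hs0.ne']
          rw [← gauge_lt_one_iff_mem_interior hDconv hDnhds]
          rw [gauge_smul_of_nonneg (inv_nonneg.mpr hs0.le), smul_eq_mul]
          simp only [hf, Set.mem_setOf_eq, lt_max_iff]
          constructor
          · rintro (h | h)
            · linarith [ht.1]
            · rw [← div_eq_inv_mul, div_lt_one hs0]; linarith
          · intro h
            rw [← div_eq_inv_mul, div_lt_one hs0] at h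
            right; linarith
        rw [hset, Measure.addHaar_smul_of_nonneg volume (by linarith [ht.2]) (interior D),
          finrank_euclideanSpace_fin, hIntVol]
      have levelhi : ∀ t : ℝ, 1 ≤ t → {ω | t < f ω} = ∅ := by
        intro t ht
        ext ω
        simp only [Set.mem_setOf_eq, Set.mem_empty_iff_false, iff_false, not_lt]
        exact (hf_le_one ω).trans ht
      -- layer cake
      have g_intble : ∀ t > (0:ℝ), IntervalIntegrable (fun t => (n:ℝ) * t ^ (n-1)) volume 0 t :=
        fun t _ => (continuous_const.mul (continuous_pow _)).intervalIntegrable 0 t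
      have g_nn : ∀ᵐ t ∂(volume.restrict (Set.Ioi (0:ℝ))), 0 ≤ (n:ℝ) * t ^ (n-1) := by
        rw [ae_restrict_iff' measurableSet_Ioi]
        refine Eventually.of_forall fun t ht => ?_
        have : (0:ℝ) < t := ht
        positivity
      have lc := lintegral_comp_eq_lintegral_meas_lt_mul volume
        (Eventually.of_forall hf_nn) hf_cont.measurable.aemeasurable g_intble g_nn
      have hint : ∀ a : ℝ, (∫ t in (0:ℝ)..a, (n:ℝ) * t ^ (n-1)) = a ^ n := by
        intro a
        rw [intervalIntegral.integral_const_mul, integral_pow]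
        have h1 : n - 1 + 1 = n := Nat.succ_pred_eq_of_pos hn
        have h2 : ((n - 1 : ℕ) : ℝ) + 1 = (n : ℝ) := by exact_mod_cast h1
        rw [h1, h2, zero_pow hn.ne', sub_zero, mul_comm, div_mul_cancel₀]
        positivity
      simp only [hint] at lc
      rw [lc]
      -- rewrite RHS integrand
      set h : ℝ → ℝ := fun t => (max 0 (1 - t)) ^ n * ((n:ℝ) * t ^ (n-1)) with hh
      have congr1 : ∫⁻ t in Set.Ioi 0, volume {a | t < f a} * ENNReal.ofReal ((n:ℝ) * t ^ (n-1))
          = ∫⁻ t in Set.Ioi 0, volume D * ENNReal.ofReal (h t) := by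
        apply setLIntegral_congr_fun measurableSet_Ioi
        intro t ht
        beta_reduce
        by_cases ht1 : t < 1
        · rw [level t ⟨ht, ht1⟩, hh]
          simp only
          rw [max_eq_right (by linarith : (0:ℝ) ≤ 1 - t),
            ENNReal.ofReal_mul (pow_nonneg (by linarith : (0:ℝ) ≤ 1 - t) n)]
          ring
        · rw [levelhi t (by linarith), measure_empty, zero_mul, hh]
          simp only
          rw [max_eq_left (by linarith : 1 - t ≤ (0:ℝ)), zero_pow hn.ne', zero_mul,
            ENNReal.ofReal_zero, mul_zero]
      rw [congr1]
      have hhcont : Continuous h := by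
        apply Continuous.mul
        · exact (continuous_const.max (continuous_const.sub continuous_id)).pow n
        · exact continuous_const.mul (continuous_pow _)
      have heq0 : Set.EqOn h 0 (Set.Ioi 1) := by
        intro t ht
        simp only [hh, Pi.zero_apply]
        rw [max_eq_left (by simp at ht; linarith : 1 - t ≤ (0:ℝ)), zero_pow hn.ne', zero_mul]
      have hIoi : Set.Ioi (0:ℝ) = Set.Ioc 0 1 ∪ Set.Ioi 1 := (Set.Ioc_union_Ioi_eq_Ioi zero_le_one).symm
      have hintOn1 : IntegrableOn h (Set.Ioc 0 1) volume := hhcont.integrableOn_Ioc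
      have hintOn2 : IntegrableOn h (Set.Ioi 1) volume :=
        (integrableOn_zero).congr_fun (fun t ht => (heq0 ht).symm) measurableSet_Ioi
      have hIntegrable : IntegrableOn h (Set.Ioi 0) volume := by
        rw [hIoi]; exact hintOn1.union hintOn2
      have h_nn_ae : 0 ≤ᵐ[volume.restrict (Set.Ioi (0:ℝ))] h := by
        filter_upwards [ae_restrict_mem measurableSet_Ioi] with t ht
        have htpos : (0:ℝ) < t := ht
        simp only [hh, Pi.zero_apply]
        positivity
      rw [lintegral_const_mul _ hhcont.measurable.ennreal_ofReal]
      rw [← ofReal_integral_eq_lintegral_ofReal hIntegrable h_nn_ae]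
      congr 1
      -- the real integral
      have hsplit : ∫ t in Set.Ioi (0:ℝ), h t
          = (∫ t in Set.Ioc (0:ℝ) 1, h t) + ∫ t in Set.Ioi (1:ℝ), h t := by
        rw [hIoi]
        exact setIntegral_union (Set.Ioc_disjoint_Ioi le_rfl) measurableSet_Ioi hintOn1 hintOn2
      rw [hsplit]
      have hzero : ∫ t in Set.Ioi (1:ℝ), h t = 0 := by
        rw [setIntegral_congr_fun measurableSet_Ioi heq0]
        simp
      rw [hzero, add_zero]
      rw [← intervalIntegral.integral_of_le zero_le_one]
      have : ∫ t in (0:ℝ)..1, h t = ∫ t in (0:ℝ)..1, (n:ℝ) * (t ^ (n-1) * (1 - t) ^ n) := by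
        apply intervalIntegral.integral_congr
        intro t ht
        rw [Set.uIcc_of_le zero_le_one] at ht
        simp only [hh]
        rw [max_eq_right (by linarith [ht.2] : (0:ℝ) ≤ 1 - t)]
        ring
      rw [this, intervalIntegral.integral_const_mul, beta_nat (n-1) n]
      have e1 : n - 1 + n + 1 = 2 * n := by omega
      have e2 : (n:ℝ) * (n-1).factorial = n.factorial := by
        exact_mod_cast Nat.mul_factorial_pred hn.ne'
      rw [e1]
      congr 1
      rw [← e2]
      ring
    -- conclusion
    set c : ℝ := (n.factorial * n.factorial : ℝ) / (2 * n).factorial with hc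
    set b : ℝ≥0∞ := (Nat.choose (2 * n) n : ℝ≥0∞) with hb
    have hcb : ENNReal.ofReal c * b = 1 := by
      have hch : (Nat.choose (2 * n) n) * n.factorial * n.factorial = (2 * n).factorial := by
        have h := Nat.choose_mul_factorial_mul_factorial (show n ≤ 2 * n by omega)
        rwa [show 2 * n - n = n by omega] at h
      have hfpos : (0:ℝ) < (2 * n).factorial := by positivity
      have hcreal : c * (Nat.choose (2 * n) n : ℝ) = 1 := by
        rw [hc, div_mul_eq_mul_div, div_eq_one_iff_eq hfpos.ne']
        exact_mod_cast (by rw [← hch]; ring : n.factorial * n.factorial * (Nat.choose (2 * n) n) = (2 * n).factorial)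
      have hcnn : (0:ℝ) ≤ c := by rw [hc]; positivity
      rw [hb, ← ENNReal.ofReal_natCast (Nat.choose (2 * n) n), ← ENNReal.ofReal_mul hcnn,
        hcreal, ENNReal.ofReal_one]
    have hstep : (volume D * ENNReal.ofReal c) * volume K ≤ volume K * volume K := by
      rw [← layercake, ← lintegral_mul_const _ (by
        exact (ENNReal.measurable_ofReal.comp ((hf_cont.pow n).measurable)))]
      rw [← fubini]
      exact lintegral_mono pointwise
    have final : volume D * volume K ≤ (b * volume K) * volume K := by
      calc volume D * volume K = (volume D * (ENNReal.ofReal c * b)) * volume K := by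
            rw [hcb, mul_one]
        _ = (((volume D * ENNReal.ofReal c) * volume K)) * b := by ring
        _ ≤ (volume K * volume K) * b := mul_le_mul_left hstep b
        _ = (b * volume K) * volume K := by ring
    exact (ENNReal.mul_le_mul_iff_left hvolK_pos.ne' hvolK_ne_top).mp final
end

section
/- If K is a convex body in ℝ^n with center of mass at the origin, then -K ⊆ n·K. -/
open MeasureTheory Set
open scoped ENNReal Pointwise

set_option maxHeartbeats 1000000


instance (m : ℕ) : (volume : Measure (ℝ × (Fin m → ℝ))).IsAddHaarMeasure := by
  rw [MeasureTheory.Measure.volume_eq_prod]; infer_instance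

lemma aux_interior_nonempty {E : Type*} [NormedAddCommGroup E] [NormedSpace ℝ E]
    [MeasurableSpace E] [BorelSpace E] [FiniteDimensional ℝ E] (μ : Measure E)
    [μ.IsAddHaarMeasure] {s : Set E}
    (hs : Convex ℝ s) (h : μ s ≠ 0) : (interior s).Nonempty := by
  by_contra h'
  rw [Set.not_nonempty_iff_eq_empty] at h'
  have hspan : affineSpan ℝ s ≠ ⊤ := by
    intro ht
    rw [← hs.interior_nonempty_iff_affineSpan_eq_top, h'] at ht
    exact Set.not_nonempty_empty ht
  exact h (measure_mono_null (subset_affineSpan ℝ s)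
    (MeasureTheory.Measure.addHaar_affineSubspace μ _ hspan))

lemma key_slice {m : ℕ} {K : Set (ℝ × (Fin m → ℝ))} (hK : Convex ℝ K) (hKc : IsCompact K)
    (hint : (interior K).Nonempty) (hcent : ∫ z in K, z.1 = 0)
    {c : ℝ} (hc : ∀ z ∈ K, z.1 ≤ c) {p : ℝ × (Fin m → ℝ)} (hp : p ∈ K) :
    -p.1 ≤ (m + 1 : ℝ) * c := by
  classical
  have hKm : MeasurableSet K := hKc.measurableSet
  obtain ⟨w, hw⟩ := hint
  have hwK : w ∈ K := interior_subset hw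
  have hIK : IntegrableOn (fun z : ℝ × (Fin m → ℝ) => z.1) K volume :=
    ContinuousOn.integrableOn_compact hKc continuous_fst.continuousOn
  rcases le_or_gt 0 p.1 with hp0 | hp0
  · have hc0 : 0 ≤ c := le_trans hp0 (hc p hp)
    nlinarith
  -- there is a point with positive first coordinate
  have hex : ∃ b ∈ K, 0 < b.1 := by
    by_contra hb
    push_neg at hb
    set w' := (2⁻¹ : ℝ) • w + (2⁻¹ : ℝ) • p with hw'def
    have hw'i : w' ∈ interior K :=
      hK.combo_interior_self_mem_interior hw hp (by norm_num) (by norm_num) (by norm_num)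
    have hw'1 : w'.1 < 0 := by
      have h1 := hb w hwK
      have : w'.1 = 2⁻¹ * w.1 + 2⁻¹ * p.1 := rfl
      rw [this]; nlinarith
    obtain ⟨r, hr, hball⟩ := Metric.isOpen_iff.1 isOpen_interior w' hw'i
    set r' := min r (-w'.1 / 2) with hr'def
    have hr' : 0 < r' := lt_min hr (by linarith)
    have hball' : Metric.ball w' r' ⊆ K :=
      (Metric.ball_subset_ball (min_le_left _ _)).trans (hball.trans interior_subset)
    have hneg : ∀ z ∈ Metric.ball w' r', z.1 ≤ w'.1 / 2 := by
      intro z hz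
      have h1 : dist z.1 w'.1 ≤ dist z w' := by
        rw [Prod.dist_eq]; exact le_max_left _ _
      have h2 : dist z w' < r' := Metric.mem_ball.1 hz
      have h3 : |z.1 - w'.1| < -w'.1 / 2 := by
        rw [← Real.dist_eq]
        exact lt_of_le_of_lt h1 (lt_of_lt_of_le h2 (min_le_right _ _))
      have := abs_lt.1 h3
      linarith [this.2]
    have hsplit : ∫ z in K, z.1 =
        (∫ z in Metric.ball w' r', z.1) + ∫ z in K \ Metric.ball w' r', z.1 := by
      rw [← MeasureTheory.setIntegral_union disjoint_sdiff_self_right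
        (hKm.diff measurableSet_ball) (hIK.mono_set hball')
        (hIK.mono_set diff_subset), Set.union_diff_cancel hball']
    have hb1 : ∫ z in Metric.ball w' r', z.1 ≤ (volume (Metric.ball w' r')).toReal * (w'.1 / 2) := by
      have := MeasureTheory.setIntegral_mono_on (hIK.mono_set hball')
        (integrableOn_const measure_ball_lt_top.ne) measurableSet_ball hneg
      rwa [MeasureTheory.setIntegral_const, smul_eq_mul] at this
    have hb2 : ∫ z in K \ Metric.ball w' r', z.1 ≤ 0 :=
      MeasureTheory.setIntegral_nonpos (hKm.diff measurableSet_ball)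
        fun z hz => hb z hz.1
    have hvol : 0 < (volume (Metric.ball w' r')).toReal :=
      ENNReal.toReal_pos (Metric.measure_ball_pos volume w' hr').ne' measure_ball_lt_top.ne
    nlinarith [hsplit, hb1, hb2, hcent]
  obtain ⟨b, hbK, hb1⟩ := hex
  have hcpos : 0 < c := lt_of_lt_of_le hb1 (hc b hbK)
  have hpc : p.1 ≤ c := le_trans hp0.le hcpos.le
  -- interior points with nearby first coordinate
  have hnear : ∀ q ∈ K, ∀ ε > (0:ℝ), ∃ z ∈ interior K, |z.1 - q.1| < ε := by
    intro q hq ε hε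
    set θ : ℝ := min 1 (ε / (|w.1 - q.1| + 1)) with hθdef
    have hθpos : 0 < θ := lt_min one_pos (div_pos hε (by positivity))
    have hθ1 : θ ≤ 1 := min_le_left _ _
    refine ⟨θ • w + (1 - θ) • q, hK.combo_interior_self_mem_interior hw hq hθpos
      (by linarith) (by ring), ?_⟩
    have h1 : (θ • w + (1 - θ) • q).1 - q.1 = θ * (w.1 - q.1) := by
      have : (θ • w + (1 - θ) • q).1 = θ * w.1 + (1 - θ) * q.1 := rfl
      rw [this]; ring
    rw [h1, abs_mul, abs_of_pos hθpos]
    calc θ * |w.1 - q.1| ≤ (ε / (|w.1 - q.1| + 1)) * |w.1 - q.1| := by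
          apply mul_le_mul_of_nonneg_right (min_le_right _ _) (abs_nonneg _)
      _ < ε := by
          rw [div_mul_eq_mul_div, div_lt_iff₀ (by positivity)]
          nlinarith [abs_nonneg (w.1 - q.1)]
  obtain ⟨w₁, hw₁i, hw₁⟩ := hnear p hp (-p.1) (by linarith)
  obtain ⟨w₂, hw₂i, hw₂⟩ := hnear b hbK b.1 hb1
  have hw₁1 : w₁.1 < 0 := by have := (abs_lt.1 hw₁).2; linarith
  have hw₂1 : 0 < w₂.1 := by have := (abs_lt.1 hw₂).1; linarith
  -- an interior point with first coordinate 0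
  set t0 : ℝ := -w₁.1 / (w₂.1 - w₁.1) with ht0def
  have ht0a : 0 < t0 := div_pos (by linarith) (by linarith)
  have ht0b : t0 < 1 := (div_lt_one (by linarith)).2 (by linarith)
  set ζ := (1 - t0) • w₁ + t0 • w₂ with hζdef
  have hζi : ζ ∈ interior K :=
    hK.combo_interior_self_mem_interior hw₁i (interior_subset hw₂i)
      (by linarith) (by linarith) (by ring)
  have hζ1 : ζ.1 = 0 := by
    have : ζ.1 = (1 - t0) * w₁.1 + t0 * w₂.1 := rfl
    have ht : t0 * (w₂.1 - w₁.1) = -w₁.1 := by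
      rw [ht0def, div_mul_cancel₀ _ (by linarith : w₂.1 - w₁.1 ≠ 0)]
    rw [this]; linear_combination ht
  -- slices
  set sl : ℝ → Set (Fin m → ℝ) := fun t => Prod.mk t ⁻¹' K with hsldef
  have hslm : ∀ t, MeasurableSet (sl t) := fun t => measurable_prodMk_left hKm
  obtain ⟨R, hR⟩ := hKc.isBounded.subset_closedBall (0 : ℝ × (Fin m → ℝ))
  have hslsub : ∀ t, sl t ⊆ Metric.closedBall (0 : Fin m → ℝ) R := by
    intro t y hy
    have h1 : ((t, y) : ℝ × (Fin m → ℝ)) ∈ Metric.closedBall 0 R := hR hy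
    rw [Metric.mem_closedBall] at h1 ⊢
    refine le_trans ?_ h1
    rw [Prod.dist_eq]
    exact le_max_right _ _
  have hslfin : ∀ t, volume (sl t) ≠ ⊤ := fun t =>
    ((measure_mono (hslsub t)).trans_lt measure_closedBall_lt_top).ne
  set g : ℝ → ℝ≥0∞ := fun t => volume (sl t) with hgdef
  -- the slice at level 0 has positive measure
  obtain ⟨r0, hr0, hball0⟩ := Metric.isOpen_iff.1 isOpen_interior ζ hζi
  have hball0' : Metric.ball ζ.2 r0 ⊆ sl 0 := by
    intro y hy
    show ((0:ℝ), y) ∈ K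
    refine interior_subset (s := K) (hball0 ?_)
    rw [Metric.mem_ball, Prod.dist_eq, max_lt_iff]
    constructor
    · show dist (0:ℝ) ζ.1 < r0
      rw [hζ1, dist_self]; exact hr0
    · exact hy
  have hg0pos : 0 < g 0 :=
    lt_of_lt_of_le (Metric.measure_ball_pos volume ζ.2 hr0) (measure_mono hball0')
  set A := (g 0).toReal with hAdef
  have hApos : 0 < A := ENNReal.toReal_pos hg0pos.ne' (hslfin 0)
  -- Fubini
  have hind : Integrable (K.indicator fun z : ℝ × (Fin m → ℝ) => z.1)
      ((volume : Measure ℝ).prod (volume : Measure (Fin m → ℝ))) := by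
    rw [← MeasureTheory.Measure.volume_eq_prod]
    exact hIK.integrable_indicator hKm
  have hinner : ∀ t : ℝ,
      (∫ y, K.indicator (fun z : ℝ × (Fin m → ℝ) => z.1) (t, y)) = (g t).toReal * t := by
    intro t
    have h1 : ∀ y, K.indicator (fun z : ℝ × (Fin m → ℝ) => z.1) (t, y)
        = (sl t).indicator (fun _ => t) y := by
      intro y
      by_cases h : (t, y) ∈ K
      · rw [Set.indicator_of_mem h, Set.indicator_of_mem (show y ∈ sl t from h)]
      · rw [Set.indicator_of_notMem h, Set.indicator_of_notMem (show y ∉ sl t from h)]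
    simp_rw [h1]
    rw [MeasureTheory.integral_indicator (hslm t), MeasureTheory.setIntegral_const, smul_eq_mul]
    rfl
  have hfub : ∫ t : ℝ, (g t).toReal * t = 0 := by
    have h2 : ∫ z, K.indicator (fun z : ℝ × (Fin m → ℝ) => z.1) z
        ∂((volume : Measure ℝ).prod (volume : Measure (Fin m → ℝ))) = 0 := by
      rw [← MeasureTheory.Measure.volume_eq_prod, MeasureTheory.integral_indicator hKm, hcent]
    rw [← h2, MeasureTheory.integral_prod _ hind]
    exact integral_congr_ae (Filter.Eventually.of_forall fun t => (hinner t).symm)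
  have hGint : Integrable (fun t : ℝ => (g t).toReal * t) (volume : Measure ℝ) :=
    (hind.integral_prod_left).congr (Filter.Eventually.of_forall hinner)
  -- cone comparison of slices
  set lam : ℝ → ℝ := fun t => (t - p.1) / (-p.1) with hlamdef
  have hmp : (0:ℝ) < -p.1 := by linarith
  have hup : ∀ t : ℝ, 0 ≤ t → g t ≤ ENNReal.ofReal (lam t ^ m) * g 0 := by
    intro t ht
    have htp : 0 < t - p.1 := by linarith
    have hlnn : 0 ≤ lam t := div_nonneg htp.le hmp.le
    have hsub : sl t ⊆ (AffineMap.homothety p.2 (lam t)) '' sl 0 := by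
      intro y hy
      set σ : ℝ := (-p.1) / (t - p.1) with hσdef
      have hσ0 : 0 < σ := div_pos hmp htp
      have hσ1 : σ ≤ 1 := (div_le_one htp).2 (by linarith)
      have hzK : σ • ((t, y) : ℝ × (Fin m → ℝ)) + (1 - σ) • p ∈ K :=
        hK hy hp hσ0.le (by linarith) (by ring)
      have hσm : σ * (t - p.1) = -p.1 := div_mul_cancel₀ _ htp.ne'
      have hz1 : (σ • ((t, y) : ℝ × (Fin m → ℝ)) + (1 - σ) • p).1 = 0 := by
        show σ * t + (1 - σ) * p.1 = 0
        linear_combination hσm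
      refine ⟨(σ • ((t, y) : ℝ × (Fin m → ℝ)) + (1 - σ) • p).2, ?_, ?_⟩
      · show ((0:ℝ), (σ • ((t, y) : ℝ × (Fin m → ℝ)) + (1 - σ) • p).2) ∈ K
        have he : ((0:ℝ), (σ • ((t, y) : ℝ × (Fin m → ℝ)) + (1 - σ) • p).2)
            = σ • ((t, y) : ℝ × (Fin m → ℝ)) + (1 - σ) • p := Prod.ext hz1.symm rfl
        rw [he]; exact hzK
      · have hz2 : (σ • ((t, y) : ℝ × (Fin m → ℝ)) + (1 - σ) • p).2
            = σ • y + (1 - σ) • p.2 := rfl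
        rw [AffineMap.homothety_apply, hz2]
        have hls : lam t * σ = 1 := by
          show (t - p.1) / (-p.1) * ((-p.1) / (t - p.1)) = 1
          rw [div_mul_div_comm, mul_comm]
          exact div_self (mul_pos hmp htp).ne'
        have he2 : σ • y + (1 - σ) • p.2 - p.2 = σ • (y - p.2) := by
          rw [smul_sub, sub_smul, one_smul]; abel
        show lam t • (σ • y + (1 - σ) • p.2 - p.2) + p.2 = y
        rw [he2, smul_smul, hls, one_smul, sub_add_cancel]
    calc g t ≤ volume ((AffineMap.homothety p.2 (lam t)) '' sl 0) := measure_mono hsub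
      _ = ENNReal.ofReal |lam t ^ m| * g 0 := by
          rw [MeasureTheory.Measure.addHaar_image_homothety, Module.finrank_fin_fun]
      _ = ENNReal.ofReal (lam t ^ m) * g 0 := by
          rw [abs_of_nonneg (pow_nonneg hlnn m)]
  have hlow : ∀ t : ℝ, p.1 ≤ t → t ≤ 0 → ENNReal.ofReal (lam t ^ m) * g 0 ≤ g t := by
    intro t ht1 ht2
    have hl0 : 0 ≤ lam t := div_nonneg (by linarith) hmp.le
    have hl1 : lam t ≤ 1 := (div_le_one hmp).2 (by linarith)
    have hlm : lam t * (-p.1) = t - p.1 := div_mul_cancel₀ _ hmp.ne'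
    have hsub : (AffineMap.homothety p.2 (lam t)) '' sl 0 ⊆ sl t := by
      rintro _ ⟨z, hz, rfl⟩
      have hzK : (1 - lam t) • p + lam t • (((0:ℝ), z) : ℝ × (Fin m → ℝ)) ∈ K :=
        hK hp hz (by linarith) hl0 (by ring)
      show (t, AffineMap.homothety p.2 (lam t) z) ∈ K
      have he : ((t, AffineMap.homothety p.2 (lam t) z) : ℝ × (Fin m → ℝ))
          = (1 - lam t) • p + lam t • (((0:ℝ), z) : ℝ × (Fin m → ℝ)) := by
        refine Prod.ext ?_ ?_
        · show t = (1 - lam t) * p.1 + lam t * 0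
          linear_combination -hlm
        · show lam t • (z - p.2) + p.2 = (1 - lam t) • p.2 + lam t • z
          rw [smul_sub, sub_smul, one_smul]
          abel
      rw [he]; exact hzK
    calc ENNReal.ofReal (lam t ^ m) * g 0
        = volume ((AffineMap.homothety p.2 (lam t)) '' sl 0) := by
          rw [MeasureTheory.Measure.addHaar_image_homothety, Module.finrank_fin_fun,
            abs_of_nonneg (pow_nonneg hl0 m)]
      _ ≤ g t := measure_mono hsub
  -- pointwise comparison with the cone slice function
  set h : ℝ → ℝ := (Set.Icc p.1 c).indicator (fun t => lam t ^ m * A * t) with hhdef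
  have hhint : Integrable h (volume : Measure ℝ) := by
    refine MeasureTheory.IntegrableOn.integrable_indicator ?_ measurableSet_Icc
    refine ContinuousOn.integrableOn_compact isCompact_Icc ?_
    refine Continuous.continuousOn ?_
    have : Continuous lam := by
      rw [hlamdef]; exact (continuous_id.sub continuous_const).div_const _
    exact ((this.pow m).mul continuous_const).mul continuous_id
  have hcomp : ∀ t : ℝ, (g t).toReal * t ≤ h t := by
    intro t
    by_cases hmem : t ∈ Set.Icc p.1 c
    · rw [hhdef, Set.indicator_of_mem hmem]
      have hlnn : 0 ≤ lam t := div_nonneg (by linarith [hmem.1]) hmp.le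
      rcases le_or_gt 0 t with ht | ht
      · have h1 := hup t ht
        have hfin : ENNReal.ofReal (lam t ^ m) * g 0 ≠ ⊤ :=
          ENNReal.mul_ne_top ENNReal.ofReal_ne_top (hslfin 0)
        have h2 : (g t).toReal ≤ lam t ^ m * A := by
          have h3 := ENNReal.toReal_mono hfin h1
          rwa [ENNReal.toReal_mul, ENNReal.toReal_ofReal (pow_nonneg hlnn m)] at h3
        exact mul_le_mul_of_nonneg_right h2 ht
      · have h1 := hlow t hmem.1 ht.le
        have h2 : lam t ^ m * A ≤ (g t).toReal := by
          have h3 := ENNReal.toReal_mono (hslfin t) h1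
          rwa [ENNReal.toReal_mul, ENNReal.toReal_ofReal (pow_nonneg hlnn m)] at h3
        exact mul_le_mul_of_nonpos_right h2 ht.le
    · rw [hhdef, Set.indicator_of_notMem hmem]
      rw [Set.mem_Icc, not_and_or] at hmem
      rcases hmem with h1 | h2
      · push_neg at h1
        nlinarith [ENNReal.toReal_nonneg (a := g t)]
      · push_neg at h2
        have hge : sl t = ∅ := by
          ext y
          simp only [Set.mem_empty_iff_false, iff_false]
          intro hy
          exact absurd (hc _ hy) (by push_neg; exact h2)
        have hgz : g t = 0 := by
          show volume (sl t) = 0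
          rw [hge]
          exact measure_empty
        rw [hgz]
        simp
  have hmono : (0:ℝ) ≤ ∫ t, h t := by
    rw [← hfub]
    exact integral_mono hGint hhint hcomp
  -- compute the integral of the cone function
  have hcalc : ∫ t, h t = (A * ((-p.1)⁻¹) ^ m) *
      ((c - p.1) ^ (m + 2) / ((m:ℝ) + 2) + p.1 * (c - p.1) ^ (m + 1) / ((m:ℝ) + 1)) := by
    rw [hhdef, MeasureTheory.integral_indicator measurableSet_Icc,
      MeasureTheory.integral_Icc_eq_integral_Ioc, ← intervalIntegral.integral_of_le hpc]
    have he : ∀ t : ℝ, lam t ^ m * A * t = (A * ((-p.1)⁻¹) ^ m) * ((t - p.1) ^ m * t) := by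
      intro t
      have hlt : lam t = (t - p.1) * (-p.1)⁻¹ := div_eq_mul_inv _ _
      rw [hlt, mul_pow]
      ring
    simp_rw [he]
    rw [intervalIntegral.integral_const_mul]
    congr 1
    have e1 : (∫ t in p.1..c, (t - p.1) ^ m * t)
        = ∫ x in (p.1 - p.1)..(c - p.1), x ^ m * (x + p.1) := by
      rw [← intervalIntegral.integral_comp_sub_right (fun u => u ^ m * (u + p.1)) p.1]
      apply intervalIntegral.integral_congr
      intro x _; ring
    rw [e1, sub_self]
    have e2 : ∀ x : ℝ, x ^ m * (x + p.1) = x ^ (m+1) + p.1 * x ^ m := fun x => by ring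
    simp_rw [e2]
    rw [intervalIntegral.integral_add (intervalIntegral.intervalIntegrable_pow _)
      ((intervalIntegral.intervalIntegrable_pow _).const_mul _), integral_pow,
      intervalIntegral.integral_const_mul, integral_pow]
    rw [zero_pow (by omega : m + 1 + 1 ≠ 0), zero_pow (by omega : m + 1 ≠ 0)]
    push_cast
    ring
  -- conclude
  have hXpos : 0 < c - p.1 := by linarith
  have hconst : 0 < A * ((-p.1)⁻¹) ^ m := by positivity
  have hJ : 0 ≤ (c - p.1) ^ (m + 2) / ((m:ℝ) + 2) + p.1 * (c - p.1) ^ (m + 1) / ((m:ℝ) + 1) := by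
    by_contra hneg
    push_neg at hneg
    nlinarith [hmono, hcalc, hconst]
  have hXp : 0 < (c - p.1) ^ (m + 1) := pow_pos hXpos _
  have h3 : 0 ≤ (((m:ℝ) + 1) * ((m:ℝ) + 2)) *
      ((c - p.1) ^ (m + 2) / ((m:ℝ) + 2) + p.1 * (c - p.1) ^ (m + 1) / ((m:ℝ) + 1)) :=
    mul_nonneg (by positivity) hJ
  have h4 : (((m:ℝ) + 1) * ((m:ℝ) + 2)) *
      ((c - p.1) ^ (m + 2) / ((m:ℝ) + 2) + p.1 * (c - p.1) ^ (m + 1) / ((m:ℝ) + 1))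
      = (c - p.1) ^ (m + 1) * (((m:ℝ) + 1) * (c - p.1) + ((m:ℝ) + 2) * p.1) := by
    have hm1 : ((m:ℝ) + 1) ≠ 0 := by positivity
    have hm2 : ((m:ℝ) + 2) ≠ 0 := by positivity
    have hpow : (c - p.1) ^ (m + 2) = (c - p.1) ^ (m + 1) * (c - p.1) := by
      rw [pow_succ]
    rw [hpow]
    field_simp
  have h5 : 0 ≤ ((m:ℝ) + 1) * (c - p.1) + ((m:ℝ) + 2) * p.1 := by
    rw [h4] at h3
    by_contra hq
    push_neg at hq
    nlinarith [mul_neg_of_pos_of_neg hXp hq]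
  linarith

theorem neg_subset_dilate_of_centroid_zero (n : ℕ) (K : Set (EuclideanSpace ℝ (Fin n)))
    (hK : Convex ℝ K) (hKc : IsCompact K) (hKi : (interior K).Nonempty)
    (hcent : ∫ x in K, x ∂volume = 0) :
    -K ⊆ (n : ℝ) • K := by
  obtain ⟨w₀, hw₀⟩ := hKi
  have hw₀K : w₀ ∈ K := interior_subset hw₀
  obtain _ | m := n
  · intro x _
    refine Set.mem_smul_set.2 ⟨w₀, hw₀K, ?_⟩
    have h1 : ∀ z : EuclideanSpace ℝ (Fin 0), z = 0 := fun z => by ext i; exact i.elim0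
    rw [h1 x, h1 (((0:ℕ):ℝ) • w₀)]
  · intro x hx
    rw [Set.mem_neg] at hx
    have hnpos : (0:ℝ) < (m:ℝ) + 1 := by positivity
    by_contra hgoal
    have hnot : ((m:ℝ) + 1)⁻¹ • x ∉ K := by
      intro hmem
      refine hgoal (Set.mem_smul_set.2 ⟨((m:ℝ) + 1)⁻¹ • x, hmem, ?_⟩)
      rw [smul_smul]
      push_cast
      rw [mul_inv_cancel₀ hnpos.ne', one_smul]
    obtain ⟨f, u, hfu, hux⟩ := geometric_hahn_banach_closed_point hK hKc.isClosed hnot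
    have hfx : f (-x) < u := hfu _ hx
    have hIK : IntegrableOn (fun z : EuclideanSpace ℝ (Fin (m+1)) => z) K volume :=
      ContinuousOn.integrableOn_compact hKc continuousOn_id
    have hfint : ∫ z in K, f z = 0 := by
      rw [ContinuousLinearMap.integral_comp_comm f hIK, hcent, map_zero]
    set v := (InnerProductSpace.toDual ℝ (EuclideanSpace ℝ (Fin (m+1)))).symm f with hvdef
    have hfv : ∀ z, f z = inner ℝ v z := fun z => (InnerProductSpace.toDual_symm_apply).symm
    have hfne : v ≠ 0 := by
      intro h0
      have h1 : f (-x) = 0 := by rw [hfv, h0, inner_zero_left]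
      have h2 : f (((m:ℝ) + 1)⁻¹ • x) = 0 := by rw [hfv, h0, inner_zero_left]
      rw [h2] at hux
      rw [h1] at hfx
      linarith
    have hvnorm : (0:ℝ) < ‖v‖ := norm_pos_iff.2 hfne
    set u₀ := ‖v‖⁻¹ • v with hu₀def
    have hu₀ : ‖u₀‖ = 1 := norm_smul_inv_norm hfne
    have horth : Orthonormal ℝ (({0} : Set (Fin (m+1))).restrict fun _ => u₀) := by
      constructor
      · intro i
        exact hu₀
      · intro i j hij
        exact absurd (Subtype.ext ((Set.mem_singleton_iff.1 i.2).trans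
          (Set.mem_singleton_iff.1 j.2).symm)) hij
    obtain ⟨b, hb⟩ := horth.exists_orthonormalBasis_extension_of_card_eq
      (by simp [finrank_euclideanSpace_fin])
    have hb0 : b 0 = u₀ := hb 0 (Set.mem_singleton 0)
    set Φ : EuclideanSpace ℝ (Fin (m+1)) → ℝ × (Fin m → ℝ) :=
      fun z => ((MeasurableEquiv.piFinSuccAbove (fun _ : Fin (m+1) => ℝ) 0)
        ((MeasurableEquiv.toLp 2 (Fin (m+1) → ℝ)).symm (b.repr z))) with hΦdef
    have hΦmp : MeasurePreserving Φ volume volume :=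
      ((MeasureTheory.volume_preserving_piFinSuccAbove (fun _ : Fin (m+1) => ℝ) 0).comp
        (EuclideanSpace.volume_preserving_symm_measurableEquiv_toLp (Fin (m+1)))).comp
        b.measurePreserving_repr
    have hΦemb : MeasurableEmbedding Φ :=
      ((MeasurableEquiv.piFinSuccAbove (fun _ : Fin (m+1) => ℝ) 0).measurableEmbedding.comp
        ((MeasurableEquiv.toLp 2 (Fin (m+1) → ℝ)).symm.measurableEmbedding)).comp
        b.repr.toHomeomorph.measurableEmbedding
    have hΦ1 : ∀ z, (Φ z).1 = ‖v‖⁻¹ * f z := by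
      intro z
      have h1 : (Φ z).1 = b.repr z 0 := rfl
      rw [h1, OrthonormalBasis.repr_apply_apply, hb0, hu₀def, hfv]
      exact real_inner_smul_left _ _ _
    have hlin : IsLinearMap ℝ Φ := by
      constructor
      · intro z₁ z₂
        refine Prod.ext ?_ ?_
        · show b.repr (z₁ + z₂) 0 = (Φ z₁ + Φ z₂).1
          rw [map_add]; rfl
        · show (fun j => b.repr (z₁ + z₂) (Fin.succAbove 0 j)) = (Φ z₁ + Φ z₂).2
          funext j
          show b.repr (z₁ + z₂) (Fin.succAbove 0 j) = _
          rw [map_add]; rfl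
      · intro a z
        refine Prod.ext ?_ ?_
        · show b.repr (a • z) 0 = (a • Φ z).1
          rw [_root_.map_smul]; rfl
        · show (fun j => b.repr (a • z) (Fin.succAbove 0 j)) = (a • Φ z).2
          funext j
          show b.repr (a • z) (Fin.succAbove 0 j) = _
          rw [_root_.map_smul]; rfl
    set K' := Φ '' K with hK'def
    have hK'conv : Convex ℝ K' := hK.is_linear_image hlin
    have hΦcont : Continuous Φ := by
      refine Continuous.prodMk ?_ ?_
      · exact (EuclideanSpace.proj (0 : Fin (m+1))).continuous.comp b.repr.continuous
      · exact continuous_pi fun j =>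
          (EuclideanSpace.proj (Fin.succAbove 0 j)).continuous.comp b.repr.continuous
    have hK'c : IsCompact K' := hKc.image hΦcont
    have hK'vol : volume K' ≠ 0 := by
      have h3 : volume (Φ ⁻¹' K') = volume K' :=
        hΦmp.measure_preimage hK'c.measurableSet.nullMeasurableSet
      rw [← h3, hK'def, Set.preimage_image_eq K hΦemb.injective]
      exact (lt_of_lt_of_le (isOpen_interior.measure_pos volume ⟨w₀, hw₀⟩)
        (measure_mono interior_subset)).ne'
    have hintK' : (interior K').Nonempty := aux_interior_nonempty volume hK'conv hK'vol
    have hcent' : ∫ z in K', z.1 = 0 := by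
      rw [hK'def, hΦmp.setIntegral_image_emb hΦemb (fun z => z.1) K]
      simp_rw [hΦ1]
      rw [MeasureTheory.integral_const_mul, hfint, mul_zero]
    set c' := ‖v‖⁻¹ * u with hc'def
    have hc' : ∀ z ∈ K', z.1 ≤ c' := by
      rintro _ ⟨y, hy, rfl⟩
      rw [hΦ1]
      exact mul_le_mul_of_nonneg_left (hfu y hy).le (by positivity)
    have hpK' : Φ (-x) ∈ K' := ⟨-x, hx, rfl⟩
    have hkey := key_slice hK'conv hK'c hintK' hcent' hc' hpK'
    rw [hΦ1] at hkey
    -- hkey : -(‖v‖⁻¹ * f (-x)) ≤ (m+1) * (‖v‖⁻¹ * u)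
    have hur : u < ((m:ℝ) + 1)⁻¹ * (- f (-x)) := by
      have h4 : f (((m:ℝ) + 1)⁻¹ • x) = ((m:ℝ) + 1)⁻¹ * f x := by
        rw [_root_.map_smul, smul_eq_mul]
      have h5 : f x = - f (-x) := by rw [_root_.map_neg, neg_neg]
      rw [h4, h5] at hux
      exact hux
    have h6 : -f (-x) ≤ ((m:ℝ) + 1) * u := by
      have h7 : ‖v‖⁻¹ * (-f (-x)) ≤ ((m:ℝ) + 1) * (‖v‖⁻¹ * u) := by
        calc ‖v‖⁻¹ * (-f (-x)) = -(‖v‖⁻¹ * f (-x)) := by ring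
          _ ≤ ((m:ℝ) + 1) * (‖v‖⁻¹ * u) := hkey
      have h8 := mul_le_mul_of_nonneg_left h7 hvnorm.le
      rw [← mul_assoc, mul_inv_cancel₀ hvnorm.ne', one_mul] at h8
      calc -f (-x) = ‖v‖ * (‖v‖⁻¹ * (-f (-x))) := by
            rw [← mul_assoc, mul_inv_cancel₀ hvnorm.ne', one_mul]
        _ ≤ ‖v‖ * (((m:ℝ) + 1) * (‖v‖⁻¹ * u)) := mul_le_mul_of_nonneg_left h7 hvnorm.le
        _ = ((m:ℝ) + 1) * u := by field_simp
    have h9 : ((m:ℝ) + 1) * u < -f (-x) := by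
      have := mul_lt_mul_of_pos_left hur hnpos
      rwa [← mul_assoc, mul_inv_cancel₀ hnpos.ne', one_mul] at this
    linarith
end

section
/- For any convex body K in ℝ^n containing 0, the volume of the convex hull of K and -K is at most 2^n times the volume of K. -/
open MeasureTheory Set Metric Filter
open scoped ENNReal Pointwise Topology

namespace VolConvHullAux

variable {n : ℕ}

/-- Measure of a sublevel set of the gauge of a convex body. -/
lemma meas_gauge_le (hn : 0 < n) {W : Set (EuclideanSpace ℝ (Fin n))}
    (hW : Convex ℝ W) (hWc : IsCompact W) (hW0 : W ∈ 𝓝 (0 : EuclideanSpace ℝ (Fin n)))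
    (s : ℝ) :
    volume {x | gauge W x ≤ s} = ENNReal.ofReal s ^ n * volume W := by
  have habs : Absorbent ℝ W := absorbent_nhds_zero hW0
  rcases lt_trichotomy s 0 with hs | rfl | hs
  · have he : {x : EuclideanSpace ℝ (Fin n) | gauge W x ≤ s} = ∅ := by
      ext x
      simp only [mem_setOf_eq, mem_empty_iff_false, iff_false, not_le]
      exact hs.trans_le (gauge_nonneg x)
    rw [he, ENNReal.ofReal_of_nonpos hs.le, zero_pow hn.ne', zero_mul, measure_empty]
  · have hbdd : Bornology.IsVonNBounded ℝ W := by
      rw [NormedSpace.isVonNBounded_iff]; exact hWc.isBounded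
    have he : {x : EuclideanSpace ℝ (Fin n) | gauge W x ≤ 0} = (0 : ℝ) • W := by
      rw [zero_smul_set ⟨0, mem_of_mem_nhds hW0⟩]
      ext x
      simp only [mem_setOf_eq]
      constructor
      · intro hx
        have := le_antisymm hx (gauge_nonneg x)
        rw [gauge_eq_zero habs hbdd] at this
        simp [this]
      · intro hx
        simp only [Set.mem_zero] at hx
        subst hx; simp [gauge_zero]
    rw [he, Measure.addHaar_smul_of_nonneg volume le_rfl, finrank_euclideanSpace_fin,
      zero_pow hn.ne', ENNReal.ofReal_zero, zero_pow hn.ne']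
  · have he : {x : EuclideanSpace ℝ (Fin n) | gauge W x ≤ s} = s • W := by
      ext x
      have h1 : gauge W x ≤ s ↔ gauge W (s⁻¹ • x) ≤ 1 := by
        rw [gauge_smul_of_nonneg (inv_nonneg.2 hs.le), smul_eq_mul]
        rw [inv_mul_le_iff₀ hs, mul_one]
      have h2 : gauge W (s⁻¹ • x) ≤ 1 ↔ s⁻¹ • x ∈ closure W :=
        gauge_le_one_iff_mem_closure hW hW0
      rw [mem_setOf_eq, h1, h2, hWc.isClosed.closure_eq,
        ← mem_smul_set_iff_inv_smul_mem₀ hs.ne' W x]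
    rw [he, Measure.addHaar_smul_of_nonneg volume hs.le, finrank_euclideanSpace_fin,
      ENNReal.ofReal_pow hs.le]

/-- The dimensional constant in the layer-cake computation. -/
noncomputable def cn (n : ℕ) : ℝ≥0∞ :=
  ∫⁻ t in Ioi (0 : ℝ), ENNReal.ofReal (1 - t ^ ((n : ℝ)⁻¹)) ^ n

lemma J_eq (hn : 0 < n) {W : Set (EuclideanSpace ℝ (Fin n))}
    (hW : Convex ℝ W) (hWc : IsCompact W) (hW0 : W ∈ 𝓝 (0 : EuclideanSpace ℝ (Fin n))) :
    ∫⁻ x, ENNReal.ofReal (1 - gauge W x) ^ n = cn n * volume W := by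
  have hcont : Continuous (gauge W) := continuous_gauge hW hW0
  have hf : ∀ x : EuclideanSpace ℝ (Fin n),
      ENNReal.ofReal (1 - gauge W x) ^ n
        = ENNReal.ofReal (max 0 (1 - gauge W x) ^ n) := by
    intro x
    rw [ENNReal.ofReal_pow (le_max_left _ _)]
    congr 1
    rcases le_or_gt (1 - gauge W x) 0 with h | h
    · rw [max_eq_left h, ENNReal.ofReal_of_nonpos h, ENNReal.ofReal_zero]
    · rw [max_eq_right h.le]
  simp_rw [hf]
  rw [lintegral_eq_lintegral_meas_le (f := fun x => max 0 (1 - gauge W x) ^ n) volume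
    (ae_of_all _ fun x => pow_nonneg (le_max_left _ _) n)
    (((continuous_const.max (continuous_const.sub hcont)).pow n).aemeasurable)]
  have key : ∀ t ∈ Ioi (0 : ℝ),
      volume {a : EuclideanSpace ℝ (Fin n) | t ≤ max 0 (1 - gauge W a) ^ n}
        = ENNReal.ofReal (1 - t ^ ((n : ℝ)⁻¹)) ^ n * volume W := by
    intro t ht
    have ht' : (0 : ℝ) < t := ht
    have hr : (0 : ℝ) < t ^ ((n : ℝ)⁻¹) := Real.rpow_pos_of_pos ht' _
    have hset : {a : EuclideanSpace ℝ (Fin n) | t ≤ max 0 (1 - gauge W a) ^ n}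
        = {a | gauge W a ≤ 1 - t ^ ((n : ℝ)⁻¹)} := by
      ext a
      have key2 : t ≤ max 0 (1 - gauge W a) ^ n ↔
          t ^ ((n : ℝ)⁻¹) ≤ max 0 (1 - gauge W a) := by
        rw [← pow_le_pow_iff_left₀ (Real.rpow_nonneg ht'.le _) (le_max_left _ _) hn.ne',
          Real.rpow_inv_natCast_pow ht'.le hn.ne']
      simp only [mem_setOf_eq]
      rw [key2]
      constructor
      · intro h
        rcases le_max_iff.1 h with h' | h'
        · exact absurd (hr.trans_le h') (by simp)
        · linarith
      · intro h
        exact le_max_of_le_right (by linarith)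
    rw [hset, meas_gauge_le hn hW hWc hW0]
  rw [setLIntegral_congr_fun measurableSet_Ioi key]
  rw [lintegral_mul_const _
    (((Real.continuous_rpow_const (by positivity)).measurable.const_sub 1).ennreal_ofReal.pow_const n)]
  rfl

lemma cn_le_one (hn : 0 < n) : cn n ≤ 1 := by
  have hb : cn n ≤ ∫⁻ t in Ioi (0 : ℝ), (Ioc (0:ℝ) 1).indicator (fun _ => (1 : ℝ≥0∞)) t := by
    apply setLIntegral_mono (measurable_one.indicator measurableSet_Ioc)
    intro t ht
    rcases le_or_gt t 1 with h1 | h1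
    · calc ENNReal.ofReal (1 - t ^ ((n : ℝ)⁻¹)) ^ n ≤ 1 ^ n := by
            apply pow_le_pow_left₀ zero_le
            rw [← ENNReal.ofReal_one]
            apply ENNReal.ofReal_le_ofReal
            have : 0 < t ^ ((n : ℝ)⁻¹) := Real.rpow_pos_of_pos ht _
            linarith
      _ = 1 := one_pow n
      _ = (Ioc (0:ℝ) 1).indicator (fun _ => (1 : ℝ≥0∞)) t := by
            rw [Set.indicator_of_mem (show t ∈ Ioc (0:ℝ) 1 from ⟨ht, h1⟩)]
    · have h2 : (1:ℝ) ≤ t ^ ((n : ℝ)⁻¹) := Real.one_le_rpow h1.le (by positivity)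
      rw [ENNReal.ofReal_of_nonpos (by linarith), zero_pow hn.ne']
      exact zero_le
  calc cn n ≤ _ := hb
    _ ≤ 1 := by
        rw [lintegral_indicator measurableSet_Ioc, setLIntegral_one,
          Measure.restrict_apply measurableSet_Ioc]
        rw [Set.inter_eq_left.2 (fun x hx => hx.1)]
        simp [Real.volume_Ioc]

lemma cn_pos (hn : 0 < n) : 0 < cn n := by
  have hb : ∫⁻ t in Ioi (0 : ℝ),
      (Ioc (0:ℝ) ((2:ℝ)⁻¹ ^ n)).indicator (fun _ => (ENNReal.ofReal 2⁻¹) ^ n) t ≤ cn n := by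
    apply setLIntegral_mono
      (((Real.continuous_rpow_const (by positivity)).measurable.const_sub 1).ennreal_ofReal.pow_const n)
    intro t ht
    rcases le_or_gt t ((2:ℝ)⁻¹ ^ n) with h1 | h1
    · rw [Set.indicator_of_mem (show t ∈ Ioc (0:ℝ) ((2:ℝ)⁻¹ ^ n) from ⟨ht, h1⟩)]
      have h2 : t ^ ((n : ℝ)⁻¹) ≤ (2:ℝ)⁻¹ := by
        calc t ^ ((n : ℝ)⁻¹) ≤ ((2:ℝ)⁻¹ ^ n) ^ ((n : ℝ)⁻¹) :=
              Real.rpow_le_rpow (le_of_lt ht) h1 (by positivity)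
          _ = (2:ℝ)⁻¹ := Real.pow_rpow_inv_natCast (by norm_num) hn.ne'
      apply pow_le_pow_left₀ zero_le
      exact ENNReal.ofReal_le_ofReal (by linarith)
    · rw [Set.indicator_of_notMem (fun h => absurd h.2 (not_le.2 h1))]
      exact zero_le
  refine lt_of_lt_of_le ?_ hb
  rw [lintegral_indicator measurableSet_Ioc, setLIntegral_const,
    Measure.restrict_apply measurableSet_Ioc,
    Set.inter_eq_left.2 (fun x hx => hx.1)]
  rw [Real.volume_Ioc]
  have h2 : (0:ℝ≥0∞) < ENNReal.ofReal 2⁻¹ ^ n := by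
    apply ENNReal.pow_pos
    rw [ENNReal.ofReal_pos]; norm_num
  apply ENNReal.mul_pos h2.ne'
  rw [Ne, ENNReal.ofReal_eq_zero, not_le, sub_zero]
  positivity

lemma gauge_smul_le {K : Set (EuclideanSpace ℝ (Fin n))} {t : ℝ} (ht : 0 ≤ t)
    {x : EuclideanSpace ℝ (Fin n)} (hx : x ∈ K) : gauge K (t • x) ≤ t := by
  rw [gauge_smul_of_nonneg ht, smul_eq_mul]
  calc t * gauge K x ≤ t * 1 := mul_le_mul_of_nonneg_left (gauge_le_one_of_mem hx) ht
    _ = t := mul_one t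

lemma slice_lower (hn : 0 < n) {K : Set (EuclideanSpace ℝ (Fin n))}
    (hK : Convex ℝ K) (hKc : IsCompact K) (h0 : K ∈ 𝓝 (0 : EuclideanSpace ℝ (Fin n)))
    (z : EuclideanSpace ℝ (Fin n)) :
    ENNReal.ofReal ((1 - gauge (convexHull ℝ (K ∪ -K)) z) / 2) ^ n * volume K
      ≤ volume {w | gauge K (z + w) + gauge K w ≤ 1} := by
  set D := convexHull ℝ (K ∪ -K) with hDdef
  have h0K : (0 : EuclideanSpace ℝ (Fin n)) ∈ K := mem_of_mem_nhds h0
  have hKD : K ⊆ D := subset_union_left.trans (subset_convexHull ℝ _)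
  have hDconv : Convex ℝ D := convex_convexHull ℝ _
  have hD0 : D ∈ 𝓝 (0 : EuclideanSpace ℝ (Fin n)) := Filter.mem_of_superset h0 hKD
  have habsK : Absorbent ℝ K := absorbent_nhds_zero h0
  set r := gauge D z with hrdef
  rcases le_or_gt 1 r with h1r | h1r
  · rw [ENNReal.ofReal_of_nonpos (by linarith), zero_pow hn.ne', zero_mul]
    exact zero_le
  have key : ∀ s ∈ Ioo r 1,
      ENNReal.ofReal ((1 - s) / 2) ^ n * volume K
        ≤ volume {w | gauge K (z + w) + gauge K w ≤ 1} := by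
    intro s hs
    have hs0 : 0 < s := (gauge_nonneg z).trans_lt hs.1
    have hs1 : s < 1 := hs.2
    have hzD : z ∈ s • D := by
      have hz1 : z ∈ {x | gauge D x < s} := hs.1
      rw [gauge_lt_eq' (absorbent_nhds_zero hD0) s] at hz1
      simp only [mem_iUnion, exists_prop] at hz1
      obtain ⟨r', hr'0, hr's, d, hd, rfl⟩ := hz1
      refine ⟨(s⁻¹ * r') • d, hDconv.smul_mem_of_zero_mem (hKD h0K) hd
        ⟨by positivity, ?_⟩, ?_⟩
      · rw [← div_eq_inv_mul, div_le_one hs0]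
        exact hr's.le
      · show s • (s⁻¹ * r') • d = r' • d
        rw [smul_smul]
        congr 1
        field_simp
    obtain ⟨d, hd, hzd⟩ := hzD
    rw [hDdef, Convex.convexHull_union hK hK.neg ⟨0, h0K⟩ ⟨0, by simpa using h0K⟩,
      mem_convexJoin] at hd
    obtain ⟨a, ha, b, hb, hdseg⟩ := hd
    rw [segment_eq_image] at hdseg
    obtain ⟨θ, hθ, hdeq⟩ := hdseg
    have hyK : -b ∈ K := Set.mem_neg.1 hb
    set c : ℝ := (1 - s) / 2 with hcdef
    have hc0 : 0 ≤ c := by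
      have : (0:ℝ) < 1 - s := by linarith
      positivity
    have hθ0 : 0 ≤ θ := hθ.1
    have hθ1 : θ ≤ 1 := hθ.2
    have hsub : (fun u => (s * θ) • (-b) + u) '' (c • K)
        ⊆ {w | gauge K (z + w) + gauge K w ≤ 1} := by
      rintro w ⟨u, hu, rfl⟩
      obtain ⟨k, hk, rfl⟩ := hu
      have e1 : z + ((s * θ) • (-b) + c • k) = (s * (1 - θ)) • a + c • k := by
        rw [← hzd, ← hdeq]
        module
      have g1 : gauge K (z + ((s * θ) • (-b) + c • k)) ≤ s * (1 - θ) + c := by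
        rw [e1]
        exact (gauge_add_le hK habsK _ _).trans
          (add_le_add (gauge_smul_le (by nlinarith) ha) (gauge_smul_le hc0 hk))
      have g2 : gauge K ((s * θ) • (-b) + c • k) ≤ s * θ + c :=
        (gauge_add_le hK habsK _ _).trans
          (add_le_add (gauge_smul_le (by positivity) hyK) (gauge_smul_le hc0 hk))
      have : gauge K (z + ((s * θ) • (-b) + c • k))
          + gauge K ((s * θ) • (-b) + c • k) ≤ 1 := by
        calc _ ≤ (s * (1 - θ) + c) + (s * θ + c) := add_le_add g1 g2
          _ = 1 := by rw [hcdef]; ring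
      exact this
    calc ENNReal.ofReal c ^ n * volume K = volume (c • K) := by
          rw [Measure.addHaar_smul_of_nonneg volume hc0, finrank_euclideanSpace_fin,
            ENNReal.ofReal_pow hc0]
      _ = volume ((fun u => (s * θ) • (-b) + u) '' (c • K)) := by
          rw [Set.image_add_left, measure_preimage_add]
      _ ≤ volume {w | gauge K (z + w) + gauge K w ≤ 1} := measure_mono hsub
  have htend : Tendsto (fun s : ℝ => ENNReal.ofReal ((1 - s) / 2) ^ n * volume K)
      (𝓝[>] r) (𝓝 (ENNReal.ofReal ((1 - r) / 2) ^ n * volume K)) := by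
    apply ENNReal.Tendsto.mul_const _ (Or.inr hKc.measure_lt_top.ne)
    apply ENNReal.Tendsto.pow
    apply tendsto_nhdsWithin_of_tendsto_nhds
    exact (ENNReal.continuous_ofReal.tendsto _).comp
      (((continuous_const.sub continuous_id).div_const 2).tendsto r)
  exact le_of_tendsto htend
    (eventually_of_mem (Ioo_mem_nhdsGT_of_mem ⟨le_refl r, h1r⟩) key)

lemma main (hn : 0 < n) {K : Set (EuclideanSpace ℝ (Fin n))}
    (hK : Convex ℝ K) (hKc : IsCompact K) (h0 : K ∈ 𝓝 (0 : EuclideanSpace ℝ (Fin n))) :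
    volume (convexHull ℝ (K ∪ -K)) ≤ 2 ^ n * volume K := by
  set D := convexHull ℝ (K ∪ -K) with hDdef
  have h0K : (0 : EuclideanSpace ℝ (Fin n)) ∈ K := mem_of_mem_nhds h0
  have hKD : K ⊆ D := subset_union_left.trans (subset_convexHull ℝ _)
  have hDconv : Convex ℝ D := convex_convexHull ℝ _
  have hD0 : D ∈ 𝓝 (0 : EuclideanSpace ℝ (Fin n)) := Filter.mem_of_superset h0 hKD
  have hDeq : D = (fun q : (EuclideanSpace ℝ (Fin n) × EuclideanSpace ℝ (Fin n)) × ℝ =>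
      (1 - q.2) • q.1.1 + q.2 • q.1.2) '' ((K ×ˢ (-K)) ×ˢ Icc (0:ℝ) 1) := by
    rw [hDdef, Convex.convexHull_union hK hK.neg ⟨0, h0K⟩ ⟨0, by simpa using h0K⟩]
    ext x
    rw [mem_convexJoin]
    constructor
    · rintro ⟨a, ha, b, hb, hx⟩
      rw [segment_eq_image] at hx
      obtain ⟨θ, hθ, rfl⟩ := hx
      exact ⟨((a, b), θ), ⟨⟨ha, hb⟩, hθ⟩, rfl⟩
    · rintro ⟨⟨⟨a, b⟩, θ⟩, ⟨⟨ha, hb⟩, hθ⟩, rfl⟩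
      refine ⟨a, ha, b, hb, ?_⟩
      rw [segment_eq_image]
      exact ⟨θ, hθ, rfl⟩
  have hDc : IsCompact D := by
    rw [hDeq]
    refine ((hKc.prod hKc.neg).prod isCompact_Icc).image ?_
    exact ((continuous_const.sub continuous_snd).smul
      ((continuous_fst.comp continuous_fst))).add
      (continuous_snd.smul (continuous_snd.comp continuous_fst))
  have hgK : Continuous (gauge K) := continuous_gauge hK h0
  set S : Set ((EuclideanSpace ℝ (Fin n)) × (EuclideanSpace ℝ (Fin n))) :=
    {p | gauge K (p.1 + p.2) + gauge K p.2 ≤ 1} with hSdef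
  have hSm : MeasurableSet S := by
    apply IsClosed.measurableSet
    exact isClosed_le
      ((hgK.comp (continuous_fst.add continuous_snd)).add (hgK.comp continuous_snd))
      continuous_const
  have hind : ∀ (z w : EuclideanSpace ℝ (Fin n)),
      S.indicator (fun _ => (1:ℝ≥0∞)) (z, w)
        = {w | gauge K (z + w) + gauge K w ≤ 1}.indicator (fun _ => (1:ℝ≥0∞)) w := by
    intro z w
    simp only [Set.indicator_apply, hSdef, mem_setOf_eq]
  have hmz : ∀ z : EuclideanSpace ℝ (Fin n),
      MeasurableSet {w : EuclideanSpace ℝ (Fin n) | gauge K (z + w) + gauge K w ≤ 1} := by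
    intro z
    exact (isClosed_le ((hgK.comp (continuous_const.add continuous_id)).add hgK)
      continuous_const).measurableSet
  have inner1 : ∀ z : EuclideanSpace ℝ (Fin n),
      (∫⁻ w, S.indicator (fun _ => (1:ℝ≥0∞)) (z, w))
        = volume {w | gauge K (z + w) + gauge K w ≤ 1} := by
    intro z
    simp_rw [hind z]
    exact lintegral_indicator_one (hmz z)
  have swap : (∫⁻ z, ∫⁻ w, S.indicator (fun _ => (1:ℝ≥0∞)) (z, w))
      = ∫⁻ w, ∫⁻ z, S.indicator (fun _ => (1:ℝ≥0∞)) (z, w) :=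
    lintegral_lintegral_swap ((measurable_one.indicator hSm).aemeasurable)
  have eq1 : (∫⁻ w, ∫⁻ z, S.indicator (fun _ => (1:ℝ≥0∞)) (z, w))
      = cn n * volume K * volume K := by
    have hinw : ∀ w : EuclideanSpace ℝ (Fin n),
        (∫⁻ z, S.indicator (fun _ => (1:ℝ≥0∞)) (z, w))
          = ENNReal.ofReal (1 - gauge K w) ^ n * volume K := by
      intro w
      have hindz : ∀ z : EuclideanSpace ℝ (Fin n),
          S.indicator (fun _ => (1:ℝ≥0∞)) (z, w)
            = {z | gauge K (z + w) + gauge K w ≤ 1}.indicator (fun _ => (1:ℝ≥0∞)) z := by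
        intro z
        simp only [Set.indicator_apply, hSdef, mem_setOf_eq]
      have hmzz : MeasurableSet {z : EuclideanSpace ℝ (Fin n) |
          gauge K (z + w) + gauge K w ≤ 1} :=
        (isClosed_le ((hgK.comp (continuous_id.add continuous_const)).add
          continuous_const) continuous_const).measurableSet
      simp_rw [hindz]
      have hset : {z : EuclideanSpace ℝ (Fin n) | gauge K (z + w) + gauge K w ≤ 1}
          = (fun z => z + w) ⁻¹' {a | gauge K a ≤ 1 - gauge K w} := by
        ext z
        simp only [mem_setOf_eq, mem_preimage]
        constructor <;> intro h <;> linarith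
      calc (∫⁻ z, {z : EuclideanSpace ℝ (Fin n) |
              gauge K (z + w) + gauge K w ≤ 1}.indicator (fun _ => (1:ℝ≥0∞)) z)
          = volume {z : EuclideanSpace ℝ (Fin n) | gauge K (z + w) + gauge K w ≤ 1} :=
            lintegral_indicator_one hmzz
        _ = ENNReal.ofReal (1 - gauge K w) ^ n * volume K := by
            rw [hset, measure_preimage_add_right, meas_gauge_le hn hK hKc h0]
    simp_rw [hinw]
    rw [lintegral_mul_const _ (f := fun w => ENNReal.ofReal (1 - gauge K w) ^ n) ((measurable_const.sub hgK.measurable).ennreal_ofReal.pow_const n),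
      J_eq hn hK hKc h0]
  have low : ENNReal.ofReal 2⁻¹ ^ n * (cn n * volume D) * volume K
      ≤ ∫⁻ z, ∫⁻ w, S.indicator (fun _ => (1:ℝ≥0∞)) (z, w) := by
    have hgD : Continuous (gauge D) := continuous_gauge hDconv hD0
    have hpt : ∀ z : EuclideanSpace ℝ (Fin n),
        ENNReal.ofReal ((1 - gauge D z) / 2) ^ n * volume K
          ≤ ∫⁻ w, S.indicator (fun _ => (1:ℝ≥0∞)) (z, w) := by
      intro z
      rw [inner1 z]
      exact slice_lower hn hK hKc h0 z
    refine le_trans (le_of_eq ?_) (lintegral_mono hpt)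
    have hpw : ∀ z : EuclideanSpace ℝ (Fin n),
        ENNReal.ofReal ((1 - gauge D z) / 2) ^ n * volume K
          = ENNReal.ofReal 2⁻¹ ^ n * (ENNReal.ofReal (1 - gauge D z) ^ n * volume K) := by
      intro z
      rw [div_eq_inv_mul, ENNReal.ofReal_mul (by norm_num), mul_pow]
      ring
    simp_rw [hpw]
    rw [lintegral_const_mul _ (f := fun z => ENNReal.ofReal (1 - gauge D z) ^ n * volume K)
      (((measurable_const.sub hgD.measurable).ennreal_ofReal.pow_const n).mul_const _),
      lintegral_mul_const _ (f := fun z => ENNReal.ofReal (1 - gauge D z) ^ n) ((measurable_const.sub hgD.measurable).ennreal_ofReal.pow_const n),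
      J_eq hn hDconv hDc hD0]
    ring
  have chain : ENNReal.ofReal 2⁻¹ ^ n * (cn n * volume D) * volume K
      ≤ cn n * volume K * volume K := by
    calc ENNReal.ofReal 2⁻¹ ^ n * (cn n * volume D) * volume K
        ≤ ∫⁻ z, ∫⁻ w, S.indicator (fun _ => (1:ℝ≥0∞)) (z, w) := low
      _ = ∫⁻ w, ∫⁻ z, S.indicator (fun _ => (1:ℝ≥0∞)) (z, w) := swap
      _ = cn n * volume K * volume K := eq1
  have hvolK0 : volume K ≠ 0 := by
    have hi : (interior K).Nonempty := ⟨0, mem_interior_iff_mem_nhds.2 h0⟩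
    exact (Measure.measure_pos_of_nonempty_interior _ hi).ne'
  have hvolKtop : volume K ≠ ∞ := hKc.measure_lt_top.ne
  have hcn0 : cn n ≠ 0 := (cn_pos hn).ne'
  have hcntop : cn n ≠ ∞ := ((cn_le_one hn).trans_lt (by norm_num)).ne
  have hX : (2:ℝ≥0∞) ^ n * ENNReal.ofReal 2⁻¹ ^ n = 1 := by
    rw [ENNReal.ofReal_inv_of_pos (by norm_num), show ENNReal.ofReal 2 = 2 by norm_num,
      ← mul_pow, ENNReal.mul_inv_cancel (by norm_num) (by norm_num), one_pow]
  have chain2 : (cn n * volume K) * volume D ≤ (cn n * volume K) * (2 ^ n * volume K) := by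
    have step := mul_le_mul_right chain ((2:ℝ≥0∞) ^ n)
    have lhs_eq : (2:ℝ≥0∞) ^ n * (ENNReal.ofReal 2⁻¹ ^ n * (cn n * volume D) * volume K)
        = (cn n * volume K) * volume D := by
      rw [show (2:ℝ≥0∞) ^ n * (ENNReal.ofReal 2⁻¹ ^ n * (cn n * volume D) * volume K)
          = ((2:ℝ≥0∞) ^ n * ENNReal.ofReal 2⁻¹ ^ n) * ((cn n * volume K) * volume D) from by
        ring, hX, one_mul]
    have rhs_eq : (2:ℝ≥0∞) ^ n * (cn n * volume K * volume K)
        = (cn n * volume K) * (2 ^ n * volume K) := by ring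
    rw [lhs_eq, rhs_eq] at step
    exact step
  exact (ENNReal.mul_le_mul_iff_right (mul_ne_zero hcn0 hvolK0)
    (ENNReal.mul_ne_top hcntop hvolKtop)).1 chain2

end VolConvHullAux

theorem volume_convexHull_union_neg_le (n : ℕ) (K : Set (EuclideanSpace ℝ (Fin n)))
    (hK : Convex ℝ K) (hKc : IsCompact K) (hKi : (interior K).Nonempty)
    (h0 : (0 : EuclideanSpace ℝ (Fin n)) ∈ K) :
    volume (convexHull ℝ (K ∪ -K)) ≤ 2 ^ n * volume K := by
  rcases Nat.eq_zero_or_pos n with hn | hn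
  · subst hn
    have hKuniv : K = Set.univ := by
      apply Set.eq_univ_of_forall
      intro x
      have hx0 : x = 0 := by
        ext i
        exact Fin.elim0 i
      rwa [hx0]
    rw [pow_zero, one_mul, hKuniv]
    exact measure_mono (Set.subset_univ _)
  · have key : ∀ ε : ℝ, 0 < ε →
        volume (convexHull ℝ (K ∪ -K)) ≤ 2 ^ n * volume (Metric.cthickening ε K) := by
      intro ε hε
      set K' := K + Metric.closedBall (0 : EuclideanSpace ℝ (Fin n)) ε with hK'def
      have hK'conv : Convex ℝ K' := hK.add (convex_closedBall _ _)
      have hK'c : IsCompact K' := hKc.add (isCompact_closedBall _ _)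
      have hK'0 : K' ∈ 𝓝 (0 : EuclideanSpace ℝ (Fin n)) := by
        apply Filter.mem_of_superset (Metric.closedBall_mem_nhds (0 : EuclideanSpace ℝ (Fin n)) hε)
        intro x hx
        exact ⟨0, h0, x, hx, zero_add x⟩
      have hKK' : K ⊆ K' := fun x hx =>
        ⟨x, hx, 0, Metric.mem_closedBall_self hε.le, add_zero x⟩
      have hmono : convexHull ℝ (K ∪ -K) ⊆ convexHull ℝ (K' ∪ -K') :=
        convexHull_mono (Set.union_subset_union hKK' (Set.neg_subset_neg.2 hKK'))
      have hsub : K' ⊆ Metric.cthickening ε K := by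
        rintro w ⟨x, hx, b, hb, rfl⟩
        apply Metric.mem_cthickening_of_dist_le (x + b) x ε K hx
        have hbn : ‖b‖ ≤ ε := by simpa using hb
        calc dist (x + b) x = ‖b‖ := by
              rw [dist_eq_norm, add_sub_cancel_left]
          _ ≤ ε := hbn
      calc volume (convexHull ℝ (K ∪ -K))
          ≤ volume (convexHull ℝ (K' ∪ -K')) := measure_mono hmono
        _ ≤ 2 ^ n * volume K' := VolConvHullAux.main hn hK'conv hK'c hK'0
        _ ≤ 2 ^ n * volume (Metric.cthickening ε K) :=
            mul_le_mul_right (measure_mono hsub) _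
    have htend : Filter.Tendsto (fun ε : ℝ => (2:ℝ≥0∞) ^ n * volume (Metric.cthickening ε K))
        (nhdsWithin 0 (Set.Ioi 0)) (nhds ((2:ℝ≥0∞) ^ n * volume K)) := by
      apply ENNReal.Tendsto.const_mul
        ((tendsto_measure_cthickening_of_isCompact hKc).mono_left nhdsWithin_le_nhds)
      exact Or.inr (by simp)
    exact ge_of_tendsto htend
      (Filter.eventually_of_mem self_mem_nhdsWithin fun ε hε => key ε hε)
end

section
/- Let f, g : ℝ^n → [0,∞) be integrable log-concave functions and λ ∈ (0,1). Define the λ-difference function Δ(z) = sup over pairs (x,y) with (1-λ)x + λy = z of f(x/(1-λ))^(1-λ) · g(-y/λ)^λ. Then (∫ Δ) · (∫ f^λ g^(1-λ)) ≤ (∫ f) · (∫ g). -/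
open MeasureTheory
open scoped ENNReal Pointwise NNReal

private lemma lint_smul_aux {n : ℕ} (c : ℝ) (hc : c ≠ 0) (h : EuclideanSpace ℝ (Fin n) → ℝ≥0∞) :
    ∫⁻ x, h (c • x) = ENNReal.ofReal |(c ^ n)⁻¹| * ∫⁻ x, h x := by
  have h1 : ∫⁻ x, h x ∂(Measure.map (c • ·) volume) = ∫⁻ x, h (c • x) := by
    have := MeasureTheory.lintegral_map_equiv
      (μ := (volume : Measure (EuclideanSpace ℝ (Fin n)))) h (MeasurableEquiv.smul₀ c hc)
    simpa using this
  rw [← h1, Measure.map_addHaar_smul volume hc, lintegral_smul_measure,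
    finrank_euclideanSpace_fin, smul_eq_mul]

set_option maxHeartbeats 1000000 in
theorem lambda_difference_function_inequality (n : ℕ)
    (f g : EuclideanSpace ℝ (Fin n) → ℝ)
    (hf0 : ∀ x, 0 ≤ f x) (hg0 : ∀ x, 0 ≤ g x)
    (hflc : ∀ x y : EuclideanSpace ℝ (Fin n), ∀ t : ℝ, t ∈ Set.Icc (0:ℝ) 1 →
      f x ^ (1 - t) * f y ^ t ≤ f ((1 - t) • x + t • y))
    (hglc : ∀ x y : EuclideanSpace ℝ (Fin n), ∀ t : ℝ, t ∈ Set.Icc (0:ℝ) 1 →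
      g x ^ (1 - t) * g y ^ t ≤ g ((1 - t) • x + t • y))
    (hfi : Integrable f volume) (hgi : Integrable g volume)
    (l : ℝ) (hl : l ∈ Set.Ioo (0:ℝ) 1)
    (Δ : EuclideanSpace ℝ (Fin n) → ℝ)
    (hΔ : ∀ z, Δ z = ⨆ p : {p : EuclideanSpace ℝ (Fin n) × EuclideanSpace ℝ (Fin n) //
        (1 - l) • p.1 + l • p.2 = z},
      f ((1 - l)⁻¹ • p.1.1) ^ (1 - l) * g (-(l⁻¹ • p.1.2)) ^ l) :
    (∫⁻ z, ENNReal.ofReal (Δ z)) * (∫⁻ x, ENNReal.ofReal (f x ^ l * g x ^ (1 - l))) ≤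
      (∫⁻ x, ENNReal.ofReal (f x)) * (∫⁻ x, ENNReal.ofReal (g x)) := by
  obtain ⟨hl0, hl1⟩ := hl
  have hα : (0:ℝ) < 1 - l := by linarith
  set κ : ℝ := (1 - l) ^ 2 + l ^ 2 with hκdef
  have hκ : 0 < κ := by
    have h1 : 0 < (1 - l) ^ 2 := pow_pos hα 2
    have h2 : 0 ≤ l ^ 2 := sq_nonneg l
    rw [hκdef]; linarith
  set c₁ : ℝ := (1 - l) / κ with hc₁def
  set c₂ : ℝ := l / κ with hc₂def
  have hc₁ : 0 < c₁ := div_pos hα hκ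
  set e : ℝ := c₂ / c₁ with hedef
  set d : ℝ := (1 - l) + e * l with hddef
  have he : e = l / (1 - l) := by
    rw [hedef, hc₁def, hc₂def]
    field_simp
  have hd : 0 < d := by
    have : 0 < e * l := mul_pos (by rw [he]; positivity) hl0
    rw [hddef]; linarith
  have hcd : c₁ * d = 1 := by
    rw [hddef, he, hc₁def, hκdef]
    field_simp
  have hec : e * c₁ = c₂ := by
    rw [hedef]; field_simp
  -- the constant C
  set C : ℝ≥0∞ := ∫⁻ x, ENNReal.ofReal (f x ^ l * g x ^ (1 - l)) with hCdef
  -- canonical witness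
  have hCanon : ∀ z : EuclideanSpace ℝ (Fin n), (1 - l) • (c₁ • z) + l • (c₂ • z) = z := by
    intro z
    rw [smul_smul, smul_smul, ← add_smul]
    have h1 : (1 - l) * c₁ + l * c₂ = 1 := by
      rw [hc₁def, hc₂def, hκdef]
      field_simp
    rw [h1, one_smul]
  have hne : ∀ z : EuclideanSpace ℝ (Fin n), Nonempty {p : EuclideanSpace ℝ (Fin n) × EuclideanSpace ℝ (Fin n) // (1 - l) • p.1 + l • p.2 = z} :=
    fun z => ⟨⟨(c₁ • z, c₂ • z), hCanon z⟩⟩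
  -- K
  set K : EuclideanSpace ℝ (Fin n) → ℝ≥0∞ := fun z => ∫⁻ w, ENNReal.ofReal (f (c₁ • z + l • w)) *
      ENNReal.ofReal (g ((1 - l) • w - c₂ • z)) with hKdef
  -- key pointwise inequality
  have havekey : ∀ x y w : EuclideanSpace ℝ (Fin n),
      (f ((1 - l)⁻¹ • x) ^ (1 - l) * g (-(l⁻¹ • y)) ^ l) * (f w ^ l * g w ^ (1 - l)) ≤
        f (x + l • w) * g ((1 - l) • w - y) := by
    intro x y w
    have hmem : l ∈ Set.Icc (0:ℝ) 1 := ⟨hl0.le, hl1.le⟩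
    have h1 := hflc ((1 - l)⁻¹ • x) w l hmem
    have h2 := hglc w (-(l⁻¹ • y)) l hmem
    rw [show (1 - l) • ((1 - l)⁻¹ • x) + l • w = x + l • w by
      rw [smul_inv_smul₀ hα.ne']] at h1
    rw [show (1 - l) • w + l • -(l⁻¹ • y) = (1 - l) • w - y by
      rw [smul_neg, smul_inv_smul₀ hl0.ne', ← sub_eq_add_neg]] at h2
    calc (f ((1 - l)⁻¹ • x) ^ (1 - l) * g (-(l⁻¹ • y)) ^ l) * (f w ^ l * g w ^ (1 - l))
        = (f ((1 - l)⁻¹ • x) ^ (1 - l) * f w ^ l) * (g w ^ (1 - l) * g (-(l⁻¹ • y)) ^ l) := by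
          ring
      _ ≤ f (x + l • w) * g ((1 - l) • w - y) := by
          apply mul_le_mul h1 h2
          · exact mul_nonneg (Real.rpow_nonneg (hg0 _) _) (Real.rpow_nonneg (hg0 _) _)
          · exact hf0 _
  -- translation invariance (witness independence)
  have hTrans : ∀ x y x' y' : EuclideanSpace ℝ (Fin n), (1 - l) • x + l • y = (1 - l) • x' + l • y' →
      (∫⁻ w, ENNReal.ofReal (f (x + l • w)) * ENNReal.ofReal (g ((1 - l) • w - y)))
        = ∫⁻ w, ENNReal.ofReal (f (x' + l • w)) * ENNReal.ofReal (g ((1 - l) • w - y')) := by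
    intro x y x' y' hc
    set s : EuclideanSpace ℝ (Fin n) := l⁻¹ • (x - x') with hsdef
    have hs1 : l • s = x - x' := by rw [hsdef]; exact smul_inv_smul₀ hl0.ne' _
    have hdd : (1 - l) • (x - x') = l • (y' - y) := by
      rw [smul_sub, smul_sub, sub_eq_sub_iff_add_eq_add, hc]
      abel
    have hs2 : (1 - l) • s = y' - y := by
      rw [hsdef, smul_comm, hdd, inv_smul_smul₀ hl0.ne']
    calc (∫⁻ w, ENNReal.ofReal (f (x + l • w)) * ENNReal.ofReal (g ((1 - l) • w - y)))
        = ∫⁻ w, ENNReal.ofReal (f (x' + l • (w + s))) *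
            ENNReal.ofReal (g ((1 - l) • (w + s) - y')) := by
          apply lintegral_congr
          intro w
          have e1 : x' + l • (w + s) = x + l • w := by
            rw [smul_add, hs1]; abel
          have e2 : (1 - l) • (w + s) - y' = (1 - l) • w - y := by
            rw [smul_add, hs2]; abel
          rw [e1, e2]
      _ = ∫⁻ w, ENNReal.ofReal (f (x' + l • w)) * ENNReal.ofReal (g ((1 - l) • w - y')) :=
          lintegral_add_right_eq_self
            (fun w => ENNReal.ofReal (f (x' + l • w)) *
              ENNReal.ofReal (g ((1 - l) • w - y'))) s
  -- per-witness upper bound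
  have hUB : ∀ z : EuclideanSpace ℝ (Fin n), ∀ p : {p : EuclideanSpace ℝ (Fin n) × EuclideanSpace ℝ (Fin n) // (1 - l) • p.1 + l • p.2 = z},
      ENNReal.ofReal (f ((1 - l)⁻¹ • p.1.1) ^ (1 - l) * g (-(l⁻¹ • p.1.2)) ^ l) * C ≤ K z := by
    rintro z ⟨⟨x, y⟩, hp⟩
    have hvn : 0 ≤ f ((1 - l)⁻¹ • x) ^ (1 - l) * g (-(l⁻¹ • y)) ^ l :=
      mul_nonneg (Real.rpow_nonneg (hf0 _) _) (Real.rpow_nonneg (hg0 _) _)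
    calc ENNReal.ofReal (f ((1 - l)⁻¹ • x) ^ (1 - l) * g (-(l⁻¹ • y)) ^ l) * C
        = ∫⁻ w, ENNReal.ofReal (f ((1 - l)⁻¹ • x) ^ (1 - l) * g (-(l⁻¹ • y)) ^ l) *
            ENNReal.ofReal (f w ^ l * g w ^ (1 - l)) :=
          (lintegral_const_mul' _ _ ENNReal.ofReal_ne_top).symm
      _ ≤ ∫⁻ w, ENNReal.ofReal (f (x + l • w)) * ENNReal.ofReal (g ((1 - l) • w - y)) := by
          apply lintegral_mono
          intro w
          dsimp only
          rw [← ENNReal.ofReal_mul hvn, ← ENNReal.ofReal_mul (hf0 _)]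
          exact ENNReal.ofReal_le_ofReal (havekey x y w)
      _ = K z := hTrans x y (c₁ • z) (c₂ • z) (by rw [hp, hCanon z])
  -- Step A
  have hA : ∀ z : EuclideanSpace ℝ (Fin n), ENNReal.ofReal (Δ z) * C ≤ K z := by
    intro z
    rcases le_or_gt (Δ z) 0 with h | h
    · rw [ENNReal.ofReal_eq_zero.2 h, zero_mul]
      exact zero_le
    · haveI := hne z
      have hD : ENNReal.ofReal (Δ z) ≤
          ⨆ p : {p : EuclideanSpace ℝ (Fin n) × EuclideanSpace ℝ (Fin n) // (1 - l) • p.1 + l • p.2 = z},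
            ENNReal.ofReal (f ((1 - l)⁻¹ • p.1.1) ^ (1 - l) * g (-(l⁻¹ • p.1.2)) ^ l) := by
        apply ENNReal.le_of_forall_pos_le_add
        intro ε hε _
        have hlt : Δ z - (ε : ℝ) < ⨆ p : {p : EuclideanSpace ℝ (Fin n) × EuclideanSpace ℝ (Fin n) // (1 - l) • p.1 + l • p.2 = z},
            f ((1 - l)⁻¹ • p.1.1) ^ (1 - l) * g (-(l⁻¹ • p.1.2)) ^ l := by
          rw [← hΔ z]
          have : (0:ℝ) < ε := hε
          linarith
        obtain ⟨p, hp⟩ := exists_lt_of_lt_ciSup hlt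
        calc ENNReal.ofReal (Δ z)
            ≤ ENNReal.ofReal ((f ((1 - l)⁻¹ • p.1.1) ^ (1 - l) * g (-(l⁻¹ • p.1.2)) ^ l)
                + (ε : ℝ)) := ENNReal.ofReal_le_ofReal (by linarith)
          _ ≤ ENNReal.ofReal (f ((1 - l)⁻¹ • p.1.1) ^ (1 - l) * g (-(l⁻¹ • p.1.2)) ^ l)
                + ENNReal.ofReal (ε : ℝ) := ENNReal.ofReal_add_le
          _ ≤ (⨆ p : {p : EuclideanSpace ℝ (Fin n) × EuclideanSpace ℝ (Fin n) // (1 - l) • p.1 + l • p.2 = z},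
                ENNReal.ofReal (f ((1 - l)⁻¹ • p.1.1) ^ (1 - l) * g (-(l⁻¹ • p.1.2)) ^ l))
                + (ε : ℝ≥0∞) := by
              gcongr
              · exact le_iSup (fun p : {p : EuclideanSpace ℝ (Fin n) × EuclideanSpace ℝ (Fin n) // (1 - l) • p.1 + l • p.2 = z} =>
                  ENNReal.ofReal (f ((1 - l)⁻¹ • p.1.1) ^ (1 - l) *
                    g (-(l⁻¹ • p.1.2)) ^ l)) p
              · exact le_of_eq ENNReal.ofReal_coe_nnreal
      calc ENNReal.ofReal (Δ z) * C
          ≤ (⨆ p : {p : EuclideanSpace ℝ (Fin n) × EuclideanSpace ℝ (Fin n) // (1 - l) • p.1 + l • p.2 = z},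
              ENNReal.ofReal (f ((1 - l)⁻¹ • p.1.1) ^ (1 - l) * g (-(l⁻¹ • p.1.2)) ^ l)) * C :=
            mul_le_mul_left hD C
        _ = ⨆ p : {p : EuclideanSpace ℝ (Fin n) × EuclideanSpace ℝ (Fin n) // (1 - l) • p.1 + l • p.2 = z},
              ENNReal.ofReal (f ((1 - l)⁻¹ • p.1.1) ^ (1 - l) * g (-(l⁻¹ • p.1.2)) ^ l) * C :=
            ENNReal.iSup_mul _ _
        _ ≤ K z := iSup_le fun p => hUB z p
  -- measurable versions of f and g
  obtain ⟨f', hf'm, hff'⟩ : ∃ f' : EuclideanSpace ℝ (Fin n) → ℝ, Measurable f' ∧ f =ᵐ[volume] f' :=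
    ⟨(hfi.aemeasurable).mk f, (hfi.aemeasurable).measurable_mk, (hfi.aemeasurable).ae_eq_mk⟩
  obtain ⟨g', hg'm, hgg'⟩ : ∃ g' : EuclideanSpace ℝ (Fin n) → ℝ, Measurable g' ∧ g =ᵐ[volume] g' :=
    ⟨(hgi.aemeasurable).mk g, (hgi.aemeasurable).measurable_mk, (hgi.aemeasurable).ae_eq_mk⟩
  have hQMP : ∀ (c : ℝ), c ≠ 0 → ∀ z₀ : EuclideanSpace ℝ (Fin n),
      Measure.QuasiMeasurePreserving
        (fun w : EuclideanSpace ℝ (Fin n) => z₀ + c • w) volume volume := by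
    intro c hc z₀
    exact (measurePreserving_add_left volume z₀).quasiMeasurePreserving.comp
      (Measure.quasiMeasurePreserving_smul volume hc)
  have hKK : ∀ z : EuclideanSpace ℝ (Fin n), K z =
      ∫⁻ w, ENNReal.ofReal (f' (c₁ • z + l • w)) *
        ENNReal.ofReal (g' ((1 - l) • w - c₂ • z)) := by
    intro z
    apply lintegral_congr_ae
    have h1 := (hQMP l hl0.ne' (c₁ • z)).ae_eq_comp hff'
    have h2 := (hQMP (1 - l) hα.ne' (-(c₂ • z))).ae_eq_comp hgg'
    filter_upwards [h1, h2] with w e1 e2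
    simp only [Function.comp] at e1 e2
    have harg : (1 - l) • w - c₂ • z = -(c₂ • z) + (1 - l) • w := by abel
    rw [harg, e2, e1]
  -- finiteness
  have hGfin : (∫⁻ x, ENNReal.ofReal (g x)) ≠ ⊤ := by
    have h2 := hgi.2
    rw [HasFiniteIntegral] at h2
    refine ne_of_lt (lt_of_le_of_lt (lintegral_mono fun x => ?_) h2)
    exact ENNReal.ofReal_le_of_le_toReal (by simp [Real.norm_eq_abs, le_abs_self])
  have hIFeq : (∫⁻ x, ENNReal.ofReal (f' x)) = ∫⁻ x, ENNReal.ofReal (f x) :=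
    lintegral_congr_ae (hff'.mono fun x hx => by dsimp only; rw [hx])
  have hIGeq : (∫⁻ x, ENNReal.ofReal (g' x)) = ∫⁻ x, ENNReal.ofReal (g x) :=
    lintegral_congr_ae (hgg'.mono fun x hx => by dsimp only; rw [hx])
  have hG'fin : (∫⁻ x, ENNReal.ofReal (g' x)) ≠ ⊤ := by rw [hIGeq]; exact hGfin
  -- the big computation
  have hm1 : AEMeasurable (Function.uncurry fun (z w : EuclideanSpace ℝ (Fin n)) =>
      ENNReal.ofReal (f' (c₁ • z + l • w)) * ENNReal.ofReal (g' ((1 - l) • w - c₂ • z)))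
      (volume.prod volume) := by
    have : Measurable fun p : EuclideanSpace ℝ (Fin n) × EuclideanSpace ℝ (Fin n) =>
        ENNReal.ofReal (f' (c₁ • p.1 + l • p.2)) *
          ENNReal.ofReal (g' ((1 - l) • p.2 - c₂ • p.1)) := by fun_prop
    exact this.aemeasurable
  have hm2 : AEMeasurable (Function.uncurry fun (w y : EuclideanSpace ℝ (Fin n)) =>
      ENNReal.ofReal (f' y) * ENNReal.ofReal (g' (d • w - e • y)))
      (volume.prod volume) := by
    have : Measurable fun p : EuclideanSpace ℝ (Fin n) × EuclideanSpace ℝ (Fin n) =>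
        ENNReal.ofReal (f' p.2) * ENNReal.ofReal (g' (d • p.1 - e • p.2)) := by fun_prop
    exact this.aemeasurable
  have hbig : (∫⁻ z, K z) =
      (∫⁻ x, ENNReal.ofReal (f x)) * (∫⁻ x, ENNReal.ofReal (g x)) := by
    calc (∫⁻ z, K z)
        = ∫⁻ z, ∫⁻ w, ENNReal.ofReal (f' (c₁ • z + l • w)) *
            ENNReal.ofReal (g' ((1 - l) • w - c₂ • z)) := lintegral_congr hKK
      _ = ∫⁻ w, ∫⁻ z, ENNReal.ofReal (f' (c₁ • z + l • w)) *
            ENNReal.ofReal (g' ((1 - l) • w - c₂ • z)) := lintegral_lintegral_swap hm1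
      _ = ∫⁻ w, ENNReal.ofReal |(c₁ ^ n)⁻¹| *
            ∫⁻ y, ENNReal.ofReal (f' (y + l • w)) *
              ENNReal.ofReal (g' ((1 - l) • w - e • y)) := by
          apply lintegral_congr
          intro w
          have step : (∫⁻ z, ENNReal.ofReal (f' (c₁ • z + l • w)) *
              ENNReal.ofReal (g' ((1 - l) • w - c₂ • z)))
              = ∫⁻ z, (fun y => ENNReal.ofReal (f' (y + l • w)) *
                  ENNReal.ofReal (g' ((1 - l) • w - e • y))) (c₁ • z) := by
            apply lintegral_congr
            intro z
            have harg : e • (c₁ • z) = c₂ • z := by rw [smul_smul, hec]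
            simp only [harg]
          exact step.trans (lint_smul_aux c₁ hc₁.ne'
            (fun y => ENNReal.ofReal (f' (y + l • w)) *
              ENNReal.ofReal (g' ((1 - l) • w - e • y))))
      _ = ∫⁻ w, ENNReal.ofReal |(c₁ ^ n)⁻¹| *
            ∫⁻ y, ENNReal.ofReal (f' y) * ENNReal.ofReal (g' (d • w - e • y)) := by
          apply lintegral_congr
          intro w
          congr 1
          calc (∫⁻ y, ENNReal.ofReal (f' (y + l • w)) *
                ENNReal.ofReal (g' ((1 - l) • w - e • y)))
              = ∫⁻ y, ENNReal.ofReal (f' (y + l • w)) *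
                  ENNReal.ofReal (g' (d • w - e • (y + l • w))) := by
                apply lintegral_congr
                intro y
                have harg : d • w - e • (y + l • w) = (1 - l) • w - e • y := by
                  have hdw : d • w = (1 - l) • w + (e * l) • w := by
                    rw [← add_smul, ← hddef]
                  rw [smul_add, smul_smul, hdw]
                  abel
                rw [harg]
            _ = ∫⁻ y, ENNReal.ofReal (f' y) * ENNReal.ofReal (g' (d • w - e • y)) :=
                lintegral_add_right_eq_self (fun y => ENNReal.ofReal (f' y) *
                  ENNReal.ofReal (g' (d • w - e • y))) (l • w)
      _ = ENNReal.ofReal |(c₁ ^ n)⁻¹| *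
            ∫⁻ w, ∫⁻ y, ENNReal.ofReal (f' y) * ENNReal.ofReal (g' (d • w - e • y)) :=
          lintegral_const_mul' _ _ ENNReal.ofReal_ne_top
      _ = ENNReal.ofReal |(c₁ ^ n)⁻¹| *
            ∫⁻ y, ∫⁻ w, ENNReal.ofReal (f' y) * ENNReal.ofReal (g' (d • w - e • y)) := by
          rw [lintegral_lintegral_swap hm2]
      _ = ENNReal.ofReal |(c₁ ^ n)⁻¹| *
            ∫⁻ y, ENNReal.ofReal (f' y) *
              (ENNReal.ofReal |(d ^ n)⁻¹| * ∫⁻ x, ENNReal.ofReal (g' x)) := by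
          congr 1
          apply lintegral_congr
          intro y
          rw [lintegral_const_mul' _ _ ENNReal.ofReal_ne_top]
          congr 1
          have sub1 : (∫⁻ w, ENNReal.ofReal (g' (d • w - e • y)))
              = ENNReal.ofReal |(d ^ n)⁻¹| * ∫⁻ x, ENNReal.ofReal (g' (x - e • y)) :=
            lint_smul_aux d hd.ne' (fun x => ENNReal.ofReal (g' (x - e • y)))
          have sub2 : (∫⁻ x, ENNReal.ofReal (g' (x - e • y)))
              = ∫⁻ x, ENNReal.ofReal (g' x) := by
            have step2 := lintegral_add_right_eq_self (μ := volume)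
              (fun x => ENNReal.ofReal (g' x)) (-(e • y))
            rw [← step2]
            apply lintegral_congr
            intro x
            rw [sub_eq_add_neg]
          rw [sub1, sub2]
      _ = ENNReal.ofReal |(c₁ ^ n)⁻¹| *
            ((∫⁻ y, ENNReal.ofReal (f' y)) *
              (ENNReal.ofReal |(d ^ n)⁻¹| * ∫⁻ x, ENNReal.ofReal (g' x))) := by
          rw [lintegral_mul_const' _ _
            (ENNReal.mul_ne_top ENNReal.ofReal_ne_top hG'fin)]
      _ = (ENNReal.ofReal |(c₁ ^ n)⁻¹| * ENNReal.ofReal |(d ^ n)⁻¹|) *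
            ((∫⁻ y, ENNReal.ofReal (f' y)) * ∫⁻ x, ENNReal.ofReal (g' x)) := by ring
      _ = (∫⁻ x, ENNReal.ofReal (f x)) * (∫⁻ x, ENNReal.ofReal (g x)) := by
          rw [← ENNReal.ofReal_mul (abs_nonneg _), ← abs_mul, ← mul_inv, ← mul_pow, hcd,
            one_pow, inv_one, abs_one, ENNReal.ofReal_one, one_mul, hIFeq, hIGeq]
  calc (∫⁻ z, ENNReal.ofReal (Δ z)) * C
      = C * ∫⁻ z, ENNReal.ofReal (Δ z) := mul_comm _ _
    _ ≤ ∫⁻ z, C * ENNReal.ofReal (Δ z) := lintegral_const_mul_le C _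
    _ = ∫⁻ z, ENNReal.ofReal (Δ z) * C := lintegral_congr fun z => mul_comm _ _
    _ ≤ ∫⁻ z, K z := lintegral_mono hA
    _ = (∫⁻ x, ENNReal.ofReal (f x)) * (∫⁻ x, ENNReal.ofReal (g x)) := hbig
end

section
/- For convex bodies K, L in ℝ^n containing the origin in their interiors: Vol(conv(K ∪ (-L))) · Vol((K° + L°)°) ≤ Vol(K) · Vol(L). -/
open MeasureTheory Set
open scoped ENNReal Pointwise RealInnerProductSpace

noncomputable section

namespace RSproof

set_option linter.unusedSectionVars false

variable {E : Type*} [NormedAddCommGroup E] [InnerProductSpace ℝ E]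
  [FiniteDimensional ℝ E] [MeasurableSpace E] [BorelSpace E]


variable {E : Type*} [NormedAddCommGroup E] [InnerProductSpace ℝ E]
  [FiniteDimensional ℝ E] [MeasurableSpace E] [BorelSpace E]

/-- The universal constant `∫₀¹ (-log t)^(dim) dt` as an `ℝ≥0∞`-valued integral. -/
def layerConst (n : ℕ) : ℝ≥0∞ :=
  ∫⁻ t in Set.Ioo (0:ℝ) 1, ENNReal.ofReal ((-Real.log t) ^ n)

theorem lintegral_exp_neg_homog (μ : Measure E) [μ.IsAddHaarMeasure]
    (N : E → ℝ) (S : Set E) (hcont : Continuous N) (hnn : ∀ x, 0 ≤ N x)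
    (hhom : ∀ t : ℝ, 0 < t → ∀ x, N (t • x) = t * N x)
    (hlt : μ {x | N x < 1} = μ S) :
    ∫⁻ x, ENNReal.ofReal (Real.exp (-N x)) ∂μ = layerConst (Module.finrank ℝ E) * μ S := by
  have hmeas : AEMeasurable N μ := hcont.aemeasurable
  rw [MeasureTheory.lintegral_eq_lintegral_meas_lt (f := fun x => Real.exp (-N x)) μ
    (ae_of_all _ fun x => (Real.exp_pos _).le)
    ((Real.continuous_exp.comp hcont.neg).aemeasurable)]
  -- the distribution function
  have hset : ∀ t : ℝ, 0 < t → {a | t < Real.exp (-N a)} = {a | N a < -Real.log t} := by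
    intro t ht
    ext a
    simp only [mem_setOf_eq]
    rw [← Real.log_lt_iff_lt_exp ht, lt_neg]
  have hsmul : ∀ s : ℝ, 0 < s → {x | N x < s} = s • {x | N x < 1} := by
    intro s hs
    ext x
    rw [mem_smul_set_iff_inv_smul_mem₀ (ne_of_gt hs)]
    simp only [mem_setOf_eq, hhom s⁻¹ (by positivity) x]
    rw [inv_mul_lt_iff₀ hs, mul_one]
  have hdist : ∀ t : ℝ, t ∈ Set.Ioo (0:ℝ) 1 →
      μ {a | t < Real.exp (-N a)}
        = ENNReal.ofReal ((-Real.log t) ^ Module.finrank ℝ E) * μ S := by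
    intro t ht
    have hlog : 0 < -Real.log t := by
      have := Real.log_neg ht.1 ht.2
      linarith
    rw [hset t ht.1, hsmul _ hlog, Measure.addHaar_smul, hlt,
      abs_of_nonneg (by positivity), ENNReal.ofReal_pow hlog.le]
  have hzero : ∀ t : ℝ, t ∈ Set.Ici (1:ℝ) → μ {a | t < Real.exp (-N a)} = 0 := by
    intro t ht
    have : {a | t < Real.exp (-N a)} = (∅ : Set E) := by
      ext a
      simp only [mem_setOf_eq, mem_empty_iff_false, iff_false, not_lt]
      calc Real.exp (-N a) ≤ 1 := by
            rw [Real.exp_le_one_iff]; linarith [hnn a]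
        _ ≤ t := ht
    rw [this, measure_empty]
  have hsplit : Set.Ioi (0:ℝ) = Set.Ioo 0 1 ∪ Set.Ici 1 := (Set.Ioo_union_Ici_eq_Ioi one_pos).symm
  rw [hsplit, lintegral_union measurableSet_Ici
    (Set.disjoint_left.2 fun x hx h2 => absurd h2 (not_le.2 hx.2))]
  · rw [setLIntegral_congr_fun measurableSet_Ici hzero, lintegral_zero, add_zero]
    rw [setLIntegral_congr_fun measurableSet_Ioo hdist]
    rw [layerConst, ← lintegral_mul_const]
    exact ((Real.measurable_log.neg.pow_const _).ennreal_ofReal)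




theorem layerConst_pos (n : ℕ) : 0 < layerConst n := by
  have h1 : ∀ t ∈ Set.Ioo (0:ℝ) (Real.exp (-1)), (1:ℝ≥0∞) ≤ ENNReal.ofReal ((-Real.log t) ^ n) := by
    intro t ht
    have hlog : 1 ≤ -Real.log t := by
      have h2 : Real.log t < -1 := by
        calc Real.log t < Real.log (Real.exp (-1)) :=
              Real.log_lt_log ht.1 ht.2
          _ = -1 := Real.log_exp _
      linarith
    have : (1:ℝ) ≤ (-Real.log t) ^ n := one_le_pow₀ hlog
    rw [← ENNReal.ofReal_one]
    exact ENNReal.ofReal_le_ofReal this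
  have hsub : Set.Ioo (0:ℝ) (Real.exp (-1)) ⊆ Set.Ioo (0:ℝ) 1 := by
    intro x hx
    exact ⟨hx.1, hx.2.trans_le (Real.exp_le_one_iff.2 (by norm_num))⟩
  calc (0:ℝ≥0∞) < ENNReal.ofReal (Real.exp (-1)) := by
        simp [Real.exp_pos]
    _ = ∫⁻ _ in Set.Ioo (0:ℝ) (Real.exp (-1)), 1 := by
        rw [setLIntegral_one, Real.volume_Ioo, sub_zero]
    _ ≤ ∫⁻ t in Set.Ioo (0:ℝ) (Real.exp (-1)), ENNReal.ofReal ((-Real.log t) ^ n) :=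
        setLIntegral_mono' measurableSet_Ioo h1
    _ ≤ layerConst n := lintegral_mono_set hsub

theorem layerConst_lt_top (n : ℕ) : layerConst n < ⊤ := by
  -- bound (-log t)^n ≤ ((n+1) * t^(-1/(n+1)))^n  and use integrability of rpow
  set p : ℝ := (-(n : ℝ)) / (n + 1) with hp
  have hbound : ∀ t ∈ Set.Ioo (0:ℝ) 1,
      (-Real.log t) ^ n ≤ ((n:ℝ) + 1) ^ n * t ^ p := by
    intro t ht
    have ht0 : (0:ℝ) < t := ht.1
    have hlog : -Real.log t = Real.log t⁻¹ := by rw [Real.log_inv]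
    have hkey : Real.log t⁻¹ ≤ ((n:ℝ) + 1) * (t⁻¹) ^ ((1:ℝ)/(n+1)) := by
      have h1 : Real.log ((t⁻¹) ^ ((1:ℝ)/(n+1))) = (1/((n:ℝ)+1)) * Real.log t⁻¹ :=
        Real.log_rpow (by positivity) _
      have h2 : Real.log ((t⁻¹) ^ ((1:ℝ)/(n+1))) ≤ (t⁻¹) ^ ((1:ℝ)/(n+1)) := by
        calc Real.log ((t⁻¹) ^ ((1:ℝ)/(n+1))) ≤ (t⁻¹) ^ ((1:ℝ)/(n+1)) - 1 :=
              Real.log_le_sub_one_of_pos (by positivity)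
          _ ≤ (t⁻¹) ^ ((1:ℝ)/(n+1)) := by linarith
      have hn1 : (0:ℝ) < (n:ℝ) + 1 := by positivity
      calc Real.log t⁻¹ = ((n:ℝ)+1) * ((1/((n:ℝ)+1)) * Real.log t⁻¹) := by
            field_simp
        _ = ((n:ℝ)+1) * Real.log ((t⁻¹) ^ ((1:ℝ)/(n+1))) := by rw [h1]
        _ ≤ ((n:ℝ)+1) * (t⁻¹) ^ ((1:ℝ)/(n+1)) := by
            exact mul_le_mul_of_nonneg_left h2 hn1.le
    have hlogpos : 0 ≤ -Real.log t := by
      have := Real.log_nonpos ht.1.le ht.2.le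
      linarith
    calc (-Real.log t) ^ n ≤ (((n:ℝ)+1) * (t⁻¹) ^ ((1:ℝ)/(n+1))) ^ n := by
          apply pow_le_pow_left₀ hlogpos
          rw [hlog]; exact hkey
      _ = ((n:ℝ) + 1) ^ n * ((t⁻¹) ^ ((1:ℝ)/(n+1))) ^ n := mul_pow _ _ _
      _ = ((n:ℝ) + 1) ^ n * t ^ p := by
          congr 1
          rw [← Real.rpow_natCast ((t⁻¹) ^ ((1:ℝ)/(n+1))) n, ← Real.rpow_mul (by positivity),
            Real.inv_rpow ht.1.le, ← Real.rpow_neg ht.1.le]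
          congr 1
          field_simp [hp]
          rw [hp]; have : (n:ℝ) + 1 ≠ 0 := by positivity
          field_simp
  have hint : IntegrableOn (fun t : ℝ => ((n:ℝ) + 1) ^ n * t ^ p) (Set.Ioo 0 1) := by
    have h0 : IntervalIntegrable (fun t : ℝ => t ^ p) volume 0 1 := by
      apply intervalIntegral.intervalIntegrable_rpow'
      rw [hp]
      rw [neg_div, neg_lt_neg_iff]
      rw [div_lt_one (by positivity)]
      norm_num
    have h1 : IntegrableOn (fun t : ℝ => t ^ p) (Set.Ioc 0 1) := by
      have := h0.1
      simpa using this
    exact (h1.mono_set Set.Ioo_subset_Ioc_self).const_mul _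
  calc layerConst n ≤ ∫⁻ t in Set.Ioo (0:ℝ) 1, ENNReal.ofReal (((n:ℝ) + 1) ^ n * t ^ p) :=
        setLIntegral_mono' measurableSet_Ioo fun t ht => ENNReal.ofReal_le_ofReal (hbound t ht)
    _ < ⊤ := by
        have hae : 0 ≤ᵐ[volume.restrict (Set.Ioo (0:ℝ) 1)]
            fun t : ℝ => ((n:ℝ) + 1) ^ n * t ^ p :=
          (ae_restrict_iff' measurableSet_Ioo).2 (ae_of_all _ fun t ht =>
            mul_nonneg (by positivity) (Real.rpow_nonneg ht.1.le _))
        exact (hasFiniteIntegral_iff_ofReal hae).1 hint.2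




theorem measure_interior_eq (μ : Measure E) [μ.IsAddHaarMeasure] {S : Set E}
    (hconv : Convex ℝ S) : μ (interior S) = μ S := by
  apply le_antisymm (measure_mono interior_subset)
  calc μ S ≤ μ (interior S ∪ frontier S) := by
        apply measure_mono
        intro x hx
        have : x ∈ closure S := subset_closure hx
        rwa [← closure_eq_interior_union_frontier]
    _ ≤ μ (interior S) + μ (frontier S) := measure_union_le _ _
    _ = μ (interior S) := by rw [hconv.addHaar_frontier μ, add_zero]

theorem measure_gauge_lt_one (μ : Measure E) [μ.IsAddHaarMeasure] {S : Set E}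
    (hconv : Convex ℝ S) (h0 : S ∈ nhds 0) : μ {x | gauge S x < 1} = μ S := by
  rw [gauge_lt_one_eq_interior hconv h0]
  exact measure_interior_eq μ hconv

/-- Decomposition of a point according to the convex hull of `K ∪ -L`. -/
theorem exists_decomp {K L : Set E} (hK : Convex ℝ K) (hL : Convex ℝ L)
    (hKne : K.Nonempty) (hLne : L.Nonempty)
    (habsC : Absorbent ℝ (convexHull ℝ (K ∪ -L))) {z : E} {t : ℝ}
    (ht : gauge (convexHull ℝ (K ∪ -L)) z < t) :
    ∃ u w : E, z = u - w ∧ gauge K u + gauge L w ≤ t := by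
  obtain ⟨b, hb0, hbt, hzb⟩ := exists_lt_of_gauge_lt habsC ht
  obtain ⟨c, hc, rfl⟩ := hzb
  have hCeq : convexHull ℝ (K ∪ -L) = convexJoin ℝ K (-L) :=
    hK.convexHull_union hL.neg hKne hLne.neg
  rw [hCeq, mem_convexJoin] at hc
  obtain ⟨x, hx, y', hy', hseg⟩ := hc
  obtain ⟨p, q, hp, hq, hpq, rfl⟩ := hseg
  refine ⟨(b * p) • x, (b * q) • (-y'), ?_, ?_⟩
  · show b • (p • x + q • y') = _
    rw [smul_add, smul_smul, smul_smul, smul_neg, sub_neg_eq_add]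
  · have h1 : gauge K ((b * p) • x) ≤ b * p :=
      gauge_le_of_mem (by positivity) (smul_mem_smul_set hx)
    have h2 : gauge L ((b * q) • (-y')) ≤ b * q := by
      apply gauge_le_of_mem (by positivity)
      exact smul_mem_smul_set (by rwa [← Set.mem_neg])
    calc gauge K ((b * p) • x) + gauge L ((b * q) • (-y')) ≤ b * p + b * q := by
          exact add_le_add h1 h2
      _ = b := by rw [← mul_add, hpq, mul_one]
      _ ≤ t := hbt.le

/-- limit helper in `ℝ≥0∞`. -/
theorem le_of_forall_exp_gt {A B : ℝ≥0∞} {g : ℝ}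
    (h : ∀ t : ℝ, g < t → ENNReal.ofReal (Real.exp (-t)) * B ≤ A) :
    ENNReal.ofReal (Real.exp (-g)) * B ≤ A := by
  rcases eq_or_ne B ⊤ with rfl | hB
  · -- B = ⊤ : then from any single t we get A = ⊤ unless coefficient zero; but exp > 0
    have h1 := h (g + 1) (by linarith)
    have h2 : ENNReal.ofReal (Real.exp (-(g + 1))) * ⊤ = ⊤ := by
      rw [ENNReal.mul_top]
      simp [Real.exp_pos]
    rw [h2] at h1
    exact le_trans le_top h1
  · have htend : Filter.Tendsto (fun t : ℝ => ENNReal.ofReal (Real.exp (-t)) * B)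
        (nhdsWithin g (Set.Ioi g)) (nhds (ENNReal.ofReal (Real.exp (-g)) * B)) := by
      apply Filter.Tendsto.mono_left _ nhdsWithin_le_nhds
      apply ENNReal.Tendsto.mul_const
      · exact (ENNReal.continuous_ofReal.tendsto _).comp
          ((Real.continuous_exp.tendsto _).comp (continuous_neg.tendsto _))
      · exact Or.inr hB
    refine le_of_tendsto htend ?_
    filter_upwards [self_mem_nhdsWithin] with t ht
    exact h t ht






/-- Any element of the polar set tests below the gauge. -/
theorem inner_le_gauge_of_mem_polar {K : Set E} (habs : Absorbent ℝ K)
    {y : E} (hy : ∀ x ∈ K, ⟪x, y⟫ ≤ 1) (z : E) : ⟪y, z⟫ ≤ gauge K z := by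
  by_contra hcon
  push_neg at hcon
  obtain ⟨b, hb0, hba, hzb⟩ := exists_lt_of_gauge_lt habs hcon
  obtain ⟨x, hx, rfl⟩ := hzb
  have h1 : ⟪y, b • x⟫ = b * ⟪x, y⟫ := by
    rw [real_inner_smul_right, real_inner_comm]
  have h2 : b * ⟪x, y⟫ ≤ b := by
    nlinarith [hy x hx]
  have h3 : gauge K (b • x) ≤ b := gauge_le_of_mem hb0.le (smul_mem_smul_set hx)
  nlinarith
/-- Approximate attainment of the gauge by polar elements (separation). -/
theorem exists_polar_inner_ge {K : Set E} (hKconv : Convex ℝ K) (hKcomp : IsCompact K)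
    (hK0 : K ∈ nhds (0 : E)) (z : E) (ε : ℝ) (hε : 0 < ε) :
    ∃ y : E, (∀ x ∈ K, ⟪x, y⟫ ≤ 1) ∧ gauge K z - ε ≤ ⟪y, z⟫ := by
  rcases le_or_gt (gauge K z - ε) 0 with h | h
  · refine ⟨0, fun x _ => by simp, ?_⟩
    rw [inner_zero_left]
    exact h
  · set s' : ℝ := gauge K z - ε with hs'
    have hs'0 : 0 < s' := h
    have hs'lt : s' < gauge K z := by rw [hs']; linarith
    have hzout : z ∉ s' • K := by
      intro hmem
      exact absurd (gauge_le_of_mem hs'0.le hmem) (not_le.2 hs'lt)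
    have hclosed : IsClosed (s' • K) := (hKcomp.smul s').isClosed
    have hconv' : Convex ℝ (s' • K) := hKconv.smul s'
    obtain ⟨f, u, hfs, hfz⟩ := geometric_hahn_banach_closed_point hconv' hclosed hzout
    set y₀ : E := (InnerProductSpace.toDual ℝ E).symm f with hy₀
    have hy₀app : ∀ w : E, ⟪y₀, w⟫ = f w := fun w => InnerProductSpace.toDual_symm_apply
    have hu0 : 0 < u := by
      have h0mem : (0 : E) ∈ s' • K := by
        have : (0 : E) ∈ K := mem_of_mem_nhds hK0
        simpa using smul_mem_smul_set (a := s') this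
      have := hfs 0 h0mem
      simpa using this
    refine ⟨(s' / u) • y₀, ?_, ?_⟩
    · intro x hx
      have hfx : s' * f x < u := by
        have := hfs (s' • x) (smul_mem_smul_set hx)
        rwa [_root_.map_smul, smul_eq_mul] at this
      have : ⟪x, (s' / u) • y₀⟫ = (s' / u) * f x := by
        rw [real_inner_smul_right, real_inner_comm, hy₀app]
      rw [this]
      rw [div_mul_eq_mul_div, div_le_one hu0]
      linarith
    · have : ⟪(s' / u) • y₀, z⟫ = (s' / u) * f z := by
        rw [real_inner_smul_left, hy₀app]
      rw [this]
      have h1 : s' / u * u ≤ s' / u * f z :=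
        mul_le_mul_of_nonneg_left hfz.le (by positivity)
      calc gauge K z - ε = s' / u * u := by rw [← hs']; field_simp
        _ ≤ s' / u * f z := h1

/-- The polar of `K° + L°` is the unit ball of `gauge K + gauge L`. -/
theorem polar_sum_eq {K L : Set E}
    (hKconv : Convex ℝ K) (hKcomp : IsCompact K) (hK0 : K ∈ nhds (0 : E))
    (hLconv : Convex ℝ L) (hLcomp : IsCompact L) (hL0 : L ∈ nhds (0 : E)) :
    {z : E | ∀ y ∈ ({u | ∀ x ∈ K, ⟪x, u⟫ ≤ 1} + {u | ∀ x ∈ L, ⟪x, u⟫ ≤ 1} : Set E),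
        ⟪y, z⟫ ≤ 1}
      = {z : E | gauge K z + gauge L z ≤ 1} := by
  have habsK : Absorbent ℝ K := absorbent_nhds_zero hK0
  have habsL : Absorbent ℝ L := absorbent_nhds_zero hL0
  ext z
  simp only [mem_setOf_eq]
  constructor
  · intro hz
    have key : ∀ ε : ℝ, 0 < ε → gauge K z + gauge L z ≤ 1 + (ε + ε) := by
      intro ε hε
      obtain ⟨y₁, hy₁, hy₁z⟩ := exists_polar_inner_ge hKconv hKcomp hK0 z ε hε
      obtain ⟨y₂, hy₂, hy₂z⟩ := exists_polar_inner_ge hLconv hLcomp hL0 z ε hε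
      have hmem : y₁ + y₂ ∈
          ({u | ∀ x ∈ K, ⟪x, u⟫ ≤ 1} + {u | ∀ x ∈ L, ⟪x, u⟫ ≤ 1} : Set E) :=
        Set.add_mem_add hy₁ hy₂
      have := hz _ hmem
      rw [inner_add_left] at this
      linarith
    by_contra hcon
    push_neg at hcon
    have hδ : 0 < (gauge K z + gauge L z - 1) / 3 := by linarith
    have := key _ hδ
    linarith
  · intro hz y hy
    obtain ⟨y₁, hy₁, y₂, hy₂, rfl⟩ := hy
    have h1 : ⟪y₁, z⟫ ≤ gauge K z := inner_le_gauge_of_mem_polar habsK hy₁ z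
    have h2 : ⟪y₂, z⟫ ≤ gauge L z := inner_le_gauge_of_mem_polar habsL hy₂ z
    rw [inner_add_left]
    linarith






variable [SecondCountableTopology E]


theorem main_ineq (μ : Measure E) [μ.IsAddHaarMeasure] {K L : Set E}
    (hKconv : Convex ℝ K) (hKcomp : IsCompact K) (hKi : (0:E) ∈ interior K)
    (hLconv : Convex ℝ L) (hLcomp : IsCompact L) (hLi : (0:E) ∈ interior L) :
    μ (convexHull ℝ (K ∪ -L)) *
      μ {z : E | ∀ y ∈ ({u | ∀ x ∈ K, ⟪x, u⟫ ≤ 1} + {u | ∀ x ∈ L, ⟪x, u⟫ ≤ 1} : Set E),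
          ⟪y, z⟫ ≤ 1}
      ≤ μ K * μ L := by
  have hK0 : K ∈ nhds (0:E) := mem_interior_iff_mem_nhds.1 hKi
  have hL0 : L ∈ nhds (0:E) := mem_interior_iff_mem_nhds.1 hLi
  have habsK : Absorbent ℝ K := absorbent_nhds_zero hK0
  have habsL : Absorbent ℝ L := absorbent_nhds_zero hL0
  have hKne : K.Nonempty := ⟨0, interior_subset hKi⟩
  have hLne : L.Nonempty := ⟨0, interior_subset hLi⟩
  set C : Set E := convexHull ℝ (K ∪ -L) with hCdef
  have hCconv : Convex ℝ C := convex_convexHull ℝ _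
  have hKC : K ⊆ C := (Set.subset_union_left).trans (subset_convexHull ℝ _)
  have hC0 : C ∈ nhds (0:E) := Filter.mem_of_superset hK0 hKC
  have habsC : Absorbent ℝ C := absorbent_nhds_zero hC0
  rw [polar_sum_eq hKconv hKcomp hK0 hLconv hLcomp hL0]
  set P : Set E := {z : E | gauge K z + gauge L z ≤ 1} with hPdef
  -- continuity of gauges
  have hcontK : Continuous (gauge K) := continuous_gauge hKconv hK0
  have hcontL : Continuous (gauge L) := continuous_gauge hLconv hL0
  have hcontC : Continuous (gauge C) := continuous_gauge hCconv hC0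
  -- the four basic integrals
  set c : ℝ≥0∞ := layerConst (Module.finrank ℝ E) with hcdef
  have hIK : ∫⁻ x, ENNReal.ofReal (Real.exp (-(gauge K x))) ∂μ = c * μ K :=
    lintegral_exp_neg_homog μ (gauge K) K hcontK gauge_nonneg
      (fun t ht x => gauge_smul_of_nonneg ht.le x)
      (measure_gauge_lt_one μ hKconv hK0)
  have hIL : ∫⁻ x, ENNReal.ofReal (Real.exp (-(gauge L x))) ∂μ = c * μ L :=
    lintegral_exp_neg_homog μ (gauge L) L hcontL gauge_nonneg
      (fun t ht x => gauge_smul_of_nonneg ht.le x)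
      (measure_gauge_lt_one μ hLconv hL0)
  have hIC : ∫⁻ x, ENNReal.ofReal (Real.exp (-(gauge C x))) ∂μ = c * μ C :=
    lintegral_exp_neg_homog μ (gauge C) C hcontC gauge_nonneg
      (fun t ht x => gauge_smul_of_nonneg ht.le x)
      (measure_gauge_lt_one μ hCconv hC0)
  -- the P-body
  have hPconv : Convex ℝ P := by
    intro x hx y hy a b ha hb hab
    simp only [hPdef, mem_setOf_eq] at hx hy ⊢
    have h1 : gauge K (a • x + b • y) ≤ a * gauge K x + b * gauge K y := by
      calc gauge K (a • x + b • y) ≤ gauge K (a • x) + gauge K (b • y) :=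
            gauge_add_le hKconv habsK _ _
        _ = a * gauge K x + b * gauge K y := by
            rw [gauge_smul_of_nonneg ha, gauge_smul_of_nonneg hb, smul_eq_mul, smul_eq_mul]
    have h2 : gauge L (a • x + b • y) ≤ a * gauge L x + b * gauge L y := by
      calc gauge L (a • x + b • y) ≤ gauge L (a • x) + gauge L (b • y) :=
            gauge_add_le hLconv habsL _ _
        _ = a * gauge L x + b * gauge L y := by
            rw [gauge_smul_of_nonneg ha, gauge_smul_of_nonneg hb, smul_eq_mul, smul_eq_mul]
    nlinarith [hx, hy]
  have hPlt : μ {z : E | gauge K z + gauge L z < 1} = μ P := by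
    apply le_antisymm
    · apply measure_mono
      intro z hz
      show gauge K z + gauge L z ≤ 1
      exact le_of_lt hz
    · have hsub : P ⊆ {z : E | gauge K z + gauge L z < 1} ∪ frontier P := by
        intro x hx
        by_cases hxint : x ∈ interior P
        · left
          -- scaling argument
          have hnb : P ∈ nhds x := mem_interior_iff_mem_nhds.1 hxint
          have hcont' : ContinuousAt (fun ct : ℝ => ct • x) 1 :=
            (continuous_id.smul continuous_const).continuousAt
          have hpre : (fun ct : ℝ => ct • x) ⁻¹' P ∈ nhds (1:ℝ) := by
            apply hcont'.preimage_mem_nhds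
            simpa using hnb
          obtain ⟨δ, hδ0, hδ⟩ := Metric.mem_nhds_iff.1 hpre
          have hcball : (1 + δ/2 : ℝ) ∈ Metric.ball (1:ℝ) δ := by
            simp only [Metric.mem_ball, Real.dist_eq]
            rw [add_sub_cancel_left, abs_of_pos (by linarith)]
            linarith
          have hcP : (1 + δ/2 : ℝ) • x ∈ P := hδ hcball
          simp only [hPdef, mem_setOf_eq] at hcP ⊢
          rw [gauge_smul_of_nonneg (by linarith : (0:ℝ) ≤ 1 + δ/2),
            gauge_smul_of_nonneg (by linarith : (0:ℝ) ≤ 1 + δ/2), smul_eq_mul,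
            smul_eq_mul] at hcP
          by_contra hcon
          push_neg at hcon
          nlinarith [gauge_nonneg (s := K) x, gauge_nonneg (s := L) x]
        · right
          rw [frontier, mem_diff]
          exact ⟨subset_closure hx, hxint⟩
      calc μ P ≤ μ ({z : E | gauge K z + gauge L z < 1} ∪ frontier P) := measure_mono hsub
        _ ≤ μ {z : E | gauge K z + gauge L z < 1} + μ (frontier P) := measure_union_le _ _
        _ = μ {z : E | gauge K z + gauge L z < 1} := by
            rw [hPconv.addHaar_frontier μ, add_zero]
  have hPK : P ⊆ K := by
    intro z hz
    have h1 : gauge K z ≤ 1 := by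
      have h2 : gauge K z + gauge L z ≤ 1 := hz
      have := gauge_nonneg (s := L) z
      linarith
    have h3 := (gauge_le_one_iff_mem_closure hKconv hK0).1 h1
    rwa [hKcomp.isClosed.closure_eq] at h3
  have hIP : ∫⁻ x, ENNReal.ofReal (Real.exp (-(gauge K x + gauge L x))) ∂μ = c * μ P := by
    apply lintegral_exp_neg_homog μ (fun x => gauge K x + gauge L x) P
      (hcontK.add hcontL)
      (fun x => add_nonneg (gauge_nonneg x) (gauge_nonneg x))
      (fun t ht x => by
        show gauge K (t • x) + gauge L (t • x) = t * (gauge K x + gauge L x)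
        rw [gauge_smul_of_nonneg ht.le, gauge_smul_of_nonneg ht.le, smul_eq_mul,
          smul_eq_mul]; ring)
      hPlt
  -- abbreviations
  set fK : E → ℝ≥0∞ := fun x => ENNReal.ofReal (Real.exp (-(gauge K x))) with hfK
  set fL : E → ℝ≥0∞ := fun x => ENNReal.ofReal (Real.exp (-(gauge L x))) with hfL
  set fP : E → ℝ≥0∞ := fun x => ENNReal.ofReal (Real.exp (-(gauge K x + gauge L x))) with hfP
  set IP : ℝ≥0∞ := ∫⁻ x, fP x ∂μ with hIPdef
  -- the key pointwise estimate
  have hkey : ∀ z : E, ENNReal.ofReal (Real.exp (-(gauge C z))) * IP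
      ≤ ∫⁻ v, fK (z + v) * fL v ∂μ := by
    intro z
    apply le_of_forall_exp_gt
    intro t ht
    obtain ⟨u, w, hzuw, hsum⟩ := exists_decomp hKconv hLconv hKne hLne habsC ht
    have htransl : ∫⁻ v, fP (v - w) ∂μ = IP := by
      simp_rw [sub_eq_add_neg]
      exact lintegral_add_right_eq_self (μ := μ) fP (-w)
    calc ENNReal.ofReal (Real.exp (-t)) * IP
        = ∫⁻ v, ENNReal.ofReal (Real.exp (-t)) * fP (v - w) ∂μ := by
          rw [lintegral_const_mul' _ _ ENNReal.ofReal_ne_top, htransl]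
      _ ≤ ∫⁻ v, fK (z + v) * fL v ∂μ := by
          apply lintegral_mono
          intro v
          have g1 : gauge K (z + v) ≤ gauge K u + gauge K (v - w) := by
            have : z + v = u + (v - w) := by rw [hzuw]; abel
            rw [this]
            exact gauge_add_le hKconv habsK _ _
          have g2 : gauge L v ≤ gauge L w + gauge L (v - w) := by
            have : v = w + (v - w) := by abel
            nth_rewrite 1 [this]
            exact gauge_add_le hLconv habsL _ _
          have hexp : Real.exp (-t) * Real.exp (-(gauge K (v - w) + gauge L (v - w)))
              ≤ Real.exp (-(gauge K (z + v))) * Real.exp (-(gauge L v)) := by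
            rw [← Real.exp_add, ← Real.exp_add]
            apply Real.exp_le_exp.2
            linarith
          calc ENNReal.ofReal (Real.exp (-t)) * fP (v - w)
              = ENNReal.ofReal (Real.exp (-t) *
                  Real.exp (-(gauge K (v - w) + gauge L (v - w)))) := by
                rw [ENNReal.ofReal_mul (Real.exp_pos _).le]
            _ ≤ ENNReal.ofReal (Real.exp (-(gauge K (z + v))) * Real.exp (-(gauge L v))) :=
                ENNReal.ofReal_le_ofReal hexp
            _ = fK (z + v) * fL v := by
                rw [ENNReal.ofReal_mul (Real.exp_pos _).le]
  -- measurability for Tonelli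
  have hmeas : AEMeasurable (fun p : E × E => fK (p.2 + p.1) * fL p.1) (μ.prod μ) := by
    apply Measurable.aemeasurable
    apply Measurable.mul (f := fun p : E × E => fK (p.2 + p.1)) (g := fun p : E × E => fL p.1)
    · exact ((ENNReal.continuous_ofReal.comp (Real.continuous_exp.comp
        (hcontK.neg))).comp (continuous_snd.add continuous_fst)).measurable
    · exact ((ENNReal.continuous_ofReal.comp (Real.continuous_exp.comp
        (hcontL.neg))).comp continuous_fst).measurable
  -- main chain
  have hchain : (c * μ C) * (c * μ P) ≤ (c * μ K) * (c * μ L) := by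
    calc (c * μ C) * (c * μ P)
        = (∫⁻ z, ENNReal.ofReal (Real.exp (-(gauge C z))) ∂μ) * IP := by
          rw [← hIC, ← hIP]
      _ = ∫⁻ z, ENNReal.ofReal (Real.exp (-(gauge C z))) * IP ∂μ := by
          have hIPne : IP ≠ ⊤ := by
            rw [hIP]
            exact ENNReal.mul_ne_top (ne_of_lt (layerConst_lt_top _))
              (ne_of_lt (lt_of_le_of_lt (measure_mono hPK) hKcomp.measure_lt_top))
          exact (lintegral_mul_const' IP _ hIPne).symm
      _ ≤ ∫⁻ z, (∫⁻ v, fK (z + v) * fL v ∂μ) ∂μ := lintegral_mono fun z => hkey z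
      _ = ∫⁻ v, (∫⁻ z, fK (z + v) * fL v ∂μ) ∂μ := (lintegral_lintegral_swap hmeas).symm
      _ = ∫⁻ v, (∫⁻ z, fK (z + v) ∂μ) * fL v ∂μ := by
          congr 1
          funext v
          rw [lintegral_mul_const' _ _ ENNReal.ofReal_ne_top]
      _ = ∫⁻ v, (c * μ K) * fL v ∂μ := by
          congr 1
          funext v
          rw [lintegral_add_right_eq_self (μ := μ) fK v, hIK]
      _ = (c * μ K) * (c * μ L) := by
          rw [lintegral_const_mul' _ _ ?_, hIL]
          exact ENNReal.mul_ne_top (ne_of_lt (layerConst_lt_top _))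
            (ne_of_lt (hKcomp.measure_lt_top))
  have hc0 : (c * c : ℝ≥0∞) ≠ 0 := by
    have := layerConst_pos (Module.finrank ℝ E)
    simp only [ne_eq, mul_eq_zero]
    push_neg
    constructor <;> exact ne_of_gt this
  have hctop : (c * c : ℝ≥0∞) ≠ ⊤ :=
    ENNReal.mul_ne_top (ne_of_lt (layerConst_lt_top _)) (ne_of_lt (layerConst_lt_top _))
  have hrearr : ∀ a b : ℝ≥0∞, (c * a) * (c * b) = (c * c) * (a * b) := fun a b => by
    ring
  rw [hrearr, hrearr] at hchain
  exact (ENNReal.mul_le_mul_iff_right hc0 hctop).1 hchain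

end RSproof

end

open MeasureTheory
open scoped ENNReal Pointwise RealInnerProductSpace

theorem volume_convexHull_mul_volume_polar_sum_le (n : ℕ)
    (K L : Set (EuclideanSpace ℝ (Fin n)))
    (hK : Convex ℝ K) (hKc : IsCompact K) (hKi : (0 : EuclideanSpace ℝ (Fin n)) ∈ interior K)
    (hL : Convex ℝ L) (hLc : IsCompact L) (hLi : (0 : EuclideanSpace ℝ (Fin n)) ∈ interior L) :
    volume (convexHull ℝ (K ∪ -L)) *
        volume {z : EuclideanSpace ℝ (Fin n) |
          ∀ y ∈ ({u | ∀ x ∈ K, ⟪x, u⟫ ≤ 1} + {u | ∀ x ∈ L, ⟪x, u⟫ ≤ 1} :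
            Set (EuclideanSpace ℝ (Fin n))), ⟪y, z⟫ ≤ 1} ≤
      volume K * volume L :=
  RSproof.main_ineq volume hK hKc hKi hL hLc hLi
end

section
/- For a convex body K in ℝ^n with 0 in its interior, ∫_{ℝ^n} exp(-h_{K°}(x)) dx = n! · Vol(K), where h_{K°} is the support function of the polar body of K. -/
open MeasureTheory Set Real
open scoped ENNReal Pointwise RealInnerProductSpace

theorem integral_exp_neg_support_polar (n : ℕ)
    (K : Set (EuclideanSpace ℝ (Fin n)))
    (hK : Convex ℝ K) (hKc : IsCompact K) (hKi : (0 : EuclideanSpace ℝ (Fin n)) ∈ interior K) :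
    (∫⁻ x, ENNReal.ofReal
        (Real.exp (-(⨆ y : ({u | ∀ z ∈ K, ⟪z, u⟫ ≤ 1} : Set (EuclideanSpace ℝ (Fin n))),
          ⟪x, (y : EuclideanSpace ℝ (Fin n))⟫)))) =
      (n.factorial : ℝ≥0∞) * volume K := by
  classical
  let E := EuclideanSpace ℝ (Fin n)
  set P : Set E := {u | ∀ z ∈ K, ⟪z, u⟫ ≤ 1} with hPdef
  have h0P : (0 : E) ∈ P := fun z _ => by simp
  haveI : Nonempty P := ⟨⟨0, h0P⟩⟩
  have h0K : (0 : E) ∈ K := interior_subset hKi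
  obtain ⟨r, hr, hrK⟩ : ∃ r > 0, Metric.ball (0 : E) r ⊆ K := by
    obtain ⟨r, hr, h⟩ := Metric.isOpen_iff.1 isOpen_interior 0 hKi
    exact ⟨r, hr, h.trans interior_subset⟩
  obtain ⟨R, hR0, hRK⟩ : ∃ R : ℝ, 0 < R ∧ K ⊆ Metric.closedBall 0 R :=
    hKc.isBounded.subset_closedBall_lt 0 0
  -- bound on elements of P
  have hPbound : ∀ u ∈ P, ‖u‖ ≤ 2 / r := by
    intro u hu
    rcases eq_or_ne u 0 with rfl | hu0
    · rw [norm_zero]; positivity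
    · have hnu : 0 < ‖u‖ := norm_pos_iff.2 hu0
      set z : EuclideanSpace ℝ (Fin n) := ((r / 2) * ‖u‖⁻¹) • u with hz
      have hzK : z ∈ K := by
        apply hrK
        simp only [Metric.mem_ball, dist_zero_right, hz, norm_smul, Real.norm_eq_abs]
        rw [abs_of_nonneg (by positivity), mul_assoc, inv_mul_cancel₀ hnu.ne', mul_one]
        linarith
      have h1 : ⟪z, u⟫ ≤ 1 := hu z hzK
      rw [hz, real_inner_smul_left, real_inner_self_eq_norm_mul_norm] at h1
      have h2 : (r / 2 * ‖u‖⁻¹) * (‖u‖ * ‖u‖) = r / 2 * ‖u‖ := by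
        field_simp
      rw [h2] at h1
      rw [le_div_iff₀ hr]
      nlinarith
  set g : E → ℝ := fun x => ⨆ y : P, ⟪x, (y : E)⟫ with hgdef
  have hbdd : ∀ x : E, BddAbove (Set.range fun y : P => ⟪x, (y : E)⟫) := by
    intro x
    refine ⟨‖x‖ * (2 / r), ?_⟩
    rintro _ ⟨⟨u, hu⟩, rfl⟩
    exact (real_inner_le_norm x u).trans
      (mul_le_mul_of_nonneg_left (hPbound u hu) (norm_nonneg x))
  have hg0 : ∀ x, 0 ≤ g x := by
    intro x
    have := le_ciSup (hbdd x) (⟨0, h0P⟩ : P)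
    simpa using this
  -- sublevel sets
  have hsub : ∀ t : ℝ, 0 < t → {x : E | g x ≤ t} = t • K := by
    intro t ht
    ext x
    constructor
    · intro hx
      by_contra hxK
      obtain ⟨f, u, hfa, hux⟩ :=
        geometric_hahn_banach_closed_point (hK.smul t) ((hKc.smul t).isClosed) hxK
      have hu0 : 0 < u := by
        have h0t : (0 : EuclideanSpace ℝ (Fin n)) ∈ t • K := ⟨0, h0K, smul_zero t⟩
        have := hfa 0 h0t
        simpa using this
      set v : EuclideanSpace ℝ (Fin n) := (InnerProductSpace.toDual ℝ _).symm f with hv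
      have hfv : ∀ z, f z = ⟪v, z⟫ := fun z => (InnerProductSpace.toDual_symm_apply).symm
      have hvne : v ≠ 0 := by
        intro h
        have : f x = 0 := by rw [hfv, h, inner_zero_left]
        linarith [hux, hu0, this]
      have hnv : 0 < ‖v‖ := norm_pos_iff.2 hvne
      set M : ℝ := sSup (f '' K) with hM
      have hMbdd : BddAbove (f '' K) := (hKc.image f.continuous).bddAbove
      have hMK : ∀ z ∈ K, f z ≤ M := fun z hz => le_csSup hMbdd ⟨z, hz, rfl⟩
      have hM0 : 0 < M := by
        set z0 : EuclideanSpace ℝ (Fin n) := ((r / 2) * ‖v‖⁻¹) • v with hz0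
        have hz0K : z0 ∈ K := by
          apply hrK
          simp only [Metric.mem_ball, dist_zero_right, hz0, norm_smul, Real.norm_eq_abs]
          rw [abs_of_nonneg (by positivity), mul_assoc, inv_mul_cancel₀ hnv.ne', mul_one]
          linarith
        have : f z0 = (r / 2 * ‖v‖⁻¹) * (‖v‖ * ‖v‖) := by
          rw [hfv, hz0, real_inner_smul_right, real_inner_self_eq_norm_mul_norm]
        have hfz0 : 0 < f z0 := by rw [this]; positivity
        exact hfz0.trans_le (hMK z0 hz0K)
      have huP : M⁻¹ • v ∈ P := by
        intro z hz
        rw [real_inner_smul_right, real_inner_comm, ← hfv]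
        calc M⁻¹ * f z ≤ M⁻¹ * M :=
              mul_le_mul_of_nonneg_left (hMK z hz) (inv_nonneg.2 hM0.le)
          _ = 1 := inv_mul_cancel₀ hM0.ne'
      have hMu : M * t ≤ u := by
        have hMle : M ≤ u / t := by
          apply csSup_le (Set.Nonempty.image _ ⟨0, h0K⟩)
          rintro _ ⟨z, hz, rfl⟩
          have := hfa (t • z) ⟨z, hz, rfl⟩
          rw [f.map_smul, smul_eq_mul] at this
          rw [le_div_iff₀ ht]
          linarith [this]
        calc M * t ≤ (u / t) * t := by nlinarith
          _ = u := by field_simp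
      have hle : ⟪x, M⁻¹ • v⟫ ≤ g x := le_ciSup (hbdd x) (⟨M⁻¹ • v, huP⟩ : P)
      have hxv : ⟪x, M⁻¹ • v⟫ = M⁻¹ * f x := by
        rw [real_inner_smul_right, real_inner_comm, ← hfv]
      have : t < g x := by
        have h1 : t ≤ M⁻¹ * u := by
          rw [le_inv_mul_iff₀ hM0]
          linarith [hMu]
        have h2 : M⁻¹ * u < M⁻¹ * f x :=
          mul_lt_mul_of_pos_left hux (inv_pos.2 hM0)
        rw [hxv] at hle
        linarith
      exact absurd hx (not_le.2 this)
    · rintro ⟨k, hk, rfl⟩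
      show g (t • k) ≤ t
      apply ciSup_le
      rintro ⟨w, hw⟩
      rw [real_inner_smul_left]
      calc t * ⟪k, w⟫ ≤ t * 1 := mul_le_mul_of_nonneg_left (hw k hk) ht.le
        _ = t := mul_one t
  -- g is positive away from 0
  have hgpos : ∀ x : E, x ≠ 0 → 0 < g x := by
    intro x hx0
    have hnx : 0 < ‖x‖ := norm_pos_iff.2 hx0
    set u0 : EuclideanSpace ℝ (Fin n) := (R⁻¹ * ‖x‖⁻¹) • x with hu0
    have hu0P : u0 ∈ P := by
      intro z hz
      have hz' : ‖z‖ ≤ R := by simpa [dist_zero_right] using hRK hz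
      rw [hu0, real_inner_smul_right]
      have h1 : ⟪z, x⟫ ≤ ‖z‖ * ‖x‖ := real_inner_le_norm z x
      have h2 : ⟪z, x⟫ ≤ R * ‖x‖ := h1.trans (by nlinarith)
      calc R⁻¹ * ‖x‖⁻¹ * ⟪z, x⟫ ≤ R⁻¹ * ‖x‖⁻¹ * (R * ‖x‖) := by
            apply mul_le_mul_of_nonneg_left h2 (by positivity)
        _ = 1 := by field_simp
    have hle : ⟪x, u0⟫ ≤ g x := le_ciSup (hbdd x) (⟨u0, hu0P⟩ : P)
    have : ⟪x, u0⟫ = R⁻¹ * ‖x‖⁻¹ * (‖x‖ * ‖x‖) := by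
      rw [hu0, real_inner_smul_right, real_inner_self_eq_norm_mul_norm]
    rw [this] at hle
    have hpos : 0 < R⁻¹ * ‖x‖⁻¹ * (‖x‖ * ‖x‖) := by positivity
    linarith
  have hg : Measurable g := by
    apply measurable_of_Iic
    intro t
    rcases lt_or_ge 0 t with ht | ht
    · have : g ⁻¹' Iic t = t • K := hsub t ht
      rw [this]
      exact ((hKc.smul t).isClosed).measurableSet
    · have : g ⁻¹' Iic t ⊆ {0} := by
        intro x hx
        by_contra hx0
        exact absurd (le_trans (hx : g x ≤ t) ht) (not_le.2 (hgpos x hx0))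
      exact (Set.subsingleton_of_subset_singleton this).measurableSet
  -- volume of sublevel sets
  have hvol : ∀ t : ℝ, 0 < t →
      volume {x : E | g x ≤ t} = ENNReal.ofReal t ^ n * volume K := by
    intro t ht
    rw [hsub t ht, Measure.addHaar_smul_of_nonneg volume ht.le K]
    congr 1
    rw [← ENNReal.ofReal_pow ht.le]
    congr 1
    simp
  -- exponential integral over Ioi a
  have hexp_int : ∀ a : ℝ, (∫⁻ s in Ioi a, ENNReal.ofReal (Real.exp (-s))) =
      ENNReal.ofReal (Real.exp (-a)) := by
    intro a
    rw [← ofReal_integral_eq_lintegral_ofReal]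
    · rw [integral_exp_neg_Ioi]
    · exact (by simpa using exp_neg_integrableOn_Ioi a one_pos :
        IntegrableOn (fun s => Real.exp (-s)) (Ioi a) volume)
    · exact ae_of_all _ fun s => (Real.exp_pos _).le
  have hae : ∀ a : ℝ, 0 ≤ a → (Ici a ∩ Ioi 0 : Set ℝ) =ᵐ[volume] (Ioi a : Set ℝ) := by
    intro a ha
    rw [MeasureTheory.ae_eq_set]
    constructor
    · apply measure_mono_null (t := ({a} : Set ℝ))
      · rintro s ⟨⟨hs1, _⟩, hs2⟩
        simp only [mem_Ioi, not_lt] at hs2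
        simp [le_antisymm hs2 hs1]
      · exact measure_singleton a
    · apply measure_mono_null (t := (∅ : Set ℝ))
      · rintro s ⟨hs1, hs2⟩
        exact (hs2 ⟨(le_of_lt hs1 : a ≤ s), (ha.trans_lt hs1 : (0:ℝ) < s)⟩).elim
      · exact measure_empty
  have key : ∀ x : EuclideanSpace ℝ (Fin n), (∫⁻ s in Ioi (0:ℝ),
      (Ici (g x)).indicator (fun s => ENNReal.ofReal (Real.exp (-s))) s) =
      ENNReal.ofReal (Real.exp (-(g x))) := by
    intro x
    rw [lintegral_indicator measurableSet_Ici, Measure.restrict_restrict measurableSet_Ici,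
      Measure.restrict_congr_set (hae _ (hg0 x)), hexp_int]
  set F : EuclideanSpace ℝ (Fin n) × ℝ → ℝ≥0∞ :=
    fun p => Set.indicator {p : EuclideanSpace ℝ (Fin n) × ℝ | g p.1 ≤ p.2}
      (fun p => ENNReal.ofReal (Real.exp (-p.2))) p with hF
  have hFm : Measurable F :=
    Measurable.indicator
      (ENNReal.measurable_ofReal.comp (Real.measurable_exp.comp measurable_snd.neg))
      (measurableSet_le (hg.comp measurable_fst) measurable_snd)
  have hGint : IntegrableOn (fun s : ℝ => Real.exp (-s) * s ^ n) (Ioi 0) volume := by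
    have := Real.GammaIntegral_convergent (s := (n:ℝ)+1) (by positivity)
    simpa [add_sub_cancel_right, Real.rpow_natCast] using this
  have hGnn : ∀ᵐ s ∂(volume.restrict (Ioi (0:ℝ))), 0 ≤ Real.exp (-s) * s ^ n := by
    refine (ae_restrict_iff' measurableSet_Ioi).2 (ae_of_all _ fun s hs => ?_)
    exact mul_nonneg (Real.exp_pos _).le (pow_nonneg (le_of_lt hs) n)
  have hmain : (∫⁻ x : EuclideanSpace ℝ (Fin n), ENNReal.ofReal (Real.exp (-(g x)))) =
      (n.factorial : ℝ≥0∞) * volume K := by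
    calc (∫⁻ x : EuclideanSpace ℝ (Fin n), ENNReal.ofReal (Real.exp (-(g x))))
        = ∫⁻ x : EuclideanSpace ℝ (Fin n), ∫⁻ s in Ioi (0:ℝ), F (x, s) := by
          refine lintegral_congr fun x => ?_
          rw [← key x]
          refine lintegral_congr fun s => ?_
          simp only [hF, Set.indicator_apply, Set.mem_setOf_eq, Set.mem_Ici]
      _ = ∫⁻ s in Ioi (0:ℝ), ∫⁻ x : EuclideanSpace ℝ (Fin n), F (x, s) :=
          lintegral_lintegral_swap hFm.aemeasurable
      _ = ∫⁻ s in Ioi (0:ℝ), ENNReal.ofReal (Real.exp (-s) * s ^ n) * volume K := by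
          apply setLIntegral_congr_fun measurableSet_Ioi
          intro s hs
          have hs' : (0:ℝ) < s := hs
          have e1 : ∀ x : EuclideanSpace ℝ (Fin n), F (x, s) =
              Set.indicator {x : EuclideanSpace ℝ (Fin n) | g x ≤ s}
                (fun _ => ENNReal.ofReal (Real.exp (-s))) x := by
            intro x
            simp only [hF, Set.indicator_apply, Set.mem_setOf_eq]
          calc (∫⁻ x : EuclideanSpace ℝ (Fin n), F (x, s))
              = ∫⁻ x : EuclideanSpace ℝ (Fin n), Set.indicator {x : EuclideanSpace ℝ (Fin n) | g x ≤ s}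
                  (fun _ => ENNReal.ofReal (Real.exp (-s))) x := lintegral_congr e1
            _ = ENNReal.ofReal (Real.exp (-s)) * volume {x : EuclideanSpace ℝ (Fin n) | g x ≤ s} :=
                lintegral_indicator_const (hg measurableSet_Iic) _
            _ = ENNReal.ofReal (Real.exp (-s)) * (ENNReal.ofReal s ^ n * volume K) := by
                rw [hvol s hs']
            _ = ENNReal.ofReal (Real.exp (-s) * s ^ n) * volume K := by
                rw [ENNReal.ofReal_mul (Real.exp_pos _).le, ENNReal.ofReal_pow hs'.le, mul_assoc]
      _ = (∫⁻ s in Ioi (0:ℝ), ENNReal.ofReal (Real.exp (-s) * s ^ n)) * volume K :=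
          lintegral_mul_const _ (by fun_prop)
      _ = ENNReal.ofReal (Real.Gamma ((n:ℝ) + 1)) * volume K := by
          congr 1
          rw [← ofReal_integral_eq_lintegral_ofReal hGint hGnn]
          congr 1
          rw [Real.Gamma_eq_integral (by positivity : (0:ℝ) < (n:ℝ)+1)]
          simp only [add_sub_cancel_right, Real.rpow_natCast]
      _ = (n.factorial : ℝ≥0∞) * volume K := by
          rw [Real.Gamma_nat_eq_factorial, ENNReal.ofReal_natCast]
  exact hmain
end

section
/- Let S ⊆ ℝ^n be a simplex with centroid at the origin, λ ∈ (0,1), and let k be an integer with (n+1)(1-λ) - 1 ≤ k ≤ (n+1)(1-λ). Then Vol(conv((1-λ)S ∪ (-λ)S)) = binomial(n, k) · (1-λ)^k · λ^{n-k} · Vol(S). -/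
open MeasureTheory Finset
open scoped ENNReal Pointwise

section Aux

/-- Sorting: select the `k` largest values and the `(k+1)`-th largest position. -/
lemma exists_sort_choice {n : ℕ} (f : Fin (n+1) → ℝ) (k : ℕ) (hk : k ≤ n) :
    ∃ (o : Fin (n+1)) (I : Finset (Fin (n+1))), I.card = k ∧ o ∉ I ∧
      (∀ i ∈ I, f o ≤ f i) ∧ (∀ j, j ∉ I → f j ≤ f o) := by
  classical
  set σ := Tuple.sort f with hσ
  have hmono : Monotone (f ∘ σ) := Tuple.monotone_sort f
  set a : Fin (n+1) := ⟨n - k, by omega⟩ with ha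
  refine ⟨σ a, (Finset.Ioi a).image σ, ?_, ?_, ?_, ?_⟩
  · rw [Finset.card_image_of_injective _ σ.injective, Fin.card_Ioi]
    simp [ha]; omega
  · intro hmem
    obtain ⟨j, hj, hje⟩ := Finset.mem_image.1 hmem
    exact absurd (σ.injective hje) (by rintro rfl; exact (Finset.mem_Ioi.1 hj).false)
  · intro i hi
    obtain ⟨j, hj, rfl⟩ := Finset.mem_image.1 hi
    exact hmono (le_of_lt (Finset.mem_Ioi.1 hj))
  · intro j hj
    rcases eq_or_ne j (σ a) with rfl | hne
    · exact le_refl _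
    · have h1 : σ.symm j ≠ a := fun h => hne (by rw [← h]; simp)
      have h2 : σ.symm j ∉ Finset.Ioi a := fun h => hj (Finset.mem_image.2 ⟨σ.symm j, h, by simp⟩)
      have h3 : σ.symm j ≤ a := le_of_not_gt (fun h => h2 (Finset.mem_Ioi.2 h))
      have := hmono h3
      simpa using this

/-- The coincidence set of two distinct affine functionals is null. -/
lemma volume_affine_eq_zero {F : Type*} [NormedAddCommGroup F] [NormedSpace ℝ F]
    [MeasurableSpace F] [BorelSpace F] [FiniteDimensional ℝ F]
    (μ : Measure F) [μ.IsAddHaarMeasure] (g h : F →ᵃ[ℝ] ℝ) (w : F) (hw : g w ≠ h w) :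
    μ {x | g x = h x} = 0 := by
  classical
  set d : F →ᵃ[ℝ] ℝ := g - h with hd
  have hdw : d w ≠ 0 := by simpa [hd, sub_eq_zero] using hw
  have hZ : {x | g x = h x} = {x | d x = 0} := by
    ext x; simp [hd, sub_eq_zero]
  rw [hZ]
  rcases Set.eq_empty_or_nonempty {x | d x = 0} with he | ⟨x₀, hx₀⟩
  · simp [he]
  · have hker : LinearMap.ker d.linear ≠ ⊤ := by
      intro htop
      have : d.linear (w - x₀) = 0 := by
        rw [← LinearMap.mem_ker, htop]; trivial
      have h2 : d.linear (w -ᵥ x₀) = d w -ᵥ d x₀ := (d.linearMap_vsub w x₀)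
      rw [vsub_eq_sub, vsub_eq_sub] at h2
      rw [h2] at this
      have : d w = d x₀ := by linarith [this, sub_eq_zero.1 this]
      rw [hx₀] at this
      exact hdw this
    have hsub : {x | d x = 0} ⊆ (x₀ + ·) '' (LinearMap.ker d.linear : Set F) := by
      intro x hx
      refine ⟨x - x₀, ?_, by module⟩
      have h2 : d.linear (x -ᵥ x₀) = d x -ᵥ d x₀ := (d.linearMap_vsub x x₀)
      rw [vsub_eq_sub, vsub_eq_sub] at h2
      simp only [LinearMap.mem_ker, SetLike.mem_coe]
      rw [h2, hx, hx₀, sub_zero]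
    refine le_antisymm (le_trans (measure_mono hsub) ?_) zero_le
    rw [Set.image_add_left, measure_preimage_add]
    exact le_of_eq (Measure.addHaar_submodule μ _ hker)

end Aux

lemma aux_ineq1 (l nn kk A B : ℝ) (hl0 : 0 < l) (hl1 : l < 1) (hnn : 0 < nn)
    (hB : 0 ≤ B) (hc0 : 0 ≤ nn*(1-l) - kk) (hc1 : nn*(1-l) - kk ≤ 1)
    (hkey : A + B ≤ 1) :
    (1-l)*A + kk*(l*nn⁻¹) + (nn*(1-l) - kk) * ((1-l)*B + l*nn⁻¹) ≤ (1-l)*(1+l) := by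
  have h1 : nn * nn⁻¹ = 1 := mul_inv_cancel₀ hnn.ne'
  have h2 : (nn*(1-l) - kk) * B ≤ B := by nlinarith
  have h3 : A + (nn*(1-l)-kk) * B ≤ 1 := by linarith
  have h4 : (1-l) * (A + (nn*(1-l)-kk)*B) ≤ (1-l) * 1 := by nlinarith
  have h5 : (1-l)*A + kk*(l*nn⁻¹) + (nn*(1-l) - kk) * ((1-l)*B + l*nn⁻¹)
      = (1-l) * (A + (nn*(1-l)-kk)*B) + (nn*nn⁻¹) * (l*(1-l)) := by ring
  rw [h5, h1]
  nlinarith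

lemma aux_ineq2 (l nn kk A B : ℝ) (hl0 : 0 < l) (hnn : 0 < nn)
    (hpos : 0 ≤ A + (nn*(1-l) - kk) * B) :
    -l*A + kk*((1+l)*nn⁻¹) + (nn*(1-l) - kk) * (-l*B + (1+l)*nn⁻¹) ≤ (1-l)*(1+l) := by
  have h1 : nn * nn⁻¹ = 1 := mul_inv_cancel₀ hnn.ne'
  have h5 : -l*A + kk*((1+l)*nn⁻¹) + (nn*(1-l) - kk) * (-l*B + (1+l)*nn⁻¹)
      = -(l * (A + (nn*(1-l)-kk)*B)) + (nn*nn⁻¹) * ((1-l)*(1+l)) := by ring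
  rw [h5, h1]
  nlinarith

set_option maxHeartbeats 3000000 in
theorem volume_convexHull_simplex_dilates (n : ℕ)
    (v : Fin (n + 1) → EuclideanSpace ℝ (Fin n)) (hv : AffineIndependent ℝ v)
    (S : Set (EuclideanSpace ℝ (Fin n))) (hS : S = convexHull ℝ (Set.range v))
    (hcent : ∑ i, v i = 0)
    (l : ℝ) (hl : l ∈ Set.Ioo (0:ℝ) 1)
    (k : ℕ) (hk1 : (n + 1 : ℝ) * (1 - l) - 1 ≤ k) (hk2 : (k : ℝ) ≤ (n + 1 : ℝ) * (1 - l)) :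
    volume (convexHull ℝ ((1 - l) • S ∪ (-l) • S)) =
      ENNReal.ofReal ((n.choose k : ℝ) * (1 - l) ^ k * l ^ (n - k)) * volume S := by
  classical
  obtain ⟨hl0, hl1⟩ := hl
  have h1l : (0:ℝ) < 1 - l := by linarith
  have hn1 : (0:ℝ) < (n:ℝ) + 1 := by positivity
  have hkn : k ≤ n := by
    by_contra hc
    push_neg at hc
    have h : ((n:ℝ)+1) ≤ (k:ℝ) := by exact_mod_cast hc
    nlinarith
  have hck0 : 0 ≤ ((n:ℝ)+1)*(1-l) - k := by linarith
  have hck1 : ((n:ℝ)+1)*(1-l) - k ≤ 1 := by linarith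
  have hspan : affineSpan ℝ (Set.range v) = ⊤ := by
    rw [hv.affineSpan_eq_top_iff_card_eq_finrank_add_one]
    simp [finrank_euclideanSpace]
  let b : AffineBasis (Fin (n+1)) ℝ (EuclideanSpace ℝ (Fin n)) := ⟨v, hv, hspan⟩
  have hbv : ⇑b = v := rfl
  set τ : Fin (n+1) → EuclideanSpace ℝ (Fin n) → ℝ := fun i x => b.coord i x with hτ
  have hτv : ∀ i j, τ i (v j) = if i = j then 1 else 0 := by
    intro i j
    simp only [hτ, ← hbv]
    exact b.coord_apply i j
  have hτsum : ∀ x, ∑ i, τ i x = 1 := fun x => b.sum_coord_apply_eq_one x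
  have hw0sum : ∑ _i : Fin (n+1), ((n:ℝ)+1)⁻¹ = 1 := by
    simp [Finset.sum_const, Finset.card_univ]
    field_simp
  have hzero : (Finset.univ.affineCombination ℝ v fun _ => ((n:ℝ)+1)⁻¹) = 0 := by
    rw [Finset.affineCombination_eq_linear_combination _ _ _ hw0sum, ← Finset.smul_sum, hcent,
      smul_zero]
  have hτ0 : ∀ i, τ i 0 = ((n:ℝ)+1)⁻¹ := by
    intro i
    simp only [hτ, ← hzero, ← hbv]
    exact b.coord_apply_combination_of_mem (Finset.mem_univ i) hw0sum
  have hτsmul : ∀ (a : ℝ) (y : EuclideanSpace ℝ (Fin n)) i,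
      τ i (a • y) = a * τ i y + (1-a) * ((n:ℝ)+1)⁻¹ := by
    intro a y i
    have hline : a • y = AffineMap.lineMap (0 : EuclideanSpace ℝ (Fin n)) y a := by
      simp [AffineMap.lineMap_apply_module]
    have hstep : τ i (a • y) = (AffineMap.lineMap (τ i 0) (τ i y)) a := by
      rw [hline]
      exact AffineMap.apply_lineMap (b.coord i) _ _ _
    rw [hstep, hτ0]
    simp only [AffineMap.lineMap_apply_module, smul_eq_mul]
    ring
  have hmemS : ∀ x, x ∈ S ↔ ∀ i, 0 ≤ τ i x := by
    intro x
    rw [hS, ← hbv, b.convexHull_eq_nonneg_coord]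
    exact Iff.rfl
  have h0S : (0 : EuclideanSpace ℝ (Fin n)) ∈ S := by
    rw [hmemS]
    intro i
    rw [hτ0 i]
    positivity
  set mw : (Fin (n+1) × Finset (Fin (n+1))) → Fin (n+1) → ℝ :=
    fun p r => if r ∈ p.2 then 1 - l else if r = p.1 then 0 else -l with hmw
  set qf : (Fin (n+1) × Finset (Fin (n+1))) → Fin (n+1) → EuclideanSpace ℝ (Fin n) :=
    fun p r => mw p r • v r with hqf
  set Pp : (Fin (n+1) × Finset (Fin (n+1))) → Set (EuclideanSpace ℝ (Fin n)) :=
    fun p => convexHull ℝ (Set.range (qf p)) with hPp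
  set J : Finset (Fin (n+1) × Finset (Fin (n+1))) :=
    Finset.univ.filter (fun p => p.2.card = k ∧ p.1 ∉ p.2) with hJ
  have hmemJ : ∀ p, p ∈ J ↔ p.2.card = k ∧ p.1 ∉ p.2 := by
    intro p
    simp [hJ]
  have hτq : ∀ p r i,
      τ i (qf p r) = mw p r * (if i = r then 1 else 0) + (1 - mw p r) * ((n:ℝ)+1)⁻¹ := by
    intro p r i
    simp only [hqf]
    rw [hτsmul, hτv]
  have hlin : ∀ (a bb : ℝ), a + bb = 1 → ∀ (x y : EuclideanSpace ℝ (Fin n)) (i : Fin (n+1)),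
      τ i (a • x + bb • y) = a * τ i x + bb * τ i y := by
    intro a bb hab x y i
    have hline : a • x + bb • y = AffineMap.lineMap x y bb := by
      rw [AffineMap.lineMap_apply_module]
      have ha : a = 1 - bb := by linarith
      rw [ha]
    have h2 : τ i ((AffineMap.lineMap x y) bb) = (AffineMap.lineMap (τ i x) (τ i y)) bb :=
      AffineMap.apply_lineMap (b.coord i) x y bb
    rw [hline, h2, AffineMap.lineMap_apply_module]
    simp only [smul_eq_mul]
    linear_combination (-(τ i x)) * hab
  have hQ : convexHull ℝ ((1 - l) • S ∪ (-l) • S) ⊆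
      {x | ∀ p ∈ J, (∑ i ∈ p.2, τ i x) + (((n:ℝ)+1)*(1-l) - k) * τ p.1 x ≤ (1-l)*(1+l)} := by
    apply convexHull_min
    · rintro x (⟨y, hy, rfl⟩ | ⟨y, hy, rfl⟩) <;> intro p hp <;>
        obtain ⟨hcI, hoI⟩ := (hmemJ p).1 hp <;>
        have hy' := (hmemS y).1 hy
      · have hkey : (∑ i ∈ p.2, τ i y) + τ p.1 y ≤ 1 := by
          have h2 : ∑ i ∈ insert p.1 p.2, τ i y ≤ ∑ i, τ i y :=
            Finset.sum_le_sum_of_subset_of_nonneg (Finset.subset_univ _)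
              (fun i _ _ => hy' i)
          rw [Finset.sum_insert hoI, hτsum] at h2
          linarith
        have he : ∀ i, τ i ((1-l) • y) = (1-l) * τ i y + l * ((n:ℝ)+1)⁻¹ := by
          intro i
          rw [hτsmul]
          ring
        rw [Finset.sum_congr rfl (fun i _ => he i), he p.1, Finset.sum_add_distrib,
          Finset.sum_const, hcI, nsmul_eq_mul]
        have hexp : (∑ i ∈ p.2, (1-l) * τ i y) = (1-l) * ∑ i ∈ p.2, τ i y := by
          rw [Finset.mul_sum]
        rw [hexp]
        linarith [aux_ineq1 l ((n:ℝ)+1) (k:ℝ) (∑ i ∈ p.2, τ i y) (τ p.1 y)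
          hl0 hl1 hn1 (hy' p.1) hck0 hck1 hkey]
      · have hAnn : 0 ≤ ∑ i ∈ p.2, τ i y := Finset.sum_nonneg (fun i _ => hy' i)
        have hkey : 0 ≤ (∑ i ∈ p.2, τ i y) + (((n:ℝ)+1)*(1-l) - k) * τ p.1 y := by
          have h3 : 0 ≤ (((n:ℝ)+1)*(1-l) - k) * τ p.1 y := mul_nonneg hck0 (hy' p.1)
          linarith
        have he : ∀ i, τ i ((-l) • y) = -l * τ i y + (1+l) * ((n:ℝ)+1)⁻¹ := by
          intro i
          rw [hτsmul]
          ring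
        rw [Finset.sum_congr rfl (fun i _ => he i), he p.1, Finset.sum_add_distrib,
          Finset.sum_const, hcI, nsmul_eq_mul]
        have hexp : (∑ i ∈ p.2, -l * τ i y) = -l * ∑ i ∈ p.2, τ i y := by
          rw [Finset.mul_sum]
        rw [hexp]
        linarith [aux_ineq2 l ((n:ℝ)+1) (k:ℝ) (∑ i ∈ p.2, τ i y) (τ p.1 y) hl0 hn1 hkey]
    · intro x1 hx1 x2 hx2 a bb ha hb hab
      intro p hp
      have e := hlin a bb hab x1 x2
      rw [Finset.sum_congr rfl (fun i _ => e i), e p.1, Finset.sum_add_distrib]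
      have e1 : (∑ i ∈ p.2, a * τ i x1) = a * ∑ i ∈ p.2, τ i x1 := by rw [Finset.mul_sum]
      have e2 : (∑ i ∈ p.2, bb * τ i x2) = bb * ∑ i ∈ p.2, τ i x2 := by rw [Finset.mul_sum]
      rw [e1, e2]
      have g1 := hx1 p hp
      have g2 := hx2 p hp
      have gg1 := mul_le_mul_of_nonneg_left g1 ha
      have gg2 := mul_le_mul_of_nonneg_left g2 hb
      have hbb : bb = 1 - a := by linarith
      subst hbb
      linarith [gg1, gg2]
  have hcover : convexHull ℝ ((1 - l) • S ∪ (-l) • S) = ⋃ p ∈ J, Pp p := by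
    apply Set.Subset.antisymm
    · intro x hx
      obtain ⟨o, I, hcI, hoI, hsort1, hsort2⟩ := exists_sort_choice (fun i => τ i x) k hkn
      have hpJ : ((o, I) : Fin (n+1) × Finset (Fin (n+1))) ∈ J := (hmemJ _).2 ⟨hcI, hoI⟩
      have hφ : (∑ i ∈ I, τ i x) + (((n:ℝ)+1)*(1-l) - k) * τ o x ≤ (1-l)*(1+l) := hQ hx (o, I) hpJ
      refine Set.mem_biUnion hpJ ?_
      -- weights
      set w' : Fin (n+1) → ℝ :=
        fun s => if s ∈ I then (τ s x - τ o x)/(1-l) else (τ o x - τ s x)/l with hw'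
      set w : Fin (n+1) → ℝ :=
        fun s => if s = o then 1 - ∑ r ∈ Finset.univ.erase o, w' r else w' s with hw
      have hw'I : ∀ r ∈ I, w' r = (τ r x - τ o x)/(1-l) := fun r hr => by
        simp only [hw']
        rw [if_pos hr]
      have hw'nI : ∀ r, r ∉ I → w' r = (τ o x - τ r x)/l := fun r hr => by
        simp only [hw']
        rw [if_neg hr]
      have hwo : w o = 1 - ∑ r ∈ Finset.univ.erase o, w' r := by
        simp only [hw, if_true, eq_self_iff_true]
      have hwne : ∀ r, r ≠ o → w r = w' r := fun r hr => by
        simp only [hw]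
        rw [if_neg hr]
      have hsum_erase : ∑ r ∈ Finset.univ.erase o, w r = ∑ r ∈ Finset.univ.erase o, w' r :=
        Finset.sum_congr rfl (fun r hr => hwne r (Finset.mem_erase.1 hr).1)
      have hw1 : ∑ s, w s = 1 := by
        have h2 : w o + ∑ r ∈ Finset.univ.erase o, w r = ∑ r, w r :=
          Finset.add_sum_erase Finset.univ w (Finset.mem_univ o)
        rw [← h2, hsum_erase, hwo]
        ring
      have hfil : (Finset.univ.erase o).filter (· ∈ I) = I := by
        ext r
        simp only [Finset.mem_filter, Finset.mem_erase, Finset.mem_univ, true_and, and_true]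
        exact ⟨fun h => h.2, fun h => ⟨fun he => hoI (he ▸ h), h⟩⟩
      have herase : ∑ r ∈ Finset.univ.erase o, τ r x = 1 - τ o x := by
        have h2 : τ o x + ∑ r ∈ Finset.univ.erase o, τ r x = ∑ r, τ r x :=
          Finset.add_sum_erase Finset.univ (fun r => τ r x) (Finset.mem_univ o)
        rw [hτsum x] at h2
        linarith
      have hsumI : ∑ i ∈ (Finset.univ.erase o).filter (¬ · ∈ I), τ i x
          = 1 - (∑ i ∈ I, τ i x) - τ o x := by
        have h0 : ∑ i ∈ (Finset.univ.erase o).filter (· ∈ I), τ i x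
            + ∑ i ∈ (Finset.univ.erase o).filter (¬ · ∈ I), τ i x
            = ∑ i ∈ Finset.univ.erase o, τ i x :=
          Finset.sum_filter_add_sum_filter_not _ _ _
        rw [hfil, herase] at h0
        linarith
      have hcardIc : ((Finset.univ.erase o).filter (¬ · ∈ I)).card = n - k := by
        have h0 : ((Finset.univ.erase o).filter (· ∈ I)).card
            + ((Finset.univ.erase o).filter (¬ · ∈ I)).card = (Finset.univ.erase o).card :=
          Finset.card_filter_add_card_filter_not _
        rw [hfil, hcI, Finset.card_erase_of_mem (Finset.mem_univ o), Finset.card_univ,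
          Fintype.card_fin] at h0
        omega
      have hsplit : ∑ r ∈ Finset.univ.erase o, w' r
          = ((∑ i ∈ I, τ i x) - k * τ o x)/(1-l)
            + ((((n:ℝ)-k)) * τ o x - (1 - (∑ i ∈ I, τ i x) - τ o x))/l := by
        have h0 : ∑ r ∈ (Finset.univ.erase o).filter (· ∈ I), w' r
            + ∑ r ∈ (Finset.univ.erase o).filter (¬ · ∈ I), w' r
            = ∑ r ∈ Finset.univ.erase o, w' r :=
          Finset.sum_filter_add_sum_filter_not _ _ _
        rw [← h0, hfil]
        congr 1
        · rw [Finset.sum_congr rfl hw'I, ← Finset.sum_div, Finset.sum_sub_distrib,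
            Finset.sum_const, hcI, nsmul_eq_mul]
        · rw [Finset.sum_congr rfl (fun r hr => hw'nI r (Finset.mem_filter.1 hr).2),
            ← Finset.sum_div, Finset.sum_sub_distrib, Finset.sum_const, hcardIc, nsmul_eq_mul,
            hsumI]
          congr 2
          rw [Nat.cast_sub hkn]
      have hw0 : ∀ s, 0 ≤ w s := by
        intro s
        by_cases hso : s = o
        · subst hso
          rw [hwo, hsplit]
          have hpos : (0:ℝ) < (1-l) * l := by positivity
          rw [sub_nonneg, div_add_div _ _ h1l.ne' hl0.ne', div_le_one hpos]
          have hid : ((∑ i ∈ I, τ i x) - k * τ s x) * l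
              + (1-l) * ((((n:ℝ)-k)) * τ s x - (1 - (∑ i ∈ I, τ i x) - τ s x))
              = (∑ i ∈ I, τ i x) + (((n:ℝ)+1)*(1-l) - k) * τ s x - (1-l) := by ring
          rw [hid]
          linarith [hφ]
        · rw [hwne s hso]
          by_cases hsI : s ∈ I
          · rw [hw'I s hsI]
            exact div_nonneg (by linarith [hsort1 s hsI]) h1l.le
          · rw [hw'nI s hsI]
            exact div_nonneg (by linarith [hsort2 s hsI]) hl0.le
      have hmwI : ∀ r ∈ I, mw (o, I) r = 1 - l := fun r hr => by
        simp only [hmw]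
        rw [if_pos hr]
      have hmwo : mw (o, I) o = 0 := by
        simp only [hmw, if_true, eq_self_iff_true]
        rw [if_neg hoI]
      have hmwnI : ∀ r, r ∉ I → r ≠ o → mw (o, I) r = -l := fun r hr hro => by
        simp only [hmw]
        rw [if_neg hr, if_neg hro]
      have hWform : ∑ r, w r * mw (o, I) r = 1 - ((n:ℝ)+1) * τ o x := by
        have h2 : w o * mw (o, I) o + ∑ r ∈ Finset.univ.erase o, w r * mw (o, I) r
            = ∑ r, w r * mw (o, I) r :=
          Finset.add_sum_erase Finset.univ (fun r => w r * mw (o, I) r) (Finset.mem_univ o)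
        rw [← h2, hmwo, mul_zero, zero_add]
        have hterm : ∀ r ∈ Finset.univ.erase o, w r * mw (o, I) r = τ r x - τ o x := by
          intro r hr
          have hrne : r ≠ o := (Finset.mem_erase.1 hr).1
          rw [hwne r hrne]
          by_cases hrI : r ∈ I
          · rw [hw'I r hrI, hmwI r hrI, div_mul_cancel₀ _ h1l.ne']
          · rw [hw'nI r hrI, hmwnI r hrI hrne, mul_neg, div_mul_cancel₀ _ hl0.ne']
            ring
        rw [Finset.sum_congr rfl hterm, Finset.sum_sub_distrib, Finset.sum_const,
          Finset.card_erase_of_mem (Finset.mem_univ o), Finset.card_univ, Fintype.card_fin,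
          nsmul_eq_mul, herase]
        push_cast
        ring
      have hxeq : Finset.univ.affineCombination ℝ (qf (o, I)) w = x := by
        apply b.ext_elem
        intro s
        have hmap : (b.coord s) (Finset.univ.affineCombination ℝ (qf (o, I)) w)
            = ∑ r, w r • ((b.coord s) (qf (o, I) r)) := by
          rw [Finset.univ.map_affineCombination (qf (o, I)) w hw1 (b.coord s),
            Finset.affineCombination_eq_linear_combination _ _ _ hw1]
          simp [Function.comp]
        have hτq' : ∀ r, (b.coord s) (qf (o, I) r)
            = mw (o, I) r * (if s = r then 1 else 0) + (1 - mw (o, I) r) * ((n:ℝ)+1)⁻¹ :=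
          fun r => hτq (o, I) r s
        have hmap2 : (b.coord s) (Finset.univ.affineCombination ℝ (qf (o, I)) w)
            = ∑ r, (w r * mw (o, I) r * (if s = r then 1 else 0)
              + (w r - w r * mw (o, I) r) * ((n:ℝ)+1)⁻¹) := by
          rw [hmap]
          refine Finset.sum_congr rfl (fun r _ => ?_)
          rw [smul_eq_mul, hτq' r]
          ring
        have hsum1 : ∑ r, w r * mw (o, I) r * (if s = r then 1 else 0) = w s * mw (o, I) s := by
          simp only [mul_ite, mul_one, mul_zero]
          rw [Finset.sum_ite_eq]
          simp
        have hsum2 : ∑ r, (w r - w r * mw (o, I) r) * ((n:ℝ)+1)⁻¹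
            = (1 - (1 - ((n:ℝ)+1) * τ o x)) * ((n:ℝ)+1)⁻¹ := by
          rw [← Finset.sum_mul, Finset.sum_sub_distrib, hw1, hWform]
        rw [hmap2, Finset.sum_add_distrib, hsum1, hsum2]
        have hc : (1 - (1 - ((n:ℝ)+1) * τ o x)) * ((n:ℝ)+1)⁻¹ = τ o x := by
          field_simp
          ring
        rw [hc]
        have hfin : w s * mw (o, I) s + τ o x = τ s x := by
          by_cases hso : s = o
          · subst hso
            rw [hmwo, mul_zero, zero_add]
          · rw [hwne s hso]
            by_cases hsI : s ∈ I
            · rw [hw'I s hsI, hmwI s hsI, div_mul_cancel₀ _ h1l.ne']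
              ring
            · rw [hw'nI s hsI, hmwnI s hsI hso, mul_neg, div_mul_cancel₀ _ hl0.ne']
              ring
        exact hfin
      rw [hPp]
      rw [← hxeq]
      exact affineCombination_mem_convexHull (fun s _ => hw0 s) hw1
    · refine Set.iUnion₂_subset (fun p hp => ?_)
      obtain ⟨hcI, hoI⟩ := (hmemJ p).1 hp
      rw [hPp]
      apply convexHull_min _ (convex_convexHull ℝ _)
      rintro y ⟨r, rfl⟩
      apply subset_convexHull
      by_cases hrI : r ∈ p.2
      · left
        refine ⟨v r, by rw [hS]; exact subset_convexHull _ _ ⟨r, rfl⟩, ?_⟩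
        rw [hqf, hmw]
        simp [hrI]
      · by_cases hro : r = p.1
        · left
          subst hro
          refine ⟨0, h0S, ?_⟩
          simp [hqf, hmw, hrI]
        · right
          refine ⟨v r, by rw [hS]; exact subset_convexHull _ _ ⟨r, rfl⟩, ?_⟩
          rw [hqf, hmw]
          simp [hrI, hro]
  have hregion : ∀ p ∈ J, Pp p ⊆ {x | (∀ i ∈ p.2, τ p.1 x ≤ τ i x) ∧
      (∀ j, j ∉ p.2 → τ j x ≤ τ p.1 x)} := by
    rintro ⟨o, I⟩ hp
    obtain ⟨hcI, hoI⟩ := (hmemJ _).1 hp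
    have hmwI : ∀ r ∈ I, mw (o, I) r = 1 - l := fun r hr => by
      simp only [hmw]
      rw [if_pos hr]
    have hmwo : mw (o, I) o = 0 := by
      simp only [hmw, if_true, eq_self_iff_true]
      rw [if_neg hoI]
    have hmwnI : ∀ r, r ∉ I → r ≠ o → mw (o, I) r = -l := fun r hr hro => by
      simp only [hmw]
      rw [if_neg hr, if_neg hro]
    have hkey : ∀ (r a bb : Fin (n+1)), a ∈ I ∨ a = o → bb ∉ I →
        τ bb (qf (o, I) r) ≤ τ a (qf (o, I) r) := by
      intro r a bb ha hbb
      rw [hτq, hτq]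
      apply add_le_add_left
      by_cases hrI : r ∈ I
      · rw [hmwI r hrI]
        have hbr : bb ≠ r := fun h => hbb (h ▸ hrI)
        rw [if_neg hbr]
        split_ifs with har
        · nlinarith
        · linarith
      · by_cases hro : r = o
        · subst hro
          rw [hmwo]
          simp
        · rw [hmwnI r hrI hro]
          have har : a ≠ r := by
            rcases ha with h | h
            · exact fun he => hrI (he ▸ h)
            · exact fun he => hro (he.symm.trans h)
          rw [if_neg har]
          split_ifs with hbr
          · nlinarith
          · linarith
    simp only [hPp]
    apply convexHull_min
    · rintro y ⟨r, rfl⟩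
      exact ⟨fun i hi => hkey r i o (Or.inl hi) hoI, fun j hj => hkey r o j (Or.inr rfl) hj⟩
    · intro x hx y hy a bb ha hb hab
      constructor
      · intro i hi
        rw [hlin a bb hab x y i, hlin a bb hab x y o]
        exact add_le_add (mul_le_mul_of_nonneg_left (hx.1 i hi) ha)
          (mul_le_mul_of_nonneg_left (hy.1 i hi) hb)
      · intro j hj
        rw [hlin a bb hab x y j, hlin a bb hab x y o]
        exact add_le_add (mul_le_mul_of_nonneg_left (hx.2 j hj) ha)
          (mul_le_mul_of_nonneg_left (hy.2 j hj) hb)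
  have hdisj : (↑J : Set (Fin (n+1) × Finset (Fin (n+1)))).Pairwise
      (Function.onFun (AEDisjoint volume) Pp) := by
    intro p hp p' hp' hne
    have hpJ := Finset.mem_coe.1 hp
    have hpJ' := Finset.mem_coe.1 hp'
    obtain ⟨hcI, hoI⟩ := (hmemJ p).1 hpJ
    obtain ⟨hcI', hoI'⟩ := (hmemJ p').1 hpJ'
    have h1 := hregion p hpJ
    have h2 := hregion p' hpJ'
    have hsub : Pp p ∩ Pp p' ⊆
        ⋃ (a : Fin (n+1)) (bb : Fin (n+1)) (_ : a ≠ bb), {x | τ a x = τ bb x} := by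
      rintro x ⟨hxp, hxp'⟩
      by_contra hnot
      simp only [Set.mem_iUnion, Set.mem_setOf_eq, not_exists] at hnot
      obtain ⟨ha1, ha2⟩ := h1 hxp
      obtain ⟨hb1, hb2⟩ := h2 hxp'
      have hmem1 : ∀ r, r ∈ p.2 ↔ τ p.1 x < τ r x := by
        intro r
        constructor
        · intro hr
          have hne1 : p.1 ≠ r := fun h => hoI (h ▸ hr)
          exact lt_of_le_of_ne (ha1 r hr) (hnot p.1 r hne1)
        · intro hr
          by_contra hrn
          exact absurd (ha2 r hrn) (not_le.2 hr)
      have hmem2 : ∀ r, r ∈ p'.2 ↔ τ p'.1 x < τ r x := by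
        intro r
        constructor
        · intro hr
          have hne1 : p'.1 ≠ r := fun h => hoI' (h ▸ hr)
          exact lt_of_le_of_ne (hb1 r hr) (hnot p'.1 r hne1)
        · intro hr
          by_contra hrn
          exact absurd (hb2 r hrn) (not_le.2 hr)
      have hkey2 : ∀ (pa pb : Fin (n+1) × Finset (Fin (n+1))),
          pa.2.card = k → pb.2.card = k → pb.1 ∉ pb.2 →
          (∀ r, r ∈ pa.2 ↔ τ pa.1 x < τ r x) → (∀ r, r ∈ pb.2 ↔ τ pb.1 x < τ r x) →
          τ pa.1 x < τ pb.1 x → False := by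
        intro pa pb hca hcb hob hma hmb hlt
        have hsub2 : insert pb.1 pb.2 ⊆ pa.2 := by
          intro r hr
          rcases Finset.mem_insert.1 hr with rfl | hr2
          · exact (hma _).2 hlt
          · exact (hma r).2 (lt_trans hlt ((hmb r).1 hr2))
        have hcard2 := Finset.card_le_card hsub2
        rw [Finset.card_insert_of_notMem hob, hca, hcb] at hcard2
        omega
      rcases lt_trichotomy (τ p.1 x) (τ p'.1 x) with hlt | heq | hgt
      · exact hkey2 p p' hcI hcI' hoI' hmem1 hmem2 hlt
      · have hoo : p.1 = p'.1 := by
          by_contra hne2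
          exact hnot p.1 p'.1 hne2 heq
        have hII : p.2 = p'.2 := by
          ext r
          rw [hmem1, hmem2, hoo]
        exact hne (Prod.ext hoo hII)
      · exact hkey2 p' p hcI' hcI hoI hmem2 hmem1 hgt
    refine measure_mono_null hsub ?_
    refine measure_iUnion_null fun a => measure_iUnion_null fun bb => measure_iUnion_null fun hab => ?_
    have hneq : τ a (v a) ≠ τ bb (v a) := by
      rw [hτv, hτv, if_pos rfl, if_neg hab.symm]
      norm_num
    exact volume_affine_eq_zero volume (b.coord a) (b.coord bb) (v a) hneq
  have hmeas : ∀ p ∈ J, NullMeasurableSet (Pp p) volume := by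
    intro p _
    have : IsCompact (Pp p) := (Set.finite_range (qf p)).isCompact_convexHull ℝ
    exact this.isClosed.measurableSet.nullMeasurableSet
  have hvol : ∀ p ∈ J, volume (Pp p)
      = ENNReal.ofReal ((1-l)^k * l^(n-k) * ((n:ℝ)+1)⁻¹) * volume S := by
    rintro ⟨o, I⟩ hp
    obtain ⟨hcI, hoI⟩ := (hmemJ _).1 hp
    have hmwI : ∀ r ∈ I, mw (o, I) r = 1 - l := fun r hr => by
      simp only [hmw]
      rw [if_pos hr]
    have hmwo : mw (o, I) o = 0 := by
      simp only [hmw, if_true, eq_self_iff_true]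
      rw [if_neg hoI]
    have hmwnI : ∀ r, r ∉ I → r ≠ o → mw (o, I) r = -l := fun r hr hro => by
      simp only [hmw]
      rw [if_neg hr, if_neg hro]
    set B0 := b.basisOf o with hB0
    have hB0a : ∀ j : {j : Fin (n+1) // j ≠ o}, B0 j = v ↑j - v o := by
      intro j
      rw [hB0, b.basisOf_apply o j, vsub_eq_sub]
      rfl
    set M : Matrix {j : Fin (n+1) // j ≠ o} {j : Fin (n+1) // j ≠ o} ℝ :=
      fun t s => mw (o, I) ↑s * ((if t = s then 1 else 0) - ((n:ℝ)+1)⁻¹) with hM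
    set L := Matrix.toLin B0 B0 M with hL
    have hsumB : ∑ t : {j : Fin (n+1) // j ≠ o}, (v ↑t - v o) = (-((n:ℝ)+1)) • v o := by
      have h1 : ∑ r ∈ Finset.univ.erase o, (v r - v o)
          = ∑ t : {j : Fin (n+1) // j ≠ o}, (v ↑t - v o) :=
        Finset.sum_subtype _ (fun x => by simp) _
      rw [← h1, Finset.sum_sub_distrib]
      have h3 : v o + ∑ r ∈ Finset.univ.erase o, v r = ∑ r, v r :=
        Finset.add_sum_erase Finset.univ v (Finset.mem_univ o)
      rw [hcent] at h3
      have h2 : ∑ r ∈ Finset.univ.erase o, v r = - v o :=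
        eq_neg_of_add_eq_zero_right h3
      rw [h2, Finset.sum_const, Finset.card_erase_of_mem (Finset.mem_univ o),
        Finset.card_univ, Fintype.card_fin, Nat.add_sub_cancel, ← Nat.cast_smul_eq_nsmul ℝ]
      module
    have hLB : ∀ r : Fin (n+1), L (v r - v o) = qf (o, I) r := by
      intro r
      have hqfr : qf (o, I) r = mw (o, I) r • v r := rfl
      rcases eq_or_ne r o with rfl | hr
      · rw [sub_self, map_zero, hqfr, hmwo, zero_smul]
      · have h1 : L (v r - v o) = ∑ t, M t ⟨r, hr⟩ • B0 t := by
          rw [← hB0a ⟨r, hr⟩]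
          exact Matrix.toLin_self B0 B0 M ⟨r, hr⟩
        rw [h1]
        have h2 : ∀ t : {j : Fin (n+1) // j ≠ o}, M t ⟨r, hr⟩ • B0 t
            = (if t = ⟨r, hr⟩ then mw (o, I) r • (v ↑t - v o) else 0)
              - (mw (o, I) r * ((n:ℝ)+1)⁻¹) • (v ↑t - v o) := by
          intro t
          rw [hB0a t]
          simp only [hM]
          by_cases h : t = ⟨r, hr⟩
          · rw [if_pos h, if_pos h, mul_sub, sub_smul, mul_one]
          · rw [if_neg h, if_neg h, zero_sub, mul_neg, neg_smul, zero_sub, mul_smul]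
        rw [Finset.sum_congr rfl (fun t _ => h2 t), Finset.sum_sub_distrib,
          Finset.sum_ite_eq' Finset.univ (⟨r, hr⟩ : {j : Fin (n+1) // j ≠ o})
            (fun t => mw (o, I) r • (v ↑t - v o)),
          ← Finset.smul_sum]
        simp only [Finset.mem_univ, if_true]
        rw [hsumB]
        rw [hqfr, smul_smul]
        have hc : mw (o, I) r * ((n:ℝ)+1)⁻¹ * (-((n:ℝ)+1)) = -(mw (o, I) r) := by
          field_simp
        rw [hc]
        module
    have hcard1 : Fintype.card {j : Fin (n+1) // j ≠ o} = n := by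
      simp [Fintype.card_subtype_compl]
    have hdet : M.det = ((1-l)^k * (-l)^(n-k)) * ((n:ℝ)+1)⁻¹ := by
      have hfact : M = (1 + Matrix.replicateCol Unit (fun _ => -((n:ℝ)+1)⁻¹)
            * Matrix.replicateRow Unit (fun _ => (1:ℝ)))
          * Matrix.diagonal (fun s : {j : Fin (n+1) // j ≠ o} => mw (o, I) ↑s) := by
        ext t u
        rw [Matrix.mul_diagonal, Matrix.add_apply, Matrix.one_apply, Matrix.mul_apply]
        simp only [hM, Matrix.replicateCol_apply, Matrix.replicateRow_apply, Finset.univ_unique,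
          Finset.sum_singleton]
        by_cases h : t = u <;> simp [h] <;> ring
      rw [hfact, Matrix.det_mul, Matrix.det_one_add_replicateCol_mul_replicateRow, Matrix.det_diagonal]
      have hdot : (1:ℝ) + dotProduct (fun _ : {j : Fin (n+1) // j ≠ o} => (1:ℝ))
          (fun _ => -((n:ℝ)+1)⁻¹) = ((n:ℝ)+1)⁻¹ := by
        rw [dotProduct]
        simp only [one_mul, Finset.sum_const, Finset.card_univ, hcard1, nsmul_eq_mul]
        field_simp
        ring
      have hfil2 : (Finset.univ.erase o).filter (· ∈ I) = I := by
        ext r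
        simp only [Finset.mem_filter, Finset.mem_erase, Finset.mem_univ, true_and, and_true]
        exact ⟨fun h => h.2, fun h => ⟨fun he => hoI (he ▸ h), h⟩⟩
      have hcardIc : ((Finset.univ.erase o).filter (¬ · ∈ I)).card = n - k := by
        have h0 : ((Finset.univ.erase o).filter (· ∈ I)).card
            + ((Finset.univ.erase o).filter (¬ · ∈ I)).card = (Finset.univ.erase o).card :=
          Finset.card_filter_add_card_filter_not _
        rw [hfil2, hcI, Finset.card_erase_of_mem (Finset.mem_univ o), Finset.card_univ,
          Fintype.card_fin] at h0
        omega
      have hprod : ∏ s : {j : Fin (n+1) // j ≠ o}, mw (o, I) ↑s = (1-l)^k * (-l)^(n-k) := by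
        have h1 : ∏ r ∈ Finset.univ.erase o, mw (o, I) r
            = ∏ s : {j : Fin (n+1) // j ≠ o}, mw (o, I) ↑s :=
          Finset.prod_subtype _ (fun x => by simp) _
        rw [← h1]
        have h0 : (∏ r ∈ (Finset.univ.erase o).filter (· ∈ I), mw (o, I) r)
            * ∏ r ∈ (Finset.univ.erase o).filter (¬ · ∈ I), mw (o, I) r
            = ∏ r ∈ Finset.univ.erase o, mw (o, I) r :=
          Finset.prod_filter_mul_prod_filter_not _ _ _
        rw [← h0, hfil2]
        have h2 : ∏ r ∈ I, mw (o, I) r = (1-l)^k := by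
          rw [Finset.prod_congr rfl hmwI, Finset.prod_const, hcI]
        have h3 : ∏ r ∈ (Finset.univ.erase o).filter (¬ · ∈ I), mw (o, I) r = (-l)^(n-k) := by
          rw [Finset.prod_congr rfl (fun r hr => hmwnI r (Finset.mem_filter.1 hr).2
            (Finset.mem_erase.1 (Finset.mem_filter.1 hr).1).1), Finset.prod_const, hcardIc]
        rw [h2, h3]
      rw [hdot, hprod]
      ring
    have hq2 : ∀ r, L (v r) - L (v o) = qf (o, I) r := fun r => by
      rw [← map_sub]
      exact hLB r
    set f : EuclideanSpace ℝ (Fin n) →ᵃ[ℝ] EuclideanSpace ℝ (Fin n) :=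
      L.toAffineMap + AffineMap.const ℝ (EuclideanSpace ℝ (Fin n)) (-(L (v o))) with hf
    have hfx : ∀ x, f x = L x - L (v o) := fun x => by
      simp only [hf, AffineMap.coe_add, Pi.add_apply, AffineMap.coe_const, Function.const_apply,
        LinearMap.coe_toAffineMap, sub_eq_add_neg]
    have himg : Pp (o, I) = f '' S := by
      simp only [hPp]
      rw [hS, AffineMap.image_convexHull]
      congr 1
      rw [← Set.range_comp]
      apply congrArg
      funext r
      rw [Function.comp_apply, hfx, hq2]
    rw [himg]
    have himg2 : f '' S = ((-(L (v o))) + ·) '' (⇑L '' S) := by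
      rw [Set.image_image]
      apply Set.image_congr
      intro x _
      rw [hfx]
      abel
    rw [himg2, Set.image_add_left, measure_preimage_add,
      Measure.addHaar_image_linearMap, hL, LinearMap.det_toLin, hdet]
    congr 1
    rw [abs_mul, abs_mul, abs_pow, abs_pow, abs_neg, abs_of_pos hl0, abs_of_pos h1l,
      abs_of_pos (inv_pos.2 hn1)]
  have hcard : J.card = (n+1) * n.choose k := by
    have hJeq : J = Finset.univ.biUnion
        (fun o : Fin (n+1) => ((Finset.univ.erase o).powersetCard k).image (fun I => (o, I))) := by
      ext p
      simp only [hmemJ, Finset.mem_biUnion, Finset.mem_univ, true_and, Finset.mem_image,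
        Finset.mem_powersetCard]
      constructor
      · rintro ⟨hc, hno⟩
        exact ⟨p.1, p.2, ⟨fun x hx => Finset.mem_erase.2 ⟨fun h => hno (h ▸ hx),
          Finset.mem_univ x⟩, hc⟩, rfl⟩
      · rintro ⟨o, I, ⟨hsub, hc⟩, rfl⟩
        exact ⟨hc, fun h => (Finset.mem_erase.1 (hsub h)).1 rfl⟩
    rw [hJeq, Finset.card_biUnion]
    · have hone : ∀ o : Fin (n+1),
          (((Finset.univ.erase o).powersetCard k).image (fun I => (o, I))).card = n.choose k := by
        intro o
        rw [Finset.card_image_of_injective _ (fun a c h => by simpa using h),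
          Finset.card_powersetCard, Finset.card_erase_of_mem (Finset.mem_univ o),
          Finset.card_univ, Fintype.card_fin]
        simp
      simp only [hone, Finset.sum_const, Finset.card_univ, Fintype.card_fin, smul_eq_mul]
    · intro o _ o' _ hne
      simp only [Finset.disjoint_left, Finset.mem_image]
      rintro p ⟨I, _, rfl⟩ ⟨I', _, h⟩
      exact hne (congrArg Prod.fst h).symm
  rw [hcover, measure_biUnion_finset₀ hdisj hmeas, Finset.sum_congr rfl hvol,
    Finset.sum_const, hcard, nsmul_eq_mul, ← ENNReal.ofReal_natCast, ← mul_assoc,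
    ← ENNReal.ofReal_mul (by positivity)]
  congr 2
  push_cast
  field_simp
end

section
/- If S is a simplex in ℝ^n with a vertex at the origin, then for every λ ∈ [0,1], Vol(conv((1-λ)S ∪ (-λ)S)) = Vol(S). -/
open MeasureTheory
open scoped ENNReal Pointwise

private lemma simplex_coords (n : ℕ) (b : Module.Basis (Fin n) ℝ (EuclideanSpace ℝ (Fin n))) :
    convexHull ℝ (insert 0 (Set.range b)) =
      {x | (∀ i, 0 ≤ b.repr x i) ∧ ∑ i, b.repr x i ≤ 1} := by
  apply le_antisymm
  · apply convexHull_min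
    · rintro x (rfl | ⟨i, rfl⟩)
      · simp
      · constructor
        · intro j
          simp [Module.Basis.repr_self, Finsupp.single_apply]
          split <;> norm_num
        · rw [Finset.sum_eq_single i]
          · simp [Module.Basis.repr_self]
          · intro j _ hj
            simp [Module.Basis.repr_self, Finsupp.single_apply, Ne.symm hj]
          · simp
    · rintro x ⟨hx1, hx2⟩ y ⟨hy1, hy2⟩ a c ha hc hac
      have hrep : ∀ i, b.repr (a • x + c • y) i = a * b.repr x i + c * b.repr y i := by
        intro i; simp [_root_.map_add, _root_.map_smul]
      constructor
      · intro i
        rw [hrep]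
        have := hx1 i; have := hy1 i
        positivity
      · calc ∑ i, b.repr (a • x + c • y) i = a * ∑ i, b.repr x i + c * ∑ i, b.repr y i := by
              simp only [hrep, Finset.sum_add_distrib, Finset.mul_sum]
        _ ≤ a * 1 + c * 1 := by
              gcongr
        _ = 1 := by linarith
  · rintro x ⟨hx1, hx2⟩
    have key : x = Finset.univ.centerMass
        (fun o : Option (Fin n) => o.elim (1 - ∑ i, b.repr x i) (fun i => b.repr x i))
        (fun o : Option (Fin n) => o.elim 0 (fun i => b i)) := by
      rw [Finset.centerMass]
      rw [show (∑ o : Option (Fin n), (fun o : Option (Fin n) => o.elim (1 - ∑ i, b.repr x i) (fun i => b.repr x i)) o) = 1 by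
        rw [Fintype.sum_option]; simp]
      rw [show (∑ o : Option (Fin n), (fun o : Option (Fin n) => o.elim (1 - ∑ i, b.repr x i) (fun i => b.repr x i)) o •
          (fun o : Option (Fin n) => o.elim 0 (fun i => b i)) o) = x by
        rw [Fintype.sum_option]; simp [Module.Basis.sum_repr]]
      simp
    rw [key]
    apply Finset.centerMass_mem_convexHull
    · rintro (_ | i) _
      · simpa using hx2
      · exact hx1 i
    · rw [Fintype.sum_option]; simp
    · rintro (_ | i) _
      · exact Set.mem_insert 0 _
      · exact Set.mem_insert_of_mem _ ⟨i, rfl⟩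

set_option maxHeartbeats 2000000 in
theorem volume_convexHull_simplex_vertex_origin (n : ℕ)
    (v : Fin n → EuclideanSpace ℝ (Fin n)) (hv : LinearIndependent ℝ v)
    (S : Set (EuclideanSpace ℝ (Fin n)))
    (hS : S = convexHull ℝ (insert (0 : EuclideanSpace ℝ (Fin n)) (Set.range v)))
    (l : ℝ) (hl : l ∈ Set.Icc (0:ℝ) 1) :
    volume (convexHull ℝ ((1 - l) • S ∪ (-l) • S)) = volume S := by
  have h0S : (0 : EuclideanSpace ℝ (Fin n)) ∈ S := hS ▸ subset_convexHull ℝ _ (Set.mem_insert _ _)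
  have hSne : S.Nonempty := ⟨0, h0S⟩
  have hconvS : Convex ℝ S := hS ▸ convex_convexHull ℝ _
  obtain ⟨hl0, hl1⟩ := hl
  -- n = 0 case
  rcases Nat.eq_zero_or_pos n with hn | hn
  · subst hn
    haveI : Subsingleton (EuclideanSpace ℝ (Fin 0)) :=
      ⟨fun a b => PiLp.ext fun i => Fin.elim0 i⟩
    congr 1
    have hT0 : (0 : EuclideanSpace ℝ (Fin 0)) ∈ convexHull ℝ ((1 - l) • S ∪ (-l) • S) :=
      subset_convexHull ℝ _ (Set.mem_union_left _ ⟨0, h0S, smul_zero _⟩)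
    ext x
    constructor
    · intro _; exact (Subsingleton.elim x 0) ▸ h0S
    · intro _; exact (Subsingleton.elim x 0) ▸ hT0
  -- l = 0 case
  rcases eq_or_lt_of_le hl0 with h0 | h0
  · rw [← h0]
    rw [sub_zero, one_smul, neg_zero, Set.zero_smul_set hSne]
    have hU : S ∪ (0 : Set (EuclideanSpace ℝ (Fin n))) = S := by
      rw [Set.union_eq_self_of_subset_right]
      intro x hx
      simp only [Set.mem_zero] at hx
      exact hx ▸ h0S
    rw [hU, hconvS.convexHull_eq]
  -- l = 1 case
  rcases eq_or_lt_of_le hl1 with h1 | h1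
  · rw [h1]
    rw [sub_self, Set.zero_smul_set hSne]
    have hneg : (-(1:ℝ)) • S = -S := by
      ext x
      simp only [Set.mem_smul_set, Set.mem_neg]
      constructor
      · rintro ⟨y, hy, rfl⟩; simpa [neg_one_smul] using hy
      · intro hx; exact ⟨-x, hx, by simp⟩
    rw [hneg]
    have hU : (0 : Set (EuclideanSpace ℝ (Fin n))) ∪ -S = -S := by
      rw [Set.union_eq_self_of_subset_left]
      intro x hx
      simp only [Set.mem_zero] at hx
      subst hx
      simpa using Set.neg_mem_neg.mpr h0S
    rw [hU, hconvS.neg.convexHull_eq]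
    exact Measure.measure_neg volume S
  -- main case : 0 < l < 1
  haveI : Nonempty (Fin n) := ⟨⟨0, hn⟩⟩
  have hcard : Fintype.card (Fin n) = Module.finrank ℝ (EuclideanSpace ℝ (Fin n)) := by
    simp [finrank_euclideanSpace_fin]
  set b : Module.Basis (Fin n) ℝ (EuclideanSpace ℝ (Fin n)) :=
    basisOfLinearIndependentOfCardEqFinrank hv hcard with hbdef
  have hb : ⇑b = v := coe_basisOfLinearIndependentOfCardEqFinrank hv hcard
  have hl' : 0 < 1 - l := by linarith
  set cf : Finset (Fin n) → Fin n → ℝ := fun I i => if i ∈ I then -l else 1 - l with hcf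
  have hcfne : ∀ I i, cf I i ≠ 0 := by
    intro I i
    simp only [hcf]
    split
    · exact neg_ne_zero.mpr (ne_of_gt h0)
    · exact ne_of_gt hl'
  set L : Finset (Fin n) → (EuclideanSpace ℝ (Fin n) →ₗ[ℝ] EuclideanSpace ℝ (Fin n)) :=
    fun I => b.constr ℝ (fun i => cf I i • b i) with hL
  have hLb : ∀ I i, L I (b i) = cf I i • b i := by
    intro I i
    simp only [hL]
    exact b.constr_basis ℝ _ i
  have hLx : ∀ I x, L I x = ∑ j, (cf I j * b.repr x j) • b j := by
    intro I x
    conv_lhs => rw [← Module.Basis.sum_repr b x]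
    rw [map_sum]
    apply Finset.sum_congr rfl
    intro j _
    rw [_root_.map_smul, hLb, smul_smul, mul_comm]
  have hLrepr : ∀ I x i, b.repr (L I x) i = cf I i * b.repr x i := by
    intro I x i
    have h' : ⇑(b.repr (L I x)) = fun j => cf I j * b.repr x j := by
      rw [hLx I x, Module.Basis.repr_sum_self]
    exact congrFun h' i
  have hrsmul : ∀ (c : ℝ) (y : EuclideanSpace ℝ (Fin n)) i, b.repr (c • y) i = c * b.repr y i := by
    intro c y i
    rw [_root_.map_smul]
    simp [Finsupp.smul_apply]
  have hSP : S = {x : EuclideanSpace ℝ (Fin n) | (∀ i, 0 ≤ b.repr x i) ∧ ∑ i, b.repr x i ≤ 1} := by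
    rw [hS, ← hb]
    exact simplex_coords n b
  -- the convex function g and the sublevel bound
  set g : EuclideanSpace ℝ (Fin n) → ℝ :=
    fun x => ∑ i, max (l * b.repr x i) (-(1 - l) * b.repr x i) with hg
  have hsub : convexHull ℝ ((1 - l) • S ∪ (-l) • S) ⊆ {x | g x ≤ l * (1 - l)} := by
    apply convexHull_min
    · rintro x (⟨y, hy, rfl⟩ | ⟨y, hy, rfl⟩)
      · have hy' : (∀ i, 0 ≤ b.repr y i) ∧ ∑ i, b.repr y i ≤ 1 := by rw [hSP] at hy; exact hy
        obtain ⟨hy1, hy2⟩ := hy'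
        simp only [Set.mem_setOf_eq, hg]
        have heq : ∀ i ∈ Finset.univ, max (l * b.repr ((1-l) • y) i) (-(1 - l) * b.repr ((1-l) • y) i)
            = (l * (1 - l)) * b.repr y i := by
          intro i _
          rw [hrsmul]
          have h1 := hy1 i
          rw [max_eq_left (by nlinarith)]
          ring
        rw [Finset.sum_congr rfl heq, ← Finset.mul_sum]
        nlinarith [mul_le_mul_of_nonneg_left hy2 (mul_pos h0 hl').le]
      · have hy' : (∀ i, 0 ≤ b.repr y i) ∧ ∑ i, b.repr y i ≤ 1 := by rw [hSP] at hy; exact hy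
        obtain ⟨hy1, hy2⟩ := hy'
        simp only [Set.mem_setOf_eq, hg]
        have heq : ∀ i ∈ Finset.univ, max (l * b.repr ((-l) • y) i) (-(1 - l) * b.repr ((-l) • y) i)
            = (l * (1 - l)) * b.repr y i := by
          intro i _
          rw [hrsmul]
          have h1 := hy1 i
          rw [max_eq_right (by nlinarith)]
          ring
        rw [Finset.sum_congr rfl heq, ← Finset.mul_sum]
        nlinarith [mul_le_mul_of_nonneg_left hy2 (mul_pos h0 hl').le]
    · rintro x hx y hy a c ha hc hac
      simp only [Set.mem_setOf_eq, hg] at hx hy ⊢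
      have key : ∑ i, max (l * b.repr (a • x + c • y) i) (-(1 - l) * b.repr (a • x + c • y) i)
          ≤ a * ∑ i, max (l * b.repr x i) (-(1 - l) * b.repr x i)
            + c * ∑ i, max (l * b.repr y i) (-(1 - l) * b.repr y i) := by
        rw [Finset.mul_sum, Finset.mul_sum, ← Finset.sum_add_distrib]
        apply Finset.sum_le_sum
        intro i _
        have hri : b.repr (a • x + c • y) i = a * b.repr x i + c * b.repr y i := by
          rw [_root_.map_add, Finsupp.add_apply, hrsmul, hrsmul]
        rw [hri]
        apply max_le
        · have e1 := mul_le_mul_of_nonneg_left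
            (le_max_left (l * b.repr x i) (-(1 - l) * b.repr x i)) ha
          have e2 := mul_le_mul_of_nonneg_left
            (le_max_left (l * b.repr y i) (-(1 - l) * b.repr y i)) hc
          nlinarith
        · have e1 := mul_le_mul_of_nonneg_left
            (le_max_right (l * b.repr x i) (-(1 - l) * b.repr x i)) ha
          have e2 := mul_le_mul_of_nonneg_left
            (le_max_right (l * b.repr y i) (-(1 - l) * b.repr y i)) hc
          nlinarith
      have e1 := mul_le_mul_of_nonneg_left hx ha
      have e2 := mul_le_mul_of_nonneg_left hy hc
      have e3 : a * (l * (1 - l)) + c * (l * (1 - l)) = l * (1 - l) := by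
        rw [← add_mul, hac, one_mul]
      linarith
  -- decomposition : T ⊆ union of pieces
  have hdec : convexHull ℝ ((1 - l) • S ∪ (-l) • S) ⊆ ⋃ I : Finset (Fin n), L I '' S := by
    intro x hx
    have hgx : g x ≤ l * (1 - l) := hsub hx
    set I : Finset (Fin n) := Finset.univ.filter (fun i => b.repr x i < 0) with hI
    have hmemI : ∀ i, i ∈ I ↔ b.repr x i < 0 := by intro i; simp [hI]
    set y : EuclideanSpace ℝ (Fin n) := ∑ j, (b.repr x j / cf I j) • b j with hy
    have hyrepr : ∀ j, b.repr y j = b.repr x j / cf I j := by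
      intro j
      have h' : ⇑(b.repr y) = fun j => b.repr x j / cf I j := by
        rw [hy, Module.Basis.repr_sum_self]
      exact congrFun h' j
    have hlne : l ≠ 0 := ne_of_gt h0
    have hlne' : (1 : ℝ) - l ≠ 0 := ne_of_gt hl'
    have hterm : ∀ i, b.repr x i / cf I i
        = max (l * b.repr x i) (-(1 - l) * b.repr x i) / (l * (1 - l)) := by
      intro i
      by_cases hi : i ∈ I
      · have ht : b.repr x i < 0 := (hmemI i).1 hi
        have hc : cf I i = -l := by simp [hcf, hi]
        rw [hc, max_eq_right (by nlinarith)]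
        field_simp [hlne, hlne']
      · have ht : 0 ≤ b.repr x i := not_lt.1 (fun h => hi ((hmemI i).2 h))
        have hc : cf I i = 1 - l := by simp [hcf, hi]
        rw [hc, max_eq_left (by nlinarith)]
        field_simp [hlne, hlne']
    have hyS : y ∈ S := by
      rw [hSP]
      constructor
      · intro i
        rw [hyrepr i]
        by_cases hi : i ∈ I
        · have ht : b.repr x i < 0 := (hmemI i).1 hi
          have hc : cf I i = -l := by simp [hcf, hi]
          rw [hc, div_nonneg_iff]
          right
          constructor <;> linarith
        · have ht : 0 ≤ b.repr x i := not_lt.1 (fun h => hi ((hmemI i).2 h))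
          have hc : cf I i = 1 - l := by simp [hcf, hi]
          rw [hc]
          exact div_nonneg ht hl'.le
      · have : ∑ i, b.repr y i = g x / (l * (1 - l)) := by
          rw [hg]
          simp only
          rw [Finset.sum_div]
          apply Finset.sum_congr rfl
          intro i _
          rw [hyrepr i, hterm i]
        rw [this, div_le_one (by nlinarith)]
        exact hgx
    have hLy : L I y = x := by
      rw [hy, map_sum]
      conv_rhs => rw [← Module.Basis.sum_repr b x]
      apply Finset.sum_congr rfl
      intro j _
      rw [_root_.map_smul, hLb, smul_smul, div_mul_cancel₀ _ (hcfne I j)]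
    exact Set.mem_iUnion.2 ⟨I, y, hyS, hLy⟩
  -- pieces ⊆ T
  have hpieces : ∀ I : Finset (Fin n), L I '' S ⊆ convexHull ℝ ((1 - l) • S ∪ (-l) • S) := by
    intro I
    have himg : L I '' S = convexHull ℝ (L I '' insert 0 (Set.range v)) := by
      rw [hS, LinearMap.image_convexHull]
    rw [himg]
    apply convexHull_min ?_ (convex_convexHull ℝ _)
    rintro z ⟨w, hw, rfl⟩
    apply subset_convexHull
    rcases hw with rfl | ⟨i, rfl⟩
    · exact Set.mem_union_left _ ⟨0, h0S, by simp⟩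
    · have hvS : v i ∈ S := hS ▸ subset_convexHull ℝ _ (Set.mem_insert_of_mem _ ⟨i, rfl⟩)
      have hLv : L I (v i) = cf I i • v i := by
        conv_lhs => rw [← hb]
        rw [hLb, hb]
      rw [hLv]
      by_cases hi : i ∈ I
      · refine Set.mem_union_right _ ⟨v i, hvS, ?_⟩
        simp [hcf, hi]
      · refine Set.mem_union_left _ ⟨v i, hvS, ?_⟩
        simp [hcf, hi]
  have hT : convexHull ℝ ((1 - l) • S ∪ (-l) • S) = ⋃ I : Finset (Fin n), L I '' S :=
    le_antisymm hdec (Set.iUnion_subset hpieces)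
  -- measurability
  have hScompact : IsCompact S :=
    hS ▸ ((Set.finite_range v).insert 0).isCompact_convexHull (𝕜 := ℝ)
  have hmeas : ∀ I : Finset (Fin n), NullMeasurableSet (L I '' S) volume := fun I =>
    ((hScompact.image (L I).continuous_of_finiteDimensional).isClosed.measurableSet).nullMeasurableSet
  -- a.e. disjointness
  have hker : ∀ i : Fin n, volume {x : EuclideanSpace ℝ (Fin n) | b.repr x i = 0} = 0 := by
    intro i
    have hset : {x : EuclideanSpace ℝ (Fin n) | b.repr x i = 0}
        = (LinearMap.ker (b.coord i) : Submodule ℝ (EuclideanSpace ℝ (Fin n))) := by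
      ext x
      simp [LinearMap.mem_ker, Module.Basis.coord_apply]
    rw [hset]
    apply Measure.addHaar_submodule
    intro h
    have h1 : b i ∈ LinearMap.ker (b.coord i) := h ▸ Submodule.mem_top
    rw [LinearMap.mem_ker, Module.Basis.coord_apply, Module.Basis.repr_self] at h1
    simp at h1
  have hsign : ∀ (I : Finset (Fin n)) (x : EuclideanSpace ℝ (Fin n)), x ∈ L I '' S →
      ∀ i, (i ∈ I → b.repr x i ≤ 0) ∧ (i ∉ I → 0 ≤ b.repr x i) := by
    rintro I x ⟨y, hyS, rfl⟩ i
    have hy' : (∀ i, 0 ≤ b.repr y i) ∧ ∑ i, b.repr y i ≤ 1 := by rw [hSP] at hyS; exact hyS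
    have h1 := hy'.1 i
    rw [hLrepr]
    constructor
    · intro hi
      have hc : cf I i = -l := by simp [hcf, hi]
      rw [hc]
      nlinarith
    · intro hi
      have hc : cf I i = 1 - l := by simp [hcf, hi]
      rw [hc]
      nlinarith
  have hdisj : Pairwise (Function.onFun (AEDisjoint volume) fun I : Finset (Fin n) => L I '' S) := by
    intro I J hIJ
    obtain ⟨i, hi⟩ : ∃ i, ¬(i ∈ I ↔ i ∈ J) := by
      by_contra h
      push_neg at h
      exact hIJ (Finset.ext h)
    have hsubset : (L I '' S) ∩ (L J '' S) ⊆ {x : EuclideanSpace ℝ (Fin n) | b.repr x i = 0} := by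
      rintro x ⟨hxI, hxJ⟩
      have hI' := hsign I x hxI i
      have hJ' := hsign J x hxJ i
      by_cases hiI : i ∈ I
      · have hiJ : i ∉ J := fun hiJ => hi ⟨fun _ => hiJ, fun _ => hiI⟩
        exact le_antisymm (hI'.1 hiI) (hJ'.2 hiJ)
      · have hiJ : i ∈ J := by
          by_contra hiJ
          exact hi ⟨fun h' => absurd h' hiI, fun h' => absurd h' hiJ⟩
        exact le_antisymm (hJ'.1 hiJ) (hI'.2 hiI)
    exact measure_mono_null hsubset (hker i)
  -- determinant computation
  have hdet : ∀ I : Finset (Fin n), |LinearMap.det (L I)| = l ^ I.card * (1 - l) ^ (n - I.card) := by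
    intro I
    have hmat : LinearMap.toMatrix b b (L I) = Matrix.diagonal (cf I) := by
      ext i j
      rw [LinearMap.toMatrix_apply, hLb, _root_.map_smul]
      by_cases h : i = j
      · subst h
        simp [Module.Basis.repr_self, Finsupp.single_apply, Matrix.diagonal]
      · simp [Module.Basis.repr_self, Finsupp.single_apply, Matrix.diagonal, h, Ne.symm h]
    have hdet1 : LinearMap.det (L I) = (-l) ^ I.card * (1 - l) ^ (n - I.card) := by
      rw [← LinearMap.det_toMatrix b, hmat, Matrix.det_diagonal]
      rw [← Finset.prod_mul_prod_compl I (cf I)]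
      have e1 : ∏ i ∈ I, cf I i = (-l) ^ I.card := by
        rw [Finset.prod_congr rfl (fun i hi => by simp [hcf, hi] : ∀ i ∈ I, cf I i = -l)]
        rw [Finset.prod_const]
      have e2 : ∏ i ∈ Iᶜ, cf I i = (1 - l) ^ (n - I.card) := by
        rw [Finset.prod_congr rfl (fun i hi => by simp [hcf, Finset.mem_compl.1 hi] :
          ∀ i ∈ Iᶜ, cf I i = 1 - l)]
        rw [Finset.prod_const, Finset.card_compl, Fintype.card_fin]
      rw [e1, e2]
    rw [hdet1, abs_mul, abs_pow, abs_pow, abs_neg, abs_of_nonneg hl0, abs_of_nonneg hl'.le]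
  -- put it together
  rw [hT, measure_iUnion₀ hdisj hmeas, tsum_fintype]
  have hvol : ∀ I : Finset (Fin n), volume (L I '' S)
      = ENNReal.ofReal (l ^ I.card * (1 - l) ^ (n - I.card)) * volume S := by
    intro I
    rw [Measure.addHaar_image_linearMap, hdet]
  simp_rw [hvol]
  rw [← Finset.sum_mul, ← ENNReal.ofReal_sum_of_nonneg (fun I _ => by positivity)]
  have hsum : ∑ I : Finset (Fin n), l ^ I.card * (1 - l) ^ (n - I.card) = 1 := by
    have h := Finset.prod_add (fun _ : Fin n => l) (fun _ : Fin n => 1 - l) Finset.univ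
    simp only [Finset.prod_const, Finset.powerset_univ] at h
    have hc : ∀ t : Finset (Fin n), (Finset.univ \ t).card = n - t.card := by
      intro t
      rw [Finset.card_sdiff_of_subset (Finset.subset_univ t), Finset.card_univ, Fintype.card_fin]
    rw [show l + (1 - l) = 1 by ring] at h
    simp only [one_pow, hc, Finset.card_univ, Fintype.card_fin] at h
    exact h.symm
  rw [hsum]
  simp
end
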